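/- arXiv:1507.08929 — 10 statements merged into one kernel-verified Lean document; each statement's English description precedes it below -/
import Mathlib

section
/- Consider the randomized posterior matching scheme with RIFS decoding described in the context, and assume condition (P1). Then for every n ≥ 1 the probability of decoding error equals the target error probability: P(Θ_0 ∈ J_n) = 1 − p_e, where membership Θ_0 ∈ J_n is understood for the interval J_n taken modulo 1. -/
open MeasureTheory ProbabilityTheory Filter
open scoped ENNReal ProbabilityTheory

/-- The uniform distribution on `[0,1]`. -/
noncomputable def unif01 : Measure ℝ := volume.restrict (Set.Icc 0 1)

/-- The generalized inverse c.d.f. `F_X⁻¹(v) = inf {x : F_X(x) > v}` of an input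
distribution `PX` on `ℝ`. -/
noncomputable def FXinv (PX : Measure ℝ) (v : ℝ) : ℝ :=
  sInf {x : ℝ | v < (PX (Set.Iic x)).toReal}

/-- The posterior matching kernel `F_{Θ|Y}(θ|y)`: the conditional c.d.f. of `Θ` given `Y`,
obtained from a regular conditional distribution `κ` of `Θ` given `Y`. -/
noncomputable def pmCDF (κ : Kernel ℝ ℝ) (θ y : ℝ) : ℝ := ((κ y) (Set.Iic θ)).toReal

/-- The inverse posterior matching kernel `F⁻¹_{Θ|Y}(v|y) = inf {θ : F_{Θ|Y}(θ|y) > v}`. -/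
noncomputable def pmInv (κ : Kernel ℝ ℝ) (v y : ℝ) : ℝ :=
  sInf {θ : ℝ | v < pmCDF κ θ y}

/-- The history `(Θ_0, X_1^{nx}, Y_1^{ny}, V_1^{nv})` available in the scheme, with the
(infinite) vectors truncated to the indicated lengths (zero beyond them). -/
def hist {Ω : Type*} (Θ X Y V : ℕ → Ω → ℝ) (nx ny nv : ℕ) (ω : Ω) :
    ℝ × (ℕ → ℝ) × (ℕ → ℝ) × (ℕ → ℝ) :=
  (Θ 0 ω,
   fun k => if 1 ≤ k ∧ k ≤ nx then X k ω else 0,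
   fun k => if 1 ≤ k ∧ k ≤ ny then Y k ω else 0,
   fun k => if 1 ≤ k ∧ k ≤ nv then V k ω else 0)

/-- The RIFS decoder: `J_0` is the given initial interval, and
`J_{k+1} = F⁻¹_{Θ|Y}((J_k - V_{n-k}) mod 1 | Y_{n-k})` for `k = 0, …, n-1`
(functions applied to sets element-wise). -/
noncomputable def rifs {Ω : Type*} (κ : Kernel ℝ ℝ) (Y V : ℕ → Ω → ℝ) (J0 : Set ℝ)
    (n : ℕ) (ω : Ω) : ℕ → Set ℝ
  | 0 => J0
  | k + 1 => (fun v => pmInv κ v (Y (n - k) ω)) ''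
      (Int.fract '' ((fun t => t - V (n - k) ω) '' rifs κ Y V J0 n ω k))

open Set

instance : IsProbabilityMeasure unif01 := by
  constructor
  simp [unif01, Real.volume_Icc]

lemma fract_shift (x y : ℝ) : Int.fract (Int.fract x + y) = Int.fract (x + y) := by
  have h : Int.fract x + y = (x + y) + ((-⌊x⌋ : ℤ) : ℝ) := by
    rw [Int.fract]
    push_cast
    ring
  rw [h, Int.fract_add_intCast]

lemma mem_Ico_fract (x : ℝ) : Int.fract x ∈ Ico (0:ℝ) 1 :=
  ⟨Int.fract_nonneg x, Int.fract_lt_one x⟩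

lemma measurable_pmCDF (κ : Kernel ℝ ℝ) [IsSFiniteKernel κ] :
    Measurable (fun p : ℝ × ℝ => pmCDF κ p.1 p.2) := by
  have ht : MeasurableSet {q : (ℝ × ℝ) × ℝ | q.2 ≤ q.1.1} :=
    measurableSet_le measurable_snd (measurable_fst.comp measurable_fst)
  set κ' : Kernel (ℝ × ℝ) ℝ := κ.comap (Prod.snd : ℝ × ℝ → ℝ) measurable_snd with hκ'
  have h : Measurable fun p : ℝ × ℝ =>
      κ' p (Prod.mk p ⁻¹' {q : (ℝ × ℝ) × ℝ | q.2 ≤ q.1.1}) :=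
    Kernel.measurable_kernel_prodMk_left ht
  have h2 : ∀ p : ℝ × ℝ,
      κ' p (Prod.mk p ⁻¹' {q : (ℝ × ℝ) × ℝ | q.2 ≤ q.1.1}) = κ p.2 (Set.Iic p.1) := by
    intro p
    rw [hκ', Kernel.comap_apply]
    congr 1
  have h3 := h.ennreal_toReal
  simp only [h2] at h3
  exact h3

/-- A set `D ⊆ M` that is downward closed within `M` is measurable whenever `M` is. -/
lemma measurableSet_of_lower {M D : Set ℝ} (hM : MeasurableSet M) (hDM : D ⊆ M)
    (hdc : ∀ v ∈ D, ∀ w ∈ M, w ≤ v → w ∈ D) : MeasurableSet D := by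
  rcases D.eq_empty_or_nonempty with h | h
  · simp [h]
  by_cases hb : BddAbove D
  · set t := sSup D with ht
    have h1 : M ∩ Iio t ⊆ D := by
      rintro v ⟨hvM, hvt⟩
      obtain ⟨d, hd, hvd⟩ := exists_lt_of_lt_csSup h hvt
      exact hdc d hd v hvM hvd.le
    have h2 : D ⊆ M ∩ Iic t := fun v hv => ⟨hDM hv, le_csSup hb hv⟩
    have hDeq : D = (M ∩ Iio t) ∪ (D ∩ {t}) := by
      ext x
      constructor
      · intro hx
        have hxt : x ≤ t := (h2 hx).2
        rcases hxt.lt_or_eq with h' | h'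
        · exact Or.inl ⟨hDM hx, h'⟩
        · exact Or.inr ⟨hx, h'⟩
      · rintro (hx | hx)
        · exact h1 hx
        · exact hx.1
    rw [hDeq]
    exact (hM.inter measurableSet_Iio).union
      (((countable_singleton t).mono inter_subset_right).measurableSet)
  · have : D = M := by
      refine subset_antisymm hDM fun v hv => ?_
      obtain ⟨d, hd, hvd⟩ := not_bddAbove_iff.1 hb v
      exact hdc d hd v hv hvd.le
    rw [this]; exact hM

lemma measurable_FXinv (PX : Measure ℝ) [IsFiniteMeasure PX] : Measurable (FXinv PX) := by
  set F : ℝ → ℝ := fun x => (PX (Set.Iic x)).toReal with hF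
  have hFmono : Monotone F := fun x y h =>
    ENNReal.toReal_mono (measure_ne_top _ _) (measure_mono (Iic_subset_Iic.2 h))
  set S : ℝ → Set ℝ := fun v => {x | v < F x} with hSdef
  have hSanti : ∀ {v w : ℝ}, v ≤ w → S w ⊆ S v := fun h x hx => lt_of_le_of_lt h hx
  set M : Set ℝ := {v | (S v).Nonempty ∧ BddBelow (S v)} with hM
  have hMne : MeasurableSet {v | (S v).Nonempty} := by
    refine measurableSet_of_lower MeasurableSet.univ (subset_univ _) ?_
    rintro v hv w _ hwv
    exact hv.mono (hSanti hwv)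
  have hMbb : MeasurableSet {v | BddBelow (S v)} := by
    have : {v | BddBelow (S v)} = {v | ¬ BddBelow (S v)}ᶜ := by
      ext v
      simp
    rw [this]
    refine (measurableSet_of_lower MeasurableSet.univ (subset_univ _) ?_).compl
    rintro v hv w _ hwv
    exact fun hB => hv (hB.mono (hSanti hwv))
  have hMmeas : MeasurableSet M := by
    have : M = {v | (S v).Nonempty} ∩ {v | BddBelow (S v)} := rfl
    rw [this]; exact hMne.inter hMbb
  have hjunk : ∀ v ∉ M, FXinv PX v = 0 := by
    intro v hv
    rw [hM, mem_setOf_eq, not_and_or] at hv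
    rcases hv with hv | hv
    · have : S v = ∅ := not_nonempty_iff_eq_empty.1 hv
      show sInf (S v) = 0
      rw [this]; exact Real.sInf_empty
    · exact Real.sInf_of_not_bddBelow hv
  have hmonoM : MonotoneOn (FXinv PX) M := by
    intro v hv w hw hvw
    exact csInf_le_csInf hv.2 hw.1 (hSanti hvw)
  refine measurable_of_Iio fun c => ?_
  have hD : MeasurableSet {v ∈ M | FXinv PX v < c} := by
    refine measurableSet_of_lower hMmeas (fun v hv => hv.1) ?_
    rintro v ⟨hvM, hvc⟩ w hwM hwv
    exact ⟨hwM, lt_of_le_of_lt (hmonoM hwM hvM hwv) hvc⟩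
  by_cases h0c : (0:ℝ) < c
  · have : FXinv PX ⁻¹' Iio c = {v ∈ M | FXinv PX v < c} ∪ Mᶜ := by
      ext v
      simp only [mem_preimage, mem_Iio, mem_union, mem_setOf_eq, mem_compl_iff]
      constructor
      · intro hv
        by_cases hvM : v ∈ M
        · exact Or.inl ⟨hvM, hv⟩
        · exact Or.inr hvM
      · rintro (⟨_, hv⟩ | hv)
        · exact hv
        · rw [hjunk v hv]; exact h0c
    rw [this]; exact hD.union hMmeas.compl
  · have : FXinv PX ⁻¹' Iio c = {v ∈ M | FXinv PX v < c} := by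
      ext v
      simp only [mem_preimage, mem_Iio, mem_setOf_eq]
      constructor
      · intro hv
        by_cases hvM : v ∈ M
        · exact ⟨hvM, hv⟩
        · rw [hjunk v hvM] at hv; exact absurd hv h0c
      · exact fun h => h.2
    rw [this]; exact hD

lemma unif01_eq_Ico : unif01 = volume.restrict (Ico 0 1) :=
  (Measure.restrict_congr_set Ico_ae_eq_Icc).symm

lemma volume_inter_Ico_fract {u : ℝ} (hu : u ∈ Ico (0:ℝ) 1) {S : Set ℝ}
    (hS : MeasurableSet S) :
    volume ({v : ℝ | Int.fract (u + v) ∈ S} ∩ Ico 0 1) = volume (S ∩ Ico 0 1) := by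
  obtain ⟨hu0, hu1⟩ := hu
  have key1 : {v : ℝ | Int.fract (u + v) ∈ S} ∩ Ico 0 (1 - u)
      = (fun v => u + v) ⁻¹' (S ∩ Ico u 1) := by
    ext v
    simp only [mem_inter_iff, mem_setOf_eq, mem_Ico, mem_preimage]
    constructor
    · rintro ⟨hf, h0, h1⟩
      have he : Int.fract (u + v) = u + v := Int.fract_eq_self.2 ⟨by linarith, by linarith⟩
      rw [he] at hf
      exact ⟨hf, by linarith, by linarith⟩
    · rintro ⟨hfS, hu', h1'⟩
      have he : Int.fract (u + v) = u + v := Int.fract_eq_self.2 ⟨by linarith, by linarith⟩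
      exact ⟨by rw [he]; exact hfS, by linarith, by linarith⟩
  have key2 : {v : ℝ | Int.fract (u + v) ∈ S} ∩ Ico (1 - u) 1
      = (fun v => (u - 1) + v) ⁻¹' (S ∩ Ico 0 u) := by
    ext v
    simp only [mem_inter_iff, mem_setOf_eq, mem_Ico, mem_preimage]
    have hfr : ∀ (h0 : (0:ℝ) ≤ u + v - 1) (h1 : u + v - 1 < 1),
        Int.fract (u + v) = u + v - 1 := by
      intro h0 h1
      have : Int.fract (u + v) = Int.fract (u + v - (1:ℤ)) := (Int.fract_sub_intCast _ _).symm
      rw [this]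
      push_cast
      exact Int.fract_eq_self.2 ⟨h0, h1⟩
    constructor
    · rintro ⟨hf, h0, h1⟩
      have he := hfr (by linarith) (by linarith)
      rw [he] at hf
      refine ⟨by rw [show u - 1 + v = u + v - 1 by ring]; exact hf, by linarith, by linarith⟩
    · rintro ⟨hfS, h0', h1'⟩
      have he := hfr (by linarith) (by linarith)
      refine ⟨by rw [he, show u + v - 1 = u - 1 + v by ring]; exact hfS, by linarith, by linarith⟩
  have hsplit : Ico (0:ℝ) 1 = Ico 0 (1 - u) ∪ Ico (1 - u) 1 :=
    (Ico_union_Ico_eq_Ico (by linarith) (by linarith)).symm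
  have hfm : Measurable fun v : ℝ => Int.fract (u + v) :=
    (measurable_const.add measurable_id).fract
  have hTm : MeasurableSet {v : ℝ | Int.fract (u + v) ∈ S} := hfm hS
  have hd1 : Disjoint (Ico (0:ℝ) (1 - u)) (Ico (1 - u) 1) := Set.Ico_disjoint_Ico_same
  have hd2 : Disjoint (Ico (0:ℝ) u) (Ico u 1) := Set.Ico_disjoint_Ico_same
  calc volume ({v : ℝ | Int.fract (u + v) ∈ S} ∩ Ico 0 1)
      = volume (({v : ℝ | Int.fract (u + v) ∈ S} ∩ Ico 0 (1 - u))
          ∪ ({v : ℝ | Int.fract (u + v) ∈ S} ∩ Ico (1 - u) 1)) := by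
        rw [hsplit, inter_union_distrib_left]
    _ = volume ({v : ℝ | Int.fract (u + v) ∈ S} ∩ Ico 0 (1 - u))
          + volume ({v : ℝ | Int.fract (u + v) ∈ S} ∩ Ico (1 - u) 1) :=
        measure_union (hd1.mono inter_subset_right inter_subset_right)
          (hTm.inter measurableSet_Ico)
    _ = volume ((fun v : ℝ => u + v) ⁻¹' (S ∩ Ico u 1))
          + volume ((fun v : ℝ => (u - 1) + v) ⁻¹' (S ∩ Ico 0 u)) := by rw [key1, key2]
    _ = volume (S ∩ Ico u 1) + volume (S ∩ Ico 0 u) := by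
        rw [measure_preimage_add, measure_preimage_add]
    _ = volume ((S ∩ Ico 0 u) ∪ (S ∩ Ico u 1)) := by
        rw [measure_union (hd2.mono inter_subset_right inter_subset_right)
          (hS.inter measurableSet_Ico), add_comm]
    _ = volume (S ∩ Ico 0 1) := by
        rw [← inter_union_distrib_left, Ico_union_Ico_eq_Ico hu0 hu1.le]

lemma fractMapUnif (w : ℝ) : unif01.map (fun v => Int.fract (w + v)) = unif01 := by
  have hmeas : Measurable fun v : ℝ => Int.fract (w + v) :=
    (measurable_const.add measurable_id).fract
  ext S hS
  rw [Measure.map_apply hmeas hS, unif01_eq_Ico, Measure.restrict_apply (hmeas hS),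
    Measure.restrict_apply hS]
  have hset : (fun v : ℝ => Int.fract (w + v)) ⁻¹' S
      = {v : ℝ | Int.fract (Int.fract w + v) ∈ S} := by
    ext v
    simp only [mem_preimage, mem_setOf_eq, fract_shift]
  rw [hset]
  exact volume_inter_Ico_fract (mem_Ico_fract w) hS

lemma map_fract_add {Ω : Type*} [MeasurableSpace Ω] (P : Measure Ω) [IsProbabilityMeasure P]
    (W V : Ω → ℝ) (hW : Measurable W) (hV : Measurable V) (hVunif : P.map V = unif01)
    (hind : IndepFun W V P) :
    P.map (fun ω => Int.fract (W ω + V ω)) = unif01 := by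
  have hprod : P.map (fun ω => (W ω, V ω)) = (P.map W).prod unif01 := by
    rw [← hVunif]
    exact (indepFun_iff_map_prod_eq_prod_map_map hW.aemeasurable hV.aemeasurable).1 hind
  have hmeas2 : Measurable fun p : ℝ × ℝ => Int.fract (p.1 + p.2) :=
    (measurable_fst.add measurable_snd).fract
  have h1 : P.map (fun ω => Int.fract (W ω + V ω))
      = (P.map (fun ω => (W ω, V ω))).map (fun p : ℝ × ℝ => Int.fract (p.1 + p.2)) := by
    rw [Measure.map_map hmeas2 (hW.prodMk hV)]
    rfl
  haveI : IsProbabilityMeasure (P.map W) := Measure.isProbabilityMeasure_map hW.aemeasurable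
  rw [h1, hprod]
  ext S hS
  rw [Measure.map_apply hmeas2 hS, Measure.prod_apply (hmeas2 hS)]
  have hinner : ∀ x : ℝ, unif01 (Prod.mk x ⁻¹' ((fun p : ℝ × ℝ => Int.fract (p.1 + p.2)) ⁻¹' S))
      = unif01 S := by
    intro x
    have hpre : Prod.mk x ⁻¹' ((fun p : ℝ × ℝ => Int.fract (p.1 + p.2)) ⁻¹' S)
        = (fun v : ℝ => Int.fract (x + v)) ⁻¹' S := rfl
    have hm : Measurable fun v : ℝ => Int.fract (x + v) :=
      (measurable_const.add measurable_id).fract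
    rw [hpre, ← Measure.map_apply hm hS, fractMapUnif x]
  simp_rw [hinner]
  rw [lintegral_const, measure_univ, mul_one]

section invSpec

variable {F : ℝ → ℝ}

lemma pm_inv_spec (hmono : Monotone F) (hnn : ∀ t, 0 ≤ F t)
    (hcont : ContinuousOn F (Icc 0 1)) (hF0 : F 0 = 0) (hF1 : F 1 = 1)
    (hsm : StrictMonoOn F (Icc 0 1)) {v : ℝ} (hv : v ∈ Ico (0:ℝ) 1) :
    sInf {t | v < F t} ∈ Ico (0:ℝ) 1 ∧ F (sInf {t | v < F t}) = v := by
  obtain ⟨c, hc, hFc⟩ : ∃ c ∈ Icc (0:ℝ) 1, F c = v := by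
    have := intermediate_value_Icc (zero_le_one) hcont
    rw [hF0, hF1] at this
    obtain ⟨c, hc, hFc⟩ := this ⟨hv.1, hv.2.le⟩
    exact ⟨c, hc, hFc⟩
  have hc1 : c < 1 := by
    rcases lt_or_eq_of_le hc.2 with h | h
    · exact h
    · rw [h, hF1] at hFc; exact absurd hFc.symm hv.2.ne
  have hlb : ∀ x ∈ {t | v < F t}, c ≤ x := by
    intro x hx
    by_contra hcx
    push_neg at hcx
    have hFxle : F x ≤ v := by
      rcases le_or_gt x 0 with h0 | h0
      · calc F x ≤ F 0 := hmono h0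
          _ = 0 := hF0
          _ ≤ v := hv.1
      · exact le_of_lt (hFc ▸ hsm ⟨h0.le, (hcx.trans hc1).le⟩ hc hcx)
    exact absurd hx (not_lt.2 hFxle)
  have hne : Set.Nonempty {t | v < F t} := ⟨1, by simpa [hF1] using hv.2⟩
  have hbdd : BddBelow {t | v < F t} := ⟨c, hlb⟩
  have h1 : c ≤ sInf {t | v < F t} := le_csInf hne hlb
  have h2 : sInf {t | v < F t} ≤ c := by
    by_contra hlt
    push_neg at hlt
    set x := min ((c + sInf {t | v < F t}) / 2) 1 with hx
    have hcx : c < x := lt_min (by linarith) hc1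
    have hx1 : x ≤ 1 := min_le_right _ _
    have hmem : x ∈ {t | v < F t} := by
      have : F c < F x := hsm hc ⟨hc.1.trans hcx.le, hx1⟩ hcx
      rw [hFc] at this
      exact this
    have hle := csInf_le hbdd hmem
    have hxlt : x < sInf {t | v < F t} :=
      lt_of_le_of_lt (min_le_left _ _) (by linarith)
    linarith
  have heq : sInf {t | v < F t} = c := le_antisymm h2 h1
  rw [heq]
  exact ⟨⟨hc.1, hc1⟩, hFc⟩

lemma pm_inv_self (hmono : Monotone F) (hnn : ∀ t, 0 ≤ F t)
    (hcont : ContinuousOn F (Icc 0 1)) (hF0 : F 0 = 0) (hF1 : F 1 = 1)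
    (hsm : StrictMonoOn F (Icc 0 1)) {θ : ℝ} (hθ : θ ∈ Ico (0:ℝ) 1) :
    sInf {t | F θ < F t} = θ := by
  have hv : F θ ∈ Ico (0:ℝ) 1 := by
    refine ⟨hnn θ, ?_⟩
    rw [← hF1]
    exact hsm ⟨hθ.1, hθ.2.le⟩ (right_mem_Icc.2 zero_le_one) hθ.2
  obtain ⟨hmem, heq⟩ := pm_inv_spec hmono hnn hcont hF0 hF1 hsm hv
  exact hsm.injOn ⟨hmem.1, hmem.2.le⟩ ⟨hθ.1, hθ.2.le⟩ heq

end invSpec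

lemma pm_step (κ : Kernel ℝ ℝ) (y : ℝ)
    (hmono : Monotone (fun t => pmCDF κ t y)) (hnn : ∀ t, 0 ≤ pmCDF κ t y)
    (hcont : ContinuousOn (fun t => pmCDF κ t y) (Icc 0 1))
    (hF0 : pmCDF κ 0 y = 0) (hF1 : pmCDF κ 1 y = 1)
    (hsm : StrictMonoOn (fun t => pmCDF κ t y) (Icc 0 1))
    {θ : ℝ} (hθ : θ ∈ Ico (0:ℝ) 1) {S : Set ℝ} (hS : S ⊆ Ico 0 1) (v : ℝ) :
    θ ∈ (fun x => pmInv κ x y) '' (Int.fract '' ((fun t => t - v) '' S))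
      ↔ Int.fract (pmCDF κ θ y + v) ∈ S := by
  have hFθ : pmCDF κ θ y ∈ Ico (0:ℝ) 1 := by
    refine ⟨hnn θ, ?_⟩
    rw [← hF1]
    exact hsm ⟨hθ.1, hθ.2.le⟩ (right_mem_Icc.2 zero_le_one) hθ.2
  constructor
  · rintro ⟨x, hx, hθx⟩
    obtain ⟨s, hs, hsx⟩ : ∃ s ∈ S, Int.fract (s - v) = x := by
      obtain ⟨t, ⟨s, hs, rfl⟩, rfl⟩ := hx
      exact ⟨s, hs, rfl⟩
    have hxI : x ∈ Ico (0:ℝ) 1 := hsx ▸ mem_Ico_fract _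
    have hFx : pmCDF κ θ y = x := by
      rw [← hθx]
      exact (pm_inv_spec hmono hnn hcont hF0 hF1 hsm hxI).2
    have hfin : Int.fract (pmCDF κ θ y + v) = s := by
      rw [hFx, ← hsx, fract_shift, sub_add_cancel,
        Int.fract_eq_self.2 ⟨(hS hs).1, (hS hs).2⟩]
    rw [hfin]
    exact hs
  · intro h
    have h1 : Int.fract (Int.fract (pmCDF κ θ y + v) - v) = pmCDF κ θ y := by
      rw [sub_eq_add_neg, fract_shift, show pmCDF κ θ y + v + -v = pmCDF κ θ y by ring,
        Int.fract_eq_self.2 ⟨hFθ.1, hFθ.2⟩]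
    refine ⟨Int.fract (Int.fract (pmCDF κ θ y + v) - v),
      ⟨Int.fract (pmCDF κ θ y + v) - v, ⟨Int.fract (pmCDF κ θ y + v), h, rfl⟩, rfl⟩, ?_⟩
    rw [h1]
    exact pm_inv_self hmono hnn hcont hF0 hF1 hsm hθ

/-- A bundle of analytic properties of `pmCDF κ · y` implied by (P1). -/
lemma good_props (κ : Kernel ℝ ℝ) [IsMarkovKernel κ] (y : ℝ)
    (h : ∃ f : ℝ → ℝ, (∀ t, 0 ≤ f t) ∧ IntegrableOn f (Set.Icc 0 1) ∧
      (∀ θ ∈ Set.Icc (0:ℝ) 1, pmCDF κ θ y = ∫ t in (0:ℝ)..θ, f t) ∧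
      StrictMonoOn (fun θ => pmCDF κ θ y) (Set.Icc 0 1) ∧ pmCDF κ 1 y = 1) :
    Monotone (fun t => pmCDF κ t y) ∧ (∀ t, 0 ≤ pmCDF κ t y) ∧
      ContinuousOn (fun t => pmCDF κ t y) (Icc 0 1) ∧ pmCDF κ 0 y = 0 ∧
      pmCDF κ 1 y = 1 ∧ StrictMonoOn (fun t => pmCDF κ t y) (Icc 0 1) := by
  obtain ⟨f, hf0, hfi, hrep, hsm, hF1⟩ := h
  refine ⟨?_, fun t => ENNReal.toReal_nonneg, ?_, ?_, hF1, hsm⟩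
  · intro s t hst
    exact ENNReal.toReal_mono (measure_ne_top _ _) (measure_mono (Iic_subset_Iic.2 hst))
  · have hc := intervalIntegral.continuousOn_primitive (μ := volume) hfi
    refine ContinuousOn.congr hc ?_
    intro θ hθ
    show pmCDF κ θ y = ∫ t in Ioc 0 θ, f t
    rw [hrep θ hθ, intervalIntegral.integral_of_le hθ.1]
  · rw [hrep 0 (left_mem_Icc.2 zero_le_one), intervalIntegral.integral_same]

/-- Reconstruction of `Θ_m` from the history vector. -/
noncomputable def phiPM (κ : Kernel ℝ ℝ) : ℕ → ℝ × (ℕ → ℝ) × (ℕ → ℝ) × (ℕ → ℝ) → ℝ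
  | 0 => fun h => h.1
  | 1 => fun h => h.1
  | (k + 2) => fun h =>
      Int.fract (pmCDF κ (phiPM κ (k + 1) h) (h.2.2.1 (k + 1)) + h.2.2.2 (k + 1))

lemma measurable_phiPM (κ : Kernel ℝ ℝ) [IsSFiniteKernel κ] :
    ∀ k, Measurable (phiPM κ k)
  | 0 => measurable_fst
  | 1 => measurable_fst
  | (k + 2) => by
    have h1 := measurable_phiPM κ (k + 1)
    have hy : Measurable fun h : ℝ × (ℕ → ℝ) × (ℕ → ℝ) × (ℕ → ℝ) => h.2.2.1 (k + 1) :=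
      (measurable_pi_apply (k + 1)).comp (measurable_fst.comp (measurable_snd.comp measurable_snd))
    have hv : Measurable fun h : ℝ × (ℕ → ℝ) × (ℕ → ℝ) × (ℕ → ℝ) => h.2.2.2 (k + 1) :=
      (measurable_pi_apply (k + 1)).comp (measurable_snd.comp (measurable_snd.comp measurable_snd))
    exact (((measurable_pmCDF κ).comp ((measurable_phiPM κ (k + 1)).prodMk hy)).add hv).fract

lemma phiPM_hist {Ω : Type*} (κ : Kernel ℝ ℝ) (Θ X Y V : ℕ → Ω → ℝ)
    (hΘ1 : ∀ ω, Θ 1 ω = Θ 0 ω)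
    (hrec : ∀ n, 1 ≤ n → ∀ ω, Θ (n + 1) ω = Int.fract (pmCDF κ (Θ n ω) (Y n ω) + V n ω)) :
    ∀ m, 1 ≤ m → ∀ nx ny nv : ℕ, m ≤ ny + 1 → m ≤ nv + 1 → ∀ ω,
      phiPM κ m (hist Θ X Y V nx ny nv ω) = Θ m ω := by
  intro m
  induction m with
  | zero => intro h; exact absurd h (by norm_num)
  | succ k IH =>
    intro _ nx ny nv hny hnv ω
    rcases Nat.eq_zero_or_pos k with rfl | hk
    · show (hist Θ X Y V nx ny nv ω).1 = Θ 1 ω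
      rw [hΘ1 ω]
      rfl
    · obtain ⟨j, rfl⟩ := Nat.exists_eq_succ_of_ne_zero hk.ne'
      show Int.fract (pmCDF κ (phiPM κ (j + 1) (hist Θ X Y V nx ny nv ω))
          ((hist Θ X Y V nx ny nv ω).2.2.1 (j + 1))
          + (hist Θ X Y V nx ny nv ω).2.2.2 (j + 1)) = Θ (j + 1 + 1) ω
      have hY : (hist Θ X Y V nx ny nv ω).2.2.1 (j + 1) = Y (j + 1) ω := by
        show (if 1 ≤ j + 1 ∧ j + 1 ≤ ny then Y (j + 1) ω else 0) = Y (j + 1) ω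
        rw [if_pos ⟨by omega, by omega⟩]
      have hVc : (hist Θ X Y V nx ny nv ω).2.2.2 (j + 1) = V (j + 1) ω := by
        show (if 1 ≤ j + 1 ∧ j + 1 ≤ nv then V (j + 1) ω else 0) = V (j + 1) ω
        rw [if_pos ⟨by omega, by omega⟩]
      rw [hY, hVc, IH (by omega) nx ny nv (by omega) (by omega) ω,
        hrec (j + 1) (by omega) ω]

/-- in the randomized posterior matching scheme over a memoryless channel
`κchan` with input distribution `PX` (message point `Θ_0 ~ Unif[0,1]`, inputs
`X_n = F_X⁻¹(Θ_n)`, outputs drawn from the channel conditionally independently of the past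
given `X_n`, fresh independent uniform common randomness `V_n`, and recursion
`Θ_{n+1} = (F_{Θ|Y}(Θ_n|Y_n) + V_n) mod 1` for the PM kernel `κ`, a regular conditional
distribution of `Θ_1` given `Y_1`), under assumption (P1), the RIFS decoder started from an
interval `J_0 = (a,b) ⊆ (0,1)` of measure `1 - p_e` satisfies
`P(Θ_0 ∈ J_n (mod 1)) = 1 - p_e` for every horizon `n ≥ 1`. -/
theorem statement1 {Ω : Type*} [MeasurableSpace Ω] (P : Measure Ω) [IsProbabilityMeasure P]
    (PX : Measure ℝ) [IsProbabilityMeasure PX]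
    (κchan : Kernel ℝ ℝ) [IsMarkovKernel κchan]
    (κ : Kernel ℝ ℝ) [IsMarkovKernel κ]
    (Θ Y V : ℕ → Ω → ℝ)
    (hΘm : ∀ n, Measurable (Θ n)) (hYm : ∀ n, Measurable (Y n))
    (hVm : ∀ n, Measurable (V n))
    (X : ℕ → Ω → ℝ) (hX : ∀ n ω, X n ω = FXinv PX (Θ n ω))
    -- the message point is uniform on [0,1] and Θ_1 = Θ_0:
    (hΘ0 : P.map (Θ 0) = unif01) (hΘ1 : ∀ ω, Θ 1 ω = Θ 0 ω)
    -- Y_n is drawn from the channel at X_n, conditionally independent of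
    -- (Θ_0, X^{n-1}, Y^{n-1}, V^{n-1}) given X_n:
    (hchan : ∀ n, 1 ≤ n →
      P.map (fun ω => ((hist Θ X Y V (n - 1) (n - 1) (n - 1) ω, X n ω), Y n ω))
        = (P.map (fun ω => (hist Θ X Y V (n - 1) (n - 1) (n - 1) ω, X n ω)))
            ⊗ₘ (κchan.comap Prod.snd measurable_snd))
    -- V_n ~ Unif[0,1] independent of (Θ_0, X^n, Y^n, V^{n-1}):
    (hV : ∀ n, 1 ≤ n → P.map (V n) = unif01
        ∧ IndepFun (V n) (hist Θ X Y V n n (n - 1)) P)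
    -- the randomized posterior matching recursion:
    (hrec : ∀ n, 1 ≤ n → ∀ ω, Θ (n + 1) ω = Int.fract (pmCDF κ (Θ n ω) (Y n ω) + V n ω))
    -- κ is a regular conditional distribution of Θ given Y (for the single-letter joint law):
    (hκ : P.map (fun ω => (Y 1 ω, Θ 1 ω)) = (P.map (Y 1)) ⊗ₘ κ)
    -- (P1): for a.e. y, θ ↦ F_{Θ|Y}(θ|y) is absolutely continuous and strictly increasing
    -- from [0,1] onto [0,1]:
    (hP1 : ∀ᵐ y ∂(P.map (Y 1)), ∃ f : ℝ → ℝ, (∀ t, 0 ≤ f t) ∧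
      IntegrableOn f (Set.Icc 0 1) ∧
      (∀ θ ∈ Set.Icc (0:ℝ) 1, pmCDF κ θ y = ∫ t in (0:ℝ)..θ, f t) ∧
      StrictMonoOn (fun θ => pmCDF κ θ y) (Set.Icc 0 1) ∧ pmCDF κ 1 y = 1) :
    ∀ pe : ℝ, pe ∈ Set.Ioo (0:ℝ) 1 → ∀ a b : ℝ, 0 ≤ a → b ≤ 1 → b - a = 1 - pe →
      ∀ n : ℕ, 1 ≤ n →
        P {ω | Int.fract (Θ 0 ω) ∈ rifs κ Y V (Set.Ioo a b) n ω n}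
          = ENNReal.ofReal (1 - pe) := by
  intro pe hpe a b ha hb hab n hn
  classical
  have hXeq : ∀ k, X k = fun ω => FXinv PX (Θ k ω) := fun k => funext (hX k)
  have hXm : ∀ k, Measurable (X k) := fun k =>
    (hXeq k) ▸ ((measurable_FXinv PX).comp (hΘm k))
  have hhist : ∀ nx ny nv, Measurable (hist Θ X Y V nx ny nv) := by
    intro nx ny nv
    refine (hΘm 0).prodMk (Measurable.prodMk ?_ (Measurable.prodMk ?_ ?_))
    · refine measurable_pi_lambda _ fun k => ?_
      split_ifs
      exacts [hXm k, measurable_const]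
    · refine measurable_pi_lambda _ fun k => ?_
      split_ifs
      exacts [hYm k, measurable_const]
    · refine measurable_pi_lambda _ fun k => ?_
      split_ifs
      exacts [hVm k, measurable_const]
  -- the law of each Θ m, m ≥ 1, is uniform
  have lawΘ : ∀ m, 1 ≤ m → P.map (Θ m) = unif01 := by
    intro m hm
    induction m, hm using Nat.le_induction with
    | base =>
      rw [show Θ 1 = Θ 0 from funext hΘ1]
      exact hΘ0
    | succ m hm IH =>
      have hWme : Measurable fun ω => pmCDF κ (Θ m ω) (Y m ω) :=
        (measurable_pmCDF κ).comp ((hΘm m).prodMk (hYm m))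
      set ψ : ℝ × (ℕ → ℝ) × (ℕ → ℝ) × (ℕ → ℝ) → ℝ :=
        fun h => pmCDF κ (phiPM κ m h) (h.2.2.1 m) with hψdef
      have hψ : Measurable ψ :=
        (measurable_pmCDF κ).comp ((measurable_phiPM κ m).prodMk
          ((measurable_pi_apply m).comp (measurable_fst.comp
            (measurable_snd.comp measurable_snd))))
      have hcomp : (fun ω => pmCDF κ (Θ m ω) (Y m ω)) = ψ ∘ hist Θ X Y V m m (m - 1) := by
        funext ω
        simp only [hψdef, Function.comp_apply]
        rw [phiPM_hist κ Θ X Y V hΘ1 hrec m hm m m (m - 1) (by omega) (by omega) ω]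
        congr 1
        show Y m ω = (if 1 ≤ m ∧ m ≤ m then Y m ω else 0)
        rw [if_pos ⟨hm, le_rfl⟩]
      have hind : IndepFun (fun ω => pmCDF κ (Θ m ω) (Y m ω)) (V m) P := by
        rw [hcomp]
        exact ((hV m hm).2.comp measurable_id hψ).symm
      have hfun : Θ (m + 1) = fun ω => Int.fract (pmCDF κ (Θ m ω) (Y m ω) + V m ω) :=
        funext fun ω => hrec m hm ω
      rw [hfun]
      exact map_fract_add P (fun ω => pmCDF κ (Θ m ω) (Y m ω)) (V m) hWme (hVm m)
        (hV m hm).1 hind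
  -- the law of each Y m, m ≥ 1, equals that of Y 1
  have lawY : ∀ m, 1 ≤ m → P.map (Y m) = P.map (Y 1) := by
    have haux : ∀ m, 1 ≤ m → ∀ S : Set ℝ, MeasurableSet S →
        (P.map (Y m)) S = ∫⁻ x, (κchan x) S ∂(unif01.map (FXinv PX)) := by
      intro m hm S hS
      set g : Ω → (ℝ × (ℕ → ℝ) × (ℕ → ℝ) × (ℕ → ℝ)) × ℝ :=
        fun ω => (hist Θ X Y V (m - 1) (m - 1) (m - 1) ω, X m ω) with hgdef
      have hgm : Measurable g := (hhist _ _ _).prodMk (hXm m)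
      have hbig : Measurable fun ω => (g ω, Y m ω) := hgm.prodMk (hYm m)
      have h1 : P.map (Y m) = (P.map (fun ω => (g ω, Y m ω))).map Prod.snd := by
        rw [Measure.map_map measurable_snd hbig]
        rfl
      haveI : IsProbabilityMeasure (P.map g) := Measure.isProbabilityMeasure_map hgm.aemeasurable
      rw [h1]
      set κ'' : Kernel ((ℝ × (ℕ → ℝ) × (ℕ → ℝ) × (ℕ → ℝ)) × ℝ) ℝ :=
        κchan.comap (Prod.snd : ((ℝ × (ℕ → ℝ) × (ℕ → ℝ) × (ℕ → ℝ)) × ℝ) → ℝ)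
          measurable_snd with hκ''
      have h2 : P.map (fun ω => (g ω, Y m ω)) = (P.map g) ⊗ₘ κ'' := hchan m hm
      rw [h2, Measure.map_apply measurable_snd hS, Measure.compProd_apply (measurable_snd hS)]
      have h3 : ∀ p : (ℝ × (ℕ → ℝ) × (ℕ → ℝ) × (ℕ → ℝ)) × ℝ,
          κ'' p (Prod.mk p ⁻¹' (Prod.snd ⁻¹' S)) = κchan p.2 S := by
        intro p
        rw [hκ'', Kernel.comap_apply]
        congr 1
      simp only [h3]
      rw [← lintegral_map (κchan.measurable_coe hS) measurable_snd,
        Measure.map_map measurable_snd hgm]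
      have h4 : P.map (Prod.snd ∘ g) = unif01.map (FXinv PX) := by
        rw [← lawΘ m hm, Measure.map_map (measurable_FXinv PX) (hΘm m)]
        have : Prod.snd ∘ g = X m := rfl
        rw [this, hXeq m]
        rfl
      rw [h4]
    intro m hm
    ext S hS
    rw [haux m hm S hS, haux 1 le_rfl S hS]
  -- a.e. facts
  have hae0 : ∀ᵐ ω ∂P, Θ 0 ω ∈ Ico (0:ℝ) 1 := by
    apply ae_of_ae_map (hΘm 0).aemeasurable
    rw [hΘ0, ae_iff]
    have h1 : {y : ℝ | ¬ y ∈ Ico (0:ℝ) 1} = (Ico (0:ℝ) 1)ᶜ := rfl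
    rw [h1, show unif01 = volume.restrict (Icc 0 1) from rfl,
      Measure.restrict_apply measurableSet_Ico.compl]
    have h2 : (Ico (0:ℝ) 1)ᶜ ∩ Icc 0 1 = {1} := by
      ext x
      simp only [mem_inter_iff, mem_compl_iff, mem_Ico, mem_Icc, mem_singleton_iff,
        not_and, not_lt]
      constructor
      · rintro ⟨h1', h2', h3'⟩
        linarith [h1' h2']
      · rintro rfl
        exact ⟨fun _ => le_refl 1, by norm_num, le_refl 1⟩
    rw [h2, Real.volume_singleton]
  have haeAll : ∀ᵐ ω ∂P, ∀ m, 1 ≤ m → m ≤ n → (∃ f : ℝ → ℝ, (∀ t, 0 ≤ f t) ∧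
      IntegrableOn f (Set.Icc 0 1) ∧
      (∀ θ ∈ Set.Icc (0:ℝ) 1, pmCDF κ θ (Y m ω) = ∫ t in (0:ℝ)..θ, f t) ∧
      StrictMonoOn (fun θ => pmCDF κ θ (Y m ω)) (Set.Icc 0 1) ∧ pmCDF κ 1 (Y m ω) = 1) := by
    rw [ae_all_iff]
    intro m
    by_cases hm : 1 ≤ m ∧ m ≤ n
    · have h := hP1
      rw [← lawY m hm.1] at h
      filter_upwards [ae_of_ae_map (hYm m).aemeasurable h] with ω hω _ _ using hω
    · filter_upwards with ω h1 h2
      exact absurd ⟨h1, h2⟩ hm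
  -- pointwise equivalence
  have key : ∀ᵐ ω ∂P,
      (Int.fract (Θ 0 ω) ∈ rifs κ Y V (Ioo a b) n ω n ↔ Θ (n + 1) ω ∈ Ioo a b) := by
    filter_upwards [hae0, haeAll] with ω hω0 hωG
    have hΘmem : ∀ m, 1 ≤ m → Θ m ω ∈ Ico (0:ℝ) 1 := by
      intro m hm
      induction m, hm using Nat.le_induction with
      | base => rw [hΘ1 ω]; exact hω0
      | succ m hm _ => rw [hrec m hm ω]; exact mem_Ico_fract _
    have hIoo_sub : Ioo a b ⊆ Ico (0:ℝ) 1 := fun x hx =>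
      ⟨ha.trans hx.1.le, lt_of_lt_of_le hx.2 hb⟩
    have chain : ∀ k, k ≤ n →
        ((Θ (n + 1 - k) ω ∈ rifs κ Y V (Ioo a b) n ω k ↔ Θ (n + 1) ω ∈ Ioo a b)
          ∧ rifs κ Y V (Ioo a b) n ω k ⊆ Ico 0 1) := by
      intro k
      induction k with
      | zero => exact fun _ => ⟨Iff.rfl, hIoo_sub⟩
      | succ k IH =>
        intro hk
        obtain ⟨IH1, IH2⟩ := IH (Nat.le_of_succ_le hk)
        have hm1 : 1 ≤ n - k := by omega
        have hmn : n - k ≤ n := Nat.sub_le n k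
        obtain ⟨hmono, hnn, hcont, hF0, hF1, hsm⟩ :=
          good_props κ (Y (n - k) ω) (hωG (n - k) hm1 hmn)
        have hθ := hΘmem (n - k) hm1
        have hstep := pm_step κ (Y (n - k) ω) hmono hnn hcont hF0 hF1 hsm hθ IH2 (V (n - k) ω)
        have hr : rifs κ Y V (Ioo a b) n ω (k + 1)
            = (fun v => pmInv κ v (Y (n - k) ω)) ''
              (Int.fract '' ((fun t => t - V (n - k) ω) '' rifs κ Y V (Ioo a b) n ω k)) := rfl
        constructor
        · rw [show n + 1 - (k + 1) = n - k from by omega, hr, hstep,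
            ← hrec (n - k) hm1 ω, show (n - k) + 1 = n + 1 - k from by omega]
          exact IH1
        · rw [hr]
          rintro x ⟨x', hx', rfl⟩
          have hx'I : x' ∈ Ico (0:ℝ) 1 := by
            obtain ⟨t, _, rfl⟩ := hx'
            exact mem_Ico_fract t
          exact (pm_inv_spec hmono hnn hcont hF0 hF1 hsm hx'I).1
    have h1 := (chain n le_rfl).1
    rw [show n + 1 - n = 1 from by omega] at h1
    rw [Int.fract_eq_self.2 ⟨hω0.1, hω0.2⟩, ← hΘ1 ω]
    exact h1
  have hsets : {ω | Int.fract (Θ 0 ω) ∈ rifs κ Y V (Ioo a b) n ω n}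
      =ᵐ[P] {ω | Θ (n + 1) ω ∈ Ioo a b} := eventuallyEq_set.2 key
  rw [measure_congr hsets]
  have hP2 : P {ω | Θ (n + 1) ω ∈ Ioo a b} = (P.map (Θ (n + 1))) (Ioo a b) := by
    rw [Measure.map_apply (hΘm (n + 1)) measurableSet_Ioo]
    rfl
  rw [hP2, lawΘ (n + 1) (by omega)]
  show (volume.restrict (Icc 0 1)) (Ioo a b) = _
  rw [Measure.restrict_apply measurableSet_Ioo,
    show Ioo a b ∩ Icc 0 1 = Ioo a b from inter_eq_left.2
      (fun x hx => ⟨ha.trans hx.1.le, hx.2.le.trans hb⟩),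
    Real.volume_Ioo, hab]
end

section
/- Let g : [0,1] → ℝ be continuous, let x₀ ∈ (0,1), and suppose g is differentiable at x₀ with derivative g'(x₀). Then lim_{λ→0⁺} D_λ[g](x₀) = |g'(x₀)|; in particular limsup_{λ→0⁺} D_λ[g](x₀) = |g'(x₀)|. -/
open MeasureTheory Filter
open scoped ENNReal NNReal

/-- The `λ`-smoothed derivative `D_λ[g](x) := λ⁻¹ · Leb*(g(A_λ(x)))`, where
`A_λ(x) = {t mod 1 : t ∈ [x - λ/2, x + λ/2]}` and `Leb*` is Lebesgue outer measure
(a measure applied to an arbitrary set in Mathlib is its outer measure). -/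
noncomputable def smoothD (g : ℝ → ℝ) (lam x : ℝ) : ℝ≥0∞ :=
  volume (g '' (Int.fract '' Set.Icc (x - lam / 2) (x + lam / 2))) / ENNReal.ofReal lam

/-- if `g : [0,1] → ℝ` is continuous and differentiable at `x₀ ∈ (0,1)` with
derivative `d`, then `D_λ[g](x₀) → |d|` as `λ → 0⁺`; in particular
`limsup_{λ→0⁺} D_λ[g](x₀) = |d|`. -/
theorem statement2 (g : ℝ → ℝ) (hg : ContinuousOn g (Set.Icc 0 1))
    (x₀ : ℝ) (hx₀ : x₀ ∈ Set.Ioo (0:ℝ) 1) (d : ℝ)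
    (hd : HasDerivWithinAt g d (Set.Icc 0 1) x₀) :
    Tendsto (fun lam => smoothD g lam x₀) (nhdsWithin 0 (Set.Ioi 0))
      (nhds (ENNReal.ofReal |d|)) ∧
    Filter.limsup (fun lam => smoothD g lam x₀) (nhdsWithin 0 (Set.Ioi 0))
      = ENNReal.ofReal |d| := by
  obtain ⟨hx0, hx1⟩ := hx₀
  set δ₀ : ℝ := min x₀ (1 - x₀) with hδ₀def
  have hδ₀ : 0 < δ₀ := lt_min hx0 (by linarith)
  -- basic facts for small lam
  have hsub : ∀ lam : ℝ, 0 < lam → lam < δ₀ →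
      Set.Icc (x₀ - lam / 2) (x₀ + lam / 2) ⊆ Set.Icc 0 1 ∧
      Set.Icc (x₀ - lam / 2) (x₀ + lam / 2) ⊆ Set.Ico 0 1 := by
    intro lam hl hld
    have h1 : δ₀ ≤ x₀ := min_le_left _ _
    have h2 : δ₀ ≤ 1 - x₀ := min_le_right _ _
    constructor
    · intro t ht
      exact ⟨by simp only [Set.mem_Icc] at ht; linarith [ht.1], by
        simp only [Set.mem_Icc] at ht; linarith [ht.2]⟩
    · intro t ht
      simp only [Set.mem_Icc] at ht
      exact ⟨by linarith [ht.1], by linarith [ht.2]⟩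
  set F : ℝ → ℝ := fun lam =>
    (sSup (g '' Set.Icc (x₀ - lam / 2) (x₀ + lam / 2)) -
      sInf (g '' Set.Icc (x₀ - lam / 2) (x₀ + lam / 2))) / lam with hF
  have hev : ∀ᶠ lam in nhdsWithin (0:ℝ) (Set.Ioi 0),
      (fun lam => ENNReal.ofReal (F lam)) lam = smoothD g lam x₀ := by
    filter_upwards [Ioo_mem_nhdsGT_of_mem (Set.mem_Ico.2 ⟨le_refl (0:ℝ), hδ₀⟩),
      self_mem_nhdsWithin] with lam hlam hlam'
    obtain ⟨hl0, hld⟩ := hlam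
    obtain ⟨hsub1, hsub2⟩ := hsub lam hl0 hld
    have hab : x₀ - lam / 2 ≤ x₀ + lam / 2 := by linarith
    have hfr : Int.fract '' Set.Icc (x₀ - lam / 2) (x₀ + lam / 2)
        = Set.Icc (x₀ - lam / 2) (x₀ + lam / 2) := by
      ext y
      constructor
      · rintro ⟨t, ht, rfl⟩
        rwa [Int.fract_eq_self.2 (hsub2 ht)]
      · intro hy
        exact ⟨y, hy, Int.fract_eq_self.2 (hsub2 hy)⟩
    have hgc : ContinuousOn g (Set.Icc (x₀ - lam / 2) (x₀ + lam / 2)) := hg.mono hsub1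
    have himg := hgc.image_Icc hab
    rw [smoothD, hfr, himg, Real.volume_Icc, ← ENNReal.ofReal_div_of_pos hl0]
  have hFlim : Tendsto F (nhdsWithin 0 (Set.Ioi 0)) (nhds |d|) := by
    rw [Metric.tendsto_nhdsWithin_nhds]
    intro ε hε
    -- derivative estimate
    have hnhds : nhdsWithin x₀ (Set.Icc (0:ℝ) 1) = nhds x₀ :=
      nhdsWithin_eq_nhds.2 (Icc_mem_nhds hx0 hx1)
    have hlo := (hasDerivWithinAt_iff_isLittleO.1 hd).def (by positivity : (0:ℝ) < ε / 4)
    rw [hnhds, Metric.eventually_nhds_iff] at hlo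
    obtain ⟨δ₁, hδ₁, hest⟩ := hlo
    refine ⟨min δ₀ δ₁, lt_min hδ₀ hδ₁, fun lam hl0 hld => ?_⟩
    have hl0' : 0 < lam := hl0
    rw [Real.dist_eq, sub_zero, abs_of_pos hl0'] at hld
    have hldδ₀ : lam < δ₀ := lt_of_lt_of_le hld (min_le_left _ _)
    have hldδ₁ : lam < δ₁ := lt_of_lt_of_le hld (min_le_right _ _)
    obtain ⟨hsub1, hsub2⟩ := hsub lam hl0' hldδ₀
    have hab : x₀ - lam / 2 ≤ x₀ + lam / 2 := by linarith
    -- estimate on points of the interval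
    have hpt : ∀ t ∈ Set.Icc (x₀ - lam / 2) (x₀ + lam / 2),
        |g t - g x₀ - (t - x₀) * d| ≤ ε / 4 * (lam / 2) := by
      intro t ht
      have htx : |t - x₀| ≤ lam / 2 := by
        simp only [Set.mem_Icc] at ht
        rw [abs_le]; constructor <;> linarith [ht.1, ht.2]
      have hdist : dist t x₀ < δ₁ := by
        rw [Real.dist_eq]; exact lt_of_le_of_lt htx (by linarith)
      have := hest hdist
      simp only [Real.norm_eq_abs, smul_eq_mul] at this
      calc |g t - g x₀ - (t - x₀) * d| ≤ ε / 4 * |t - x₀| := this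
        _ ≤ ε / 4 * (lam / 2) := by
            exact mul_le_mul_of_nonneg_left htx (by positivity)
    set S := sSup (g '' Set.Icc (x₀ - lam / 2) (x₀ + lam / 2)) with hS
    set I := sInf (g '' Set.Icc (x₀ - lam / 2) (x₀ + lam / 2)) with hI
    have hcpt : IsCompact (g '' Set.Icc (x₀ - lam / 2) (x₀ + lam / 2)) :=
      (isCompact_Icc).image_of_continuousOn (hg.mono hsub1)
    have hne : (g '' Set.Icc (x₀ - lam / 2) (x₀ + lam / 2)).Nonempty :=
      (Set.nonempty_Icc.2 hab).image g
    -- upper bound: S - I ≤ (|d| + ε/2) * lam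
    have hub : ∀ y ∈ g '' Set.Icc (x₀ - lam / 2) (x₀ + lam / 2),
        |y - g x₀| ≤ (|d| + ε / 4) * (lam / 2) := by
      rintro y ⟨t, ht, rfl⟩
      have h1 := hpt t ht
      have htx : |t - x₀| ≤ lam / 2 := by
        simp only [Set.mem_Icc] at ht
        rw [abs_le]; constructor <;> linarith [ht.1, ht.2]
      have h2 : |(t - x₀) * d| ≤ lam / 2 * |d| := by
        rw [abs_mul]; exact mul_le_mul_of_nonneg_right htx (abs_nonneg d)
      calc |g t - g x₀| = |(g t - g x₀ - (t - x₀) * d) + (t - x₀) * d| := by ring_nf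
        _ ≤ |g t - g x₀ - (t - x₀) * d| + |(t - x₀) * d| := abs_add_le _ _
        _ ≤ ε / 4 * (lam / 2) + lam / 2 * |d| := add_le_add h1 h2
        _ = (|d| + ε / 4) * (lam / 2) := by ring
    have hSle : S ≤ g x₀ + (|d| + ε / 4) * (lam / 2) :=
      csSup_le hne fun y hy => by linarith [abs_le.1 (hub y hy)]
    have hIge : g x₀ - (|d| + ε / 4) * (lam / 2) ≤ I :=
      le_csInf hne fun y hy => by linarith [abs_le.1 (hub y hy)]
    -- lower bound via endpoints
    have hmem1 : g (x₀ - lam / 2) ∈ g '' Set.Icc (x₀ - lam / 2) (x₀ + lam / 2) :=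
      Set.mem_image_of_mem g (Set.left_mem_Icc.2 hab)
    have hmem2 : g (x₀ + lam / 2) ∈ g '' Set.Icc (x₀ - lam / 2) (x₀ + lam / 2) :=
      Set.mem_image_of_mem g (Set.right_mem_Icc.2 hab)
    have hI1 : I ≤ g (x₀ - lam / 2) := csInf_le hcpt.bddBelow hmem1
    have hI2 : I ≤ g (x₀ + lam / 2) := csInf_le hcpt.bddBelow hmem2
    have hS1 : g (x₀ - lam / 2) ≤ S := le_csSup hcpt.bddAbove hmem1
    have hS2 : g (x₀ + lam / 2) ≤ S := le_csSup hcpt.bddAbove hmem2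
    have he1 := hpt (x₀ - lam / 2) (Set.left_mem_Icc.2 hab)
    have he2 := hpt (x₀ + lam / 2) (Set.right_mem_Icc.2 hab)
    rw [abs_le] at he1 he2
    -- g(x₀+λ/2) - g(x₀-λ/2) = d*lam + err, |err| ≤ ε/4*lam
    have hdiff : |g (x₀ + lam / 2) - g (x₀ - lam / 2) - d * lam| ≤ ε / 4 * lam := by
      rw [abs_le]
      constructor <;> [nlinarith [he1.1, he1.2, he2.1, he2.2];
        nlinarith [he1.1, he1.2, he2.1, he2.2]]
    have hlow : |d| * lam - ε / 4 * lam ≤ S - I := by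
      have habs : |d * lam| - ε / 4 * lam ≤ |g (x₀ + lam / 2) - g (x₀ - lam / 2)| := by
        have h3 : |d * lam| - |g (x₀ + lam / 2) - g (x₀ - lam / 2)| ≤ ε / 4 * lam := by
          calc |d * lam| - |g (x₀ + lam / 2) - g (x₀ - lam / 2)|
              ≤ |d * lam - (g (x₀ + lam / 2) - g (x₀ - lam / 2))| :=
                abs_sub_abs_le_abs_sub _ _
            _ = |g (x₀ + lam / 2) - g (x₀ - lam / 2) - d * lam| := abs_sub_comm _ _
            _ ≤ ε / 4 * lam := hdiff
        linarith
      have hdl : |d * lam| = |d| * lam := by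
        rw [abs_mul, abs_of_pos hl0']
      rcases abs_cases (g (x₀ + lam / 2) - g (x₀ - lam / 2)) with ⟨h, _⟩ | ⟨h, _⟩ <;>
        rw [h] at habs <;> rw [hdl] at habs <;> linarith
    -- conclude
    have hup : S - I ≤ (|d| + ε / 4) * lam := by linarith
    rw [Real.dist_eq]
    have h1 : F lam ≤ |d| + ε / 4 := by
      rw [hF]
      exact (div_le_iff₀ hl0').2 (by linarith)
    have h2 : |d| - ε / 4 ≤ F lam := by
      rw [hF]
      exact (le_div_iff₀ hl0').2 (by nlinarith)
    have hfin : abs (F lam - abs d) ≤ ε / 4 := abs_le.2 ⟨by linarith, by linarith⟩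
    exact hfin.trans_lt (div_lt_self hε (by norm_num))
  have key : Tendsto (fun lam => smoothD g lam x₀) (nhdsWithin 0 (Set.Ioi 0))
      (nhds (ENNReal.ofReal |d|)) := by
    refine Tendsto.congr' hev ?_
    exact (ENNReal.continuous_ofReal.tendsto |d|).comp hFlim
  exact ⟨key, key.limsup_eq⟩
end

section
/- Let g : [0,1] → ℝ be absolutely continuous and strictly monotone on [0,1], with a.e. derivative g'. Then for every x ∈ [0,1] and every λ ∈ (0,1], D_λ[g](x) = (1/λ)·∫_{−λ/2}^{λ/2} |g'((x+q) − ⌊x+q⌋)| dq; equivalently, D_λ[g](x) = E|g'((x + Q_λ) mod 1)| where Q_λ is uniformly distributed on [−λ/2, λ/2]. -/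
open MeasureTheory Filter
open scoped ENNReal NNReal

section Aux

open Set
open scoped Topology

lemma ae_ne_one : ∀ᵐ t : ℝ, t ≠ (1:ℝ) := by
  refine ae_iff.2 ?_
  simpa using measure_singleton (1:ℝ)

lemma aux_ae_nonneg (f : ℝ → ℝ) (hf : Integrable f)
    (h : ∀ x ∈ Ioo (0:ℝ) 1, ∀ᶠ δ in 𝓝[>] (0:ℝ), 0 ≤ ∫ y in Metric.closedBall x δ, f y) :
    ∀ᵐ x, x ∈ Ioo (0:ℝ) 1 → 0 ≤ f x := by
  have H := IsUnifLocDoublingMeasure.ae_tendsto_average (μ := (volume : Measure ℝ))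
    hf.locallyIntegrable 1
  filter_upwards [H] with x hx hx01
  have hmem : ∀ᶠ δ in 𝓝[>] (0:ℝ), x ∈ Metric.closedBall x (1 * δ) := by
    filter_upwards [self_mem_nhdsWithin] with δ (hδ : 0 < δ)
    exact Metric.mem_closedBall_self (by linarith)
  have hten := hx (ι := ℝ) (l := 𝓝[>] (0:ℝ)) (fun _ => x) id tendsto_id hmem
  refine ge_of_tendsto hten ?_
  filter_upwards [h x hx01, self_mem_nhdsWithin] with δ h0 (hδ : 0 < δ)
  rw [setAverage_eq]
  have : (0:ℝ) ≤ (volume.real (Metric.closedBall x δ))⁻¹ := by positivity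
  exact smul_nonneg this h0

variable (g g' : ℝ → ℝ)

lemma gInt (hint : IntegrableOn g' (Set.Icc 0 1)) :
    ∀ {u v : ℝ}, u ∈ Icc (0:ℝ) 1 → v ∈ Icc (0:ℝ) 1 → IntervalIntegrable g' volume u v := by
  intro u v hu hv
  apply IntegrableOn.intervalIntegrable
  apply hint.mono_set
  rw [show Icc (0:ℝ) 1 = uIcc (0:ℝ) 1 from (uIcc_of_le zero_le_one).symm] at hu hv ⊢
  exact uIcc_subset_uIcc hu hv

lemma deriv_nonneg (hint : IntegrableOn g' (Set.Icc 0 1))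
    (hac : ∀ x ∈ Set.Icc (0:ℝ) 1, g x = g 0 + ∫ t in (0:ℝ)..x, g' t)
    (hm : MonotoneOn g (Set.Icc 0 1)) :
    ∀ᵐ t, t ∈ Ioo (0:ℝ) 1 → 0 ≤ g' t := by
  have hgI : ∀ {u v : ℝ}, u ∈ Icc (0:ℝ) 1 → v ∈ Icc (0:ℝ) 1 → IntervalIntegrable g' volume u v :=
    fun hu hv => gInt g' hint hu hv
  have hdiff : ∀ {u v : ℝ}, u ∈ Icc (0:ℝ) 1 → v ∈ Icc (0:ℝ) 1 → u ≤ v →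
      ∫ t in u..v, g' t = g v - g u := by
    intro u v hu hv huv
    rw [hac u hu, hac v hv]
    have := intervalIntegral.integral_interval_sub_left (hgI (left_mem_Icc.2 zero_le_one) hv)
      (hgI (left_mem_Icc.2 zero_le_one) hu)
    linarith [this]
  set f : ℝ → ℝ := (Icc (0:ℝ) 1).indicator g' with hf_def
  have hf : Integrable f := (integrable_indicator_iff measurableSet_Icc).2 hint
  have key := aux_ae_nonneg f hf ?_
  · filter_upwards [key] with t ht ht01
    have := ht ht01
    rwa [hf_def, indicator_of_mem (Ioo_subset_Icc_self ht01)] at this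
  · intro x hx
    have hmm : Ioo (0:ℝ) (min x (1 - x)) ∈ 𝓝[>] (0:ℝ) := by
      apply Ioo_mem_nhdsGT_of_mem
      constructor
      · exact le_refl 0
      · simp [hx.1, hx.2, sub_pos]
    filter_upwards [hmm] with δ hδ
    obtain ⟨hδ0, hδm⟩ := hδ
    have hsub : Metric.closedBall x δ ⊆ Icc (0:ℝ) 1 := by
      rw [Real.closedBall_eq_Icc]
      apply Icc_subset_Icc
      · have := lt_min_iff.1 hδm; nlinarith [this.1]
      · have := lt_min_iff.1 hδm; nlinarith [this.2]
    have h1 : x - δ ∈ Icc (0:ℝ) 1 :=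
      hsub (by rw [Real.closedBall_eq_Icc]; exact ⟨le_refl _, by linarith⟩)
    have h2 : x + δ ∈ Icc (0:ℝ) 1 :=
      hsub (by rw [Real.closedBall_eq_Icc]; exact ⟨by linarith, le_refl _⟩)
    rw [Real.closedBall_eq_Icc]
    rw [show ∫ y in Icc (x - δ) (x + δ), f y = ∫ y in Icc (x - δ) (x + δ), g' y from ?_]
    · rw [integral_Icc_eq_integral_Ioc, ← intervalIntegral.integral_of_le (by linarith),
        hdiff h1 h2 (by linarith)]
      have := hm h1 h2 (by linarith)
      linarith
    · rw [hf_def, setIntegral_indicator measurableSet_Icc,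
        inter_eq_self_of_subset_left (by rw [← Real.closedBall_eq_Icc]; exact hsub)]

lemma g_contOn (hint : IntegrableOn g' (Set.Icc 0 1))
    (hac : ∀ x ∈ Set.Icc (0:ℝ) 1, g x = g 0 + ∫ t in (0:ℝ)..x, g' t) :
    ContinuousOn g (Icc 0 1) := by
  have h : ContinuousOn (fun y => g 0 + ∫ t in (0:ℝ)..y, g' t) (Icc 0 1) := by
    apply continuousOn_const.add
    have := intervalIntegral.continuousOn_primitive_interval
      (a := (0:ℝ)) (b := (1:ℝ)) (f := g') (μ := volume) ?_
    · rwa [uIcc_of_le zero_le_one] at this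
    · rwa [uIcc_of_le zero_le_one]
  exact h.congr hac

lemma image_Ico_eq (hc : ContinuousOn g (Icc 0 1)) (hm : StrictMonoOn g (Icc 0 1))
    {c d : ℝ} (h0 : 0 ≤ c) (hcd : c ≤ d) (h1 : d ≤ 1) :
    g '' Ico c d = Ico (g c) (g d) := by
  have hci : c ∈ Icc (0:ℝ) 1 := ⟨h0, hcd.trans h1⟩
  have hdi : d ∈ Icc (0:ℝ) 1 := ⟨h0.trans hcd, h1⟩
  apply Subset.antisymm
  · rintro _ ⟨t, ⟨htc, htd⟩, rfl⟩
    have hti : t ∈ Icc (0:ℝ) 1 := ⟨h0.trans htc, (htd.le).trans h1⟩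
    exact ⟨hm.monotoneOn hci hti htc, hm hti hdi htd⟩
  · exact intermediate_value_Ico hcd (hc.mono (Icc_subset_Icc h0 h1))

lemma intAbs_eq (hint : IntegrableOn g' (Set.Icc 0 1))
    (hac : ∀ x ∈ Set.Icc (0:ℝ) 1, g x = g 0 + ∫ t in (0:ℝ)..x, g' t)
    (hm : StrictMonoOn g (Set.Icc 0 1))
    {c d : ℝ} (h0 : 0 ≤ c) (hcd : c ≤ d) (h1 : d ≤ 1) :
    ∫ t in c..d, |g' t| = g d - g c := by
  have hci : c ∈ Icc (0:ℝ) 1 := ⟨h0, hcd.trans h1⟩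
  have hdi : d ∈ Icc (0:ℝ) 1 := ⟨h0.trans hcd, h1⟩
  have hae := deriv_nonneg g g' hint hac hm.monotoneOn
  have h1' : ∫ t in c..d, |g' t| = ∫ t in c..d, g' t := by
    apply intervalIntegral.integral_congr_ae
    filter_upwards [hae, ae_ne_one] with t ht ht1 hmem
    rw [uIoc_of_le hcd] at hmem
    have : t ∈ Ioo (0:ℝ) 1 := ⟨lt_of_le_of_lt h0 hmem.1, lt_of_le_of_ne (hmem.2.trans h1) ht1⟩
    exact abs_of_nonneg (ht this)
  rw [h1', hac c hci, hac d hdi]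
  have := intervalIntegral.integral_interval_sub_left
    (gInt g' hint (left_mem_Icc.2 zero_le_one) hdi)
    (gInt g' hint (left_mem_Icc.2 zero_le_one) hci)
  linarith [this]

lemma vol_image_Ico (hint : IntegrableOn g' (Set.Icc 0 1))
    (hac : ∀ x ∈ Set.Icc (0:ℝ) 1, g x = g 0 + ∫ t in (0:ℝ)..x, g' t)
    (hm : StrictMonoOn g (Set.Icc 0 1))
    {c d : ℝ} (h0 : 0 ≤ c) (hcd : c ≤ d) (h1 : d ≤ 1) :
    volume (g '' Ico c d) = ENNReal.ofReal (∫ t in c..d, |g' t|) := by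
  rw [image_Ico_eq g (g_contOn g g' hint hac) hm h0 hcd h1, Real.volume_Ico,
    intAbs_eq g g' hint hac hm h0 hcd h1]

lemma meas_union_singleton (A : Set ℝ) (p : ℝ) : volume (A ∪ {p}) = volume A :=
  le_antisymm ((measure_union_le _ _).trans (by simp)) (measure_mono subset_union_left)

lemma fract_image_id {c d : ℝ} (h0 : 0 ≤ c) (h1 : d ≤ 1) :
    Int.fract '' Ico c d = Ico c d := by
  have h := image_congr (f := Int.fract) (g := id) (s := Ico c d)
    (fun t ht => Int.fract_eq_self.2 ⟨h0.trans ht.1, lt_of_lt_of_le ht.2 h1⟩)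
  rw [h, image_id]

lemma fract_image_neg {c d : ℝ} (h0 : -1 ≤ c) (h1 : d ≤ 0) :
    Int.fract '' Ico c d = Ico (c+1) (d+1) := by
  have h := image_congr (f := Int.fract) (g := fun t => t + 1) (s := Ico c d)
    (fun t ht => by
      have h2 : Int.fract (t + 1) = t + 1 :=
        Int.fract_eq_self.2 ⟨by linarith [ht.1], by linarith [ht.2]⟩
      show Int.fract t = t + 1
      rw [← Int.fract_add_one, h2])
  rw [h, image_add_const_Ico]

lemma fract_image_shift {c d : ℝ} (h0 : 1 ≤ c) (h1 : d ≤ 2) :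
    Int.fract '' Ico c d = Ico (c-1) (d-1) := by
  have h := image_congr (f := Int.fract) (g := fun t => t - 1) (s := Ico c d)
    (fun t ht => by
      have h2 : Int.fract (t - 1) = t - 1 :=
        Int.fract_eq_self.2 ⟨by linarith [ht.1], by linarith [ht.2]⟩
      show Int.fract t = t - 1
      rw [← Int.fract_sub_one, h2])
  rw [h, image_sub_const_Ico]

lemma f_per : ∀ t : ℝ, |g' (Int.fract (t + 1))| = |g' (Int.fract t)| := fun t => by
  rw [Int.fract_add_one]

lemma f_intOn (hint : IntegrableOn g' (Set.Icc 0 1)) :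
    IntegrableOn (fun t => |g' (Int.fract t)|) (Icc (0:ℝ) 1) := by
  have h1 : IntegrableOn (fun t => |g' t|) (Icc (0:ℝ) 1) := hint.abs
  apply h1.congr_fun_ae
  filter_upwards [(ae_restrict_mem measurableSet_Icc), ae_ne_one.filter_mono
    (ae_mono Measure.restrict_le_self)] with t hti ht1
  rw [Int.fract_eq_self.2 ⟨hti.1, lt_of_le_of_ne hti.2 ht1⟩]

lemma f_II (hint : IntegrableOn g' (Set.Icc 0 1)) :
    ∀ u v : ℝ, u ∈ Icc (-1:ℝ) 2 → v ∈ Icc (-1:ℝ) 2 →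
      IntervalIntegrable (fun t => |g' (Int.fract t)|) volume u v := by
  set f : ℝ → ℝ := fun t => |g' (Int.fract t)| with hf_def
  have h01 : IntervalIntegrable f volume 0 1 := by
    apply IntegrableOn.intervalIntegrable
    rw [uIcc_of_le zero_le_one]
    exact f_intOn g' hint
  have key : (fun x => f (x + 1)) = f := by
    funext t; exact f_per g' t
  have hm1 : IntervalIntegrable f volume (-1) 0 := by
    have := h01.comp_add_right 1
    rw [key] at this
    norm_num at this
    exact this
  have h12 : IntervalIntegrable f volume 1 2 := by
    have := h01.comp_add_right (-1)
    have key2 : (fun x => f (x + -1)) = f := by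
      funext t
      have := f_per g' (t + -1)
      simpa using this.symm
    rw [key2] at this
    norm_num at this
    exact this
  intro u v hu hv
  apply IntervalIntegrable.mono_set ((hm1.trans h01).trans h12)
  rw [show Icc (-1:ℝ) 2 = uIcc (-1:ℝ) 2 from (uIcc_of_le (by norm_num)).symm] at hu hv
  exact (uIcc_subset_uIcc hu hv).trans (by rw [uIcc_of_le (by norm_num : (-1:ℝ) ≤ 2)])

lemma integral_f_eq {u v : ℝ} (h0 : 0 ≤ u) (huv : u ≤ v) (h1 : v ≤ 1) :
    ∫ t in u..v, |g' (Int.fract t)| = ∫ t in u..v, |g' t| := by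
  apply intervalIntegral.integral_congr_ae
  filter_upwards [ae_ne_one] with t ht1 hmem
  rw [uIoc_of_le huv] at hmem
  rw [Int.fract_eq_self.2 ⟨h0.trans hmem.1.le, lt_of_le_of_ne (hmem.2.trans h1) ht1⟩]

lemma integral_f_shift (u v : ℝ) :
    ∫ t in (u+1)..(v+1), |g' (Int.fract t)| = ∫ t in u..v, |g' (Int.fract t)| := by
  rw [← intervalIntegral.integral_comp_add_right (fun t => |g' (Int.fract t)|) 1]
  simp only [f_per]

lemma vol_two_piece (hint : IntegrableOn g' (Set.Icc 0 1))
    (hac : ∀ x ∈ Set.Icc (0:ℝ) 1, g x = g 0 + ∫ t in (0:ℝ)..x, g' t)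
    (hm : StrictMonoOn g (Set.Icc 0 1))
    {c d : ℝ} (h0d : 0 ≤ d) (hdc : d ≤ c) (hc1 : c ≤ 1) :
    volume (g '' (Ico c 1 ∪ Ico 0 d))
      = ENNReal.ofReal ((∫ t in c..1, |g' t|) + ∫ t in (0:ℝ)..d, |g' t|) := by
  have hc0 : 0 ≤ c := h0d.trans hdc
  have hd1 : d ≤ 1 := hdc.trans hc1
  have hcont := g_contOn g g' hint hac
  have hmon := hm.monotoneOn
  have hdisj : Disjoint (g '' Ico c 1) (g '' Ico 0 d) := by
    rw [image_Ico_eq g hcont hm hc0 hc1 le_rfl, image_Ico_eq g hcont hm le_rfl h0d hd1]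
    rw [Set.Ico_disjoint_Ico]
    have hgd : g d ≤ g c := hmon ⟨h0d, hd1⟩ ⟨hc0, hc1⟩ hdc
    calc min (g 1) (g d) ≤ g d := min_le_right _ _
    _ ≤ g c := hgd
    _ ≤ max (g c) (g 0) := le_max_left _ _
  have hmeas : MeasurableSet (g '' Ico 0 d) := by
    rw [image_Ico_eq g hcont hm le_rfl h0d hd1]; exact measurableSet_Ico
  rw [image_union, measure_union hdisj hmeas,
    vol_image_Ico g g' hint hac hm hc0 hc1 le_rfl,
    vol_image_Ico g g' hint hac hm le_rfl h0d hd1,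
    ← ENNReal.ofReal_add
      (intervalIntegral.integral_nonneg hc1 (fun u _ => abs_nonneg _))
      (intervalIntegral.integral_nonneg h0d (fun u _ => abs_nonneg _))]

theorem statement3_mono (hint : IntegrableOn g' (Set.Icc 0 1))
    (hac : ∀ x ∈ Set.Icc (0:ℝ) 1, g x = g 0 + ∫ t in (0:ℝ)..x, g' t)
    (hm : StrictMonoOn g (Set.Icc 0 1)) :
    ∀ x ∈ Set.Icc (0:ℝ) 1, ∀ lam ∈ Set.Ioc (0:ℝ) 1,
      smoothD g lam x
        = ENNReal.ofReal ((1 / lam) * ∫ q in (-(lam/2))..(lam/2), |g' (Int.fract (x + q))|) := by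
  intro x hx lam hlam
  obtain ⟨hx0, hx1⟩ := hx
  obtain ⟨hl0, hl1⟩ := hlam
  unfold smoothD
  set f : ℝ → ℝ := fun t => |g' (Int.fract t)| with hf_def
  set a := x - lam/2 with ha_def
  set b := x + lam/2 with hb_def
  have hab : a ≤ b := by rw [ha_def, hb_def]; linarith
  have ham1 : -1 ≤ a := by rw [ha_def]; linarith
  have hb2 : b ≤ 2 := by rw [hb_def]; linarith
  have hba : b - a = lam := by rw [ha_def, hb_def]; ring
  have hIrhs : ∫ q in (-(lam/2))..(lam/2), |g' (Int.fract (x + q))|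
      = ∫ t in a..b, f t := by
    have h := intervalIntegral.integral_comp_add_left (a := -(lam/2)) (b := lam/2) f x
    rw [show x + -(lam/2) = a by rw [ha_def]; ring, show x + lam/2 = b from hb_def.symm] at h
    exact h
  have hsplit : Int.fract '' Icc a b = Int.fract '' Ico a b ∪ {Int.fract b} := by
    rw [← Ico_union_right hab, image_union, image_singleton]
  have core : volume (g '' (Int.fract '' Icc a b)) = ENNReal.ofReal (∫ t in a..b, f t) := by
    by_cases ha0 : 0 ≤ a
    · by_cases hb1 : b ≤ 1
      · -- Case A
        rw [hsplit, fract_image_id ha0 hb1, image_union, image_singleton,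
          meas_union_singleton, vol_image_Ico g g' hint hac hm ha0 hab hb1]
        rw [hf_def, integral_f_eq g' ha0 hab hb1]
      · -- Case C : 1 < b
        push_neg at hb1
        have ha1 : a ≤ 1 := by rw [ha_def]; linarith
        have hba1 : b - 1 ≤ a := by linarith
        have h0b1 : 0 ≤ b - 1 := by linarith
        have hup : Ico a b = Ico a 1 ∪ Ico 1 b := (Ico_union_Ico_eq_Ico ha1 hb1.le).symm
        have him2 : Int.fract '' Ico 1 b = Ico 0 (b-1) := by
          have := fract_image_shift (c := 1) (d := b) le_rfl hb2
          norm_num at this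
          exact this
        rw [hsplit, hup, Set.image_union Int.fract, fract_image_id ha0 le_rfl, him2,
          Set.image_union g, image_singleton, meas_union_singleton,
          vol_two_piece g g' hint hac hm h0b1 hba1 ha1]
        have hrhs : ∫ t in a..b, f t = (∫ t in a..1, f t) + ∫ t in (1:ℝ)..b, f t :=
          (intervalIntegral.integral_add_adjacent_intervals
            (f_II g' hint a 1 ⟨ham1, by linarith⟩ ⟨by norm_num, by norm_num⟩)
            (f_II g' hint 1 b ⟨by norm_num, by norm_num⟩ ⟨by linarith, hb2⟩)).symm
        have h2 : ∫ t in (1:ℝ)..b, f t = ∫ t in (0:ℝ)..(b-1), f t := by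
          have := integral_f_shift g' 0 (b-1)
          rw [show (0:ℝ)+1 = 1 by norm_num, show b-1+1 = b by ring] at this
          rw [hf_def, this]
        rw [hrhs, h2, hf_def, integral_f_eq g' ha0 ha1 le_rfl,
          integral_f_eq g' le_rfl h0b1 (by linarith)]
    · -- Case B : a < 0
      push_neg at ha0
      have hb1 : b ≤ 1 := by linarith
      have hb1' : b < 1 := by linarith
      have h0b : 0 ≤ b := by rw [hb_def]; linarith
      have hba1 : b ≤ a + 1 := by linarith
      have ha11 : a + 1 ≤ 1 := by linarith
      have hup : Ico a b = Ico a 0 ∪ Ico 0 b := (Ico_union_Ico_eq_Ico ha0.le h0b).symm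
      have him1 : Int.fract '' Ico a 0 = Ico (a+1) 1 := by
        have := fract_image_neg (c := a) (d := 0) ham1 le_rfl
        norm_num at this
        exact this
      rw [hsplit, hup, Set.image_union Int.fract, him1, fract_image_id le_rfl hb1,
        Set.image_union g, image_singleton, meas_union_singleton,
        vol_two_piece g g' hint hac hm h0b hba1 ha11]
      have hrhs : ∫ t in a..b, f t = (∫ t in a..(0:ℝ), f t) + ∫ t in (0:ℝ)..b, f t :=
        (intervalIntegral.integral_add_adjacent_intervals
          (f_II g' hint a 0 ⟨ham1, by linarith⟩ ⟨by norm_num, by norm_num⟩)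
          (f_II g' hint 0 b ⟨by norm_num, by norm_num⟩ ⟨by linarith, hb2⟩)).symm
      have h2 : ∫ t in a..(0:ℝ), f t = ∫ t in (a+1)..(1:ℝ), f t := by
        have := integral_f_shift g' a 0
        rw [show (0:ℝ)+1 = 1 by norm_num] at this
        rw [hf_def, ← this]
      rw [hrhs, h2, hf_def, integral_f_eq g' (by linarith) ha11 le_rfl,
        integral_f_eq g' le_rfl h0b hb1]
  rw [hIrhs, core]
  rw [← ENNReal.ofReal_div_of_pos hl0]
  congr 1
  ring

end Aux

/-- if `g : [0,1] → ℝ` is absolutely continuous (i.e. it is the integral of an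
integrable a.e. derivative `g'`) and strictly monotone on `[0,1]`, then for every `x ∈ [0,1]`
and `λ ∈ (0,1]`,
`D_λ[g](x) = (1/λ) ∫_{-λ/2}^{λ/2} |g'((x+q) mod 1)| dq = E|g'((x + Q_λ) mod 1)|`
with `Q_λ ~ Unif[-λ/2, λ/2]`. -/
theorem statement3 (g g' : ℝ → ℝ)
    (hint : IntegrableOn g' (Set.Icc 0 1))
    (hac : ∀ x ∈ Set.Icc (0:ℝ) 1, g x = g 0 + ∫ t in (0:ℝ)..x, g' t)
    (hmono : StrictMonoOn g (Set.Icc 0 1) ∨ StrictAntiOn g (Set.Icc 0 1)) :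
    ∀ x ∈ Set.Icc (0:ℝ) 1, ∀ lam ∈ Set.Ioc (0:ℝ) 1,
      smoothD g lam x
        = ENNReal.ofReal ((1 / lam) * ∫ q in (-(lam/2))..(lam/2), |g' (Int.fract (x + q))|) := by
  rcases hmono with hm | hm
  · exact statement3_mono g g' hint hac hm
  · intro x hx lam hlam
    have hac' : ∀ y ∈ Set.Icc (0:ℝ) 1, (-g) y = (-g) 0 + ∫ t in (0:ℝ)..y, (-g') t := by
      intro y hy
      have hneg : ∫ t in (0:ℝ)..y, (-g') t = -∫ t in (0:ℝ)..y, g' t := by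
        simp [intervalIntegral.integral_neg]
      rw [Pi.neg_apply, Pi.neg_apply, hneg, hac y hy]
      ring
    have hm' : StrictMonoOn (-g) (Set.Icc 0 1) := by
      intro s hs t ht hst
      simp only [Pi.neg_apply]
      exact neg_lt_neg (hm hs ht hst)
    have h1 := statement3_mono (-g) (-g') hint.neg hac' hm' x hx lam hlam
    have e1 : smoothD (-g) lam x = smoothD g lam x := by
      unfold smoothD
      congr 1
      have himg : (-g) '' (Int.fract '' Set.Icc (x - lam/2) (x + lam/2))
          = -(g '' (Int.fract '' Set.Icc (x - lam/2) (x + lam/2))) := by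
        rw [show (-g : ℝ → ℝ) = (fun t => -(g t)) from rfl, ← Set.image_neg_eq_neg]
        conv_rhs => rw [← Set.image_comp]
        rfl
      rw [himg, Measure.measure_neg]
    rw [← e1, h1]
    congr 2
    apply intervalIntegral.integral_congr
    intro t _
    simp
end

section
/- Let g : [0,1] → ℝ be absolutely continuous on [0,1] with a.e. derivative g'. Then for every a > 0, the Lebesgue outer measure of the set {x ∈ [0,1] : D̄[g](x) > a} is at most 9·a^{-1}·∫₀¹ |g'(x)| dx. Equivalently, if X ~ Unif([0,1]), then P(D̄[g](X) > a) ≤ 9·a^{-1}·E|g'(X)|. -/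
open MeasureTheory Filter
open scoped ENNReal NNReal

/-- `D̄[g](x) := sup_{λ ∈ (0,1)} D_λ[g](x)`. -/
noncomputable def smoothDBar (g : ℝ → ℝ) (x : ℝ) : ℝ≥0∞ :=
  ⨆ lam ∈ Set.Ioo (0:ℝ) 1, smoothD g lam x

section Aux

private lemma fract_neg_piece {t : ℝ} (h0 : -1 ≤ t) (h1 : t < 0) : Int.fract t = t + 1 := by
  have h2 : Int.fract (t + 1) = t + 1 := Int.fract_eq_self.2 ⟨by linarith, by linarith⟩
  rw [← h2, show (1:ℝ) = ((1:ℤ):ℝ) by norm_num, Int.fract_add_intCast]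

private lemma fract_pos_piece {t : ℝ} (h0 : 1 ≤ t) (h1 : t < 2) : Int.fract t = t - 1 := by
  have h2 : Int.fract (t - 1) = t - 1 := Int.fract_eq_self.2 ⟨by linarith, by linarith⟩
  rw [← h2, show (1:ℝ) = ((1:ℤ):ℝ) by norm_num, Int.fract_sub_intCast]

private lemma lint_shift (f : ℝ → ℝ≥0∞) (hf : Measurable f) (c : ℝ) {B : Set ℝ}
    (hB : MeasurableSet B) :
    ∫⁻ s in B, f s = ∫⁻ t in (fun t : ℝ => t + c) ⁻¹' B, f (t + c) := by
  conv_lhs => rw [← (measurePreserving_add_right volume c).map_eq]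
  exact setLIntegral_map hB hf (measurable_add_const c)

private lemma lint_fract_piece {G : ℝ → ℝ} (hGmeas : Measurable G) (c : ℝ) {A B : Set ℝ}
    (hA : MeasurableSet A) (hB : MeasurableSet B)
    (hAB : (fun t : ℝ => t + c) ⁻¹' B = A)
    (hfr : ∀ t ∈ A, Int.fract t = t + c) :
    ∫⁻ t in A, ENNReal.ofReal |G (Int.fract t)| = ∫⁻ s in B, ENNReal.ofReal |G s| := by
  have hf : Measurable fun s : ℝ => ENNReal.ofReal |G s| := hGmeas.abs.ennreal_ofReal
  rw [setLIntegral_congr_fun_ae hA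
    (Filter.Eventually.of_forall fun t ht => by rw [hfr t ht])]
  rw [lint_shift _ hf c hB, hAB]

private lemma image_Icc_bound {g G : ℝ → ℝ} (hint : IntegrableOn G (Set.Icc 0 1))
    (hg : ∀ x ∈ Set.Icc (0:ℝ) 1, g x = g 0 + ∫ t in (0:ℝ)..x, G t)
    {u v : ℝ} (hsub : Set.Icc u v ⊆ Set.Icc 0 1) :
    volume (g '' Set.Icc u v) ≤ ∫⁻ t in Set.Icc u v, ENNReal.ofReal |G t| := by
  rcases lt_or_ge v u with huv | huv
  · simp [Set.Icc_eq_empty_of_lt huv]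
  have hcont : ContinuousOn g (Set.Icc 0 1) := by
    have h1 : ContinuousOn (fun y => g 0 + ∫ t in (0:ℝ)..y, G t) (Set.Icc 0 1) := by
      apply continuousOn_const.add
      have h2 := intervalIntegral.continuousOn_primitive_interval
        (a := 0) (b := 1) (μ := volume) (f := G) (by simpa [Set.uIcc_of_le zero_le_one] using hint)
      simpa [Set.uIcc_of_le zero_le_one] using h2
    exact h1.congr hg
  have hne : (Set.Icc u v).Nonempty := Set.nonempty_Icc.2 huv
  have hconts : ContinuousOn g (Set.Icc u v) := hcont.mono hsub
  obtain ⟨p, hp, hpmin⟩ := isCompact_Icc.exists_isMinOn hne hconts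
  obtain ⟨q, hq, hqmax⟩ := isCompact_Icc.exists_isMaxOn hne hconts
  have himg : g '' Set.Icc u v ⊆ Set.Icc (g p) (g q) := by
    rintro _ ⟨t, ht, rfl⟩; exact ⟨hpmin ht, hqmax ht⟩
  have huIcc : Set.uIcc p q ⊆ Set.Icc u v := Set.uIcc_subset_Icc hp hq
  have hII : IntervalIntegrable G volume p q :=
    (hint.mono_set (huIcc.trans hsub)).intervalIntegrable
  have hIp : IntervalIntegrable G volume 0 p :=
    (hint.mono_set (Set.uIcc_subset_Icc ⟨le_rfl, zero_le_one⟩ (hsub (huIcc Set.left_mem_uIcc)))).intervalIntegrable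
  have hIq : IntervalIntegrable G volume 0 q :=
    (hint.mono_set (Set.uIcc_subset_Icc ⟨le_rfl, zero_le_one⟩ (hsub (huIcc Set.right_mem_uIcc)))).intervalIntegrable
  have key : g q - g p = ∫ t in p..q, G t := by
    rw [hg q (hsub hq), hg p (hsub hp), add_sub_add_left_eq_sub]
    exact intervalIntegral.integral_interval_sub_left hIq hIp
  have habs : g q - g p ≤ ∫ t in Set.uIoc p q, |G t| := by
    rw [key]
    calc ∫ t in p..q, G t ≤ |∫ t in p..q, G t| := le_abs_self _
      _ ≤ ∫ t in Set.uIoc p q, |G t| := by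
          simpa [Real.norm_eq_abs] using
            intervalIntegral.norm_integral_le_integral_norm_uIoc (f := G) (a := p) (b := q) (μ := volume)
  have hintabs : IntegrableOn (fun t => |G t|) (Set.uIoc p q) :=
    ((hint.mono_set ((Set.uIoc_subset_uIcc).trans (huIcc.trans hsub)))).abs
  calc volume (g '' Set.Icc u v) ≤ volume (Set.Icc (g p) (g q)) := measure_mono himg
    _ = ENNReal.ofReal (g q - g p) := Real.volume_Icc
    _ ≤ ENNReal.ofReal (∫ t in Set.uIoc p q, |G t|) := ENNReal.ofReal_le_ofReal habs
    _ = ∫⁻ t in Set.uIoc p q, ENNReal.ofReal |G t| :=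
        ofReal_integral_eq_lintegral_ofReal hintabs
          (Filter.Eventually.of_forall fun t => abs_nonneg _)
    _ ≤ ∫⁻ t in Set.Icc u v, ENNReal.ofReal |G t| :=
        lintegral_mono_set ((Set.uIoc_subset_uIcc).trans huIcc)

private lemma smoothD_num_bound {g G : ℝ → ℝ} (hGmeas : Measurable G)
    (hint : IntegrableOn G (Set.Icc 0 1))
    (hg : ∀ x ∈ Set.Icc (0:ℝ) 1, g x = g 0 + ∫ t in (0:ℝ)..x, G t)
    {x lam : ℝ} (hx : x ∈ Set.Icc (0:ℝ) 1) (hlam : lam ∈ Set.Ioo (0:ℝ) 1) :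
    volume (g '' (Int.fract '' Set.Icc (x - lam / 2) (x + lam / 2)))
      ≤ ∫⁻ t in Set.Icc (x - lam / 2) (x + lam / 2), ENNReal.ofReal |G (Int.fract t)| := by
  obtain ⟨hx0, hx1⟩ := hx
  obtain ⟨hl0, hl1⟩ := hlam
  set u := x - lam / 2 with hu
  set v := x + lam / 2 with hv
  have huv : v = u + lam := by rw [hu, hv]; ring
  rcases lt_or_ge u 0 with hu0 | hu0
  · -- wrap at 0
    have hv1 : v < 1 := by rw [huv]; linarith
    have hv0 : 0 < v := by rw [hv]; linarith
    have hum : -1/2 ≤ u := by rw [hu]; linarith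
    have him : Int.fract '' Set.Icc u v ⊆ Set.Icc (u+1) 1 ∪ Set.Icc 0 v := by
      rintro _ ⟨t, ⟨ht1, ht2⟩, rfl⟩
      rcases lt_or_ge t 0 with ht | ht
      · exact Or.inl (by
          rw [fract_neg_piece (by linarith) ht]
          exact ⟨by linarith, by linarith⟩)
      · exact Or.inr (by
          rw [Int.fract_eq_self.2 ⟨ht, by linarith⟩]
          exact ⟨ht, ht2⟩)
    have hdisj : Disjoint (Set.Ico u 0) (Set.Icc (0:ℝ) v) := by
      apply Set.disjoint_left.2
      rintro t ⟨_, ht2⟩ ⟨ht3, _⟩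
      exact absurd (lt_of_le_of_lt ht3 ht2) (lt_irrefl 0)
    calc volume (g '' (Int.fract '' Set.Icc u v))
        ≤ volume (g '' Set.Icc (u+1) 1) + volume (g '' Set.Icc 0 v) := by
          refine (measure_mono ?_).trans (measure_union_le _ _)
          rw [← Set.image_union]; exact Set.image_mono him
      _ ≤ (∫⁻ t in Set.Icc (u+1) 1, ENNReal.ofReal |G t|)
            + ∫⁻ t in Set.Icc 0 v, ENNReal.ofReal |G t| := by
          refine add_le_add (image_Icc_bound hint hg ?_) (image_Icc_bound hint hg ?_)
          · exact Set.Icc_subset_Icc (by linarith) le_rfl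
          · exact Set.Icc_subset_Icc le_rfl (le_of_lt hv1)
      _ = (∫⁻ t in Set.Ico u 0, ENNReal.ofReal |G (Int.fract t)|)
            + ∫⁻ t in Set.Icc 0 v, ENNReal.ofReal |G (Int.fract t)| := by
          congr 1
          · rw [← setLIntegral_congr (Ico_ae_eq_Icc (a := u+1) (b := (1:ℝ)))]
            refine (lint_fract_piece hGmeas 1 measurableSet_Ico measurableSet_Ico ?_ ?_).symm
            · ext t
              simp only [Set.mem_preimage, Set.mem_Ico]
              constructor <;> (intro h; exact ⟨by linarith [h.1], by linarith [h.2]⟩)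
            · rintro t ⟨ht1, ht2⟩
              exact fract_neg_piece (by linarith) ht2
          · refine (setLIntegral_congr_fun_ae measurableSet_Icc
              (Filter.Eventually.of_forall ?_)).symm
            rintro t ⟨ht1, ht2⟩
            rw [Int.fract_eq_self.2 ⟨ht1, lt_of_le_of_lt ht2 hv1⟩]
      _ = ∫⁻ t in Set.Icc u v, ENNReal.ofReal |G (Int.fract t)| := by
          rw [← lintegral_union measurableSet_Icc hdisj,
            Set.Ico_union_Icc_eq_Icc (le_of_lt hu0) (le_of_lt hv0)]
  · rcases le_or_gt v 1 with hv1 | hv1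
    · -- interior case
      have him : Int.fract '' Set.Icc u v ⊆ Set.Icc u v ∪ {0} := by
        rintro _ ⟨t, ⟨ht1, ht2⟩, rfl⟩
        rcases lt_or_ge t 1 with ht | ht
        · exact Or.inl (by
            rw [Int.fract_eq_self.2 ⟨by linarith, ht⟩]; exact ⟨ht1, ht2⟩)
        · have : t = 1 := le_antisymm (ht2.trans hv1) ht
          exact Or.inr (by rw [this, Int.fract_one]; rfl)
      calc volume (g '' (Int.fract '' Set.Icc u v))
          ≤ volume (g '' Set.Icc u v) + volume ({g 0} : Set ℝ) := by
            refine (measure_mono ?_).trans (measure_union_le _ _)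
            refine (Set.image_mono him).trans ?_
            rw [Set.image_union, Set.image_singleton]
        _ = volume (g '' Set.Icc u v) := by rw [measure_singleton, add_zero]
        _ ≤ ∫⁻ t in Set.Icc u v, ENNReal.ofReal |G t| :=
            image_Icc_bound hint hg (Set.Icc_subset_Icc hu0 hv1)
        _ = ∫⁻ t in Set.Ico u v, ENNReal.ofReal |G t| :=
            (setLIntegral_congr Ico_ae_eq_Icc).symm
        _ = ∫⁻ t in Set.Ico u v, ENNReal.ofReal |G (Int.fract t)| := by
            refine (setLIntegral_congr_fun_ae measurableSet_Ico
              (Filter.Eventually.of_forall ?_)).symm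
            rintro t ⟨ht1, ht2⟩
            rw [Int.fract_eq_self.2 ⟨by linarith, lt_of_lt_of_le ht2 hv1⟩]
        _ = ∫⁻ t in Set.Icc u v, ENNReal.ofReal |G (Int.fract t)| :=
            setLIntegral_congr Ico_ae_eq_Icc
    · -- wrap at 1
      have hu1 : u ≤ 1 := by rw [hu]; linarith
      have hv2 : v < 2 := by rw [hv]; linarith
      have huv' : u ≤ v := by rw [huv]; linarith
      have him : Int.fract '' Set.Icc u v ⊆ Set.Icc u 1 ∪ Set.Icc 0 (v-1) := by
        rintro _ ⟨t, ⟨ht1, ht2⟩, rfl⟩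
        rcases lt_or_ge t 1 with ht | ht
        · exact Or.inl (by
            rw [Int.fract_eq_self.2 ⟨by linarith, ht⟩]
            exact ⟨ht1, le_of_lt ht⟩)
        · exact Or.inr (by
            rw [fract_pos_piece ht (lt_of_le_of_lt ht2 hv2)]
            exact ⟨by linarith, by linarith⟩)
      have hdisj : Disjoint (Set.Ico u 1) (Set.Icc (1:ℝ) v) := by
        apply Set.disjoint_left.2
        rintro t ⟨_, ht2⟩ ⟨ht3, _⟩
        exact absurd (lt_of_le_of_lt ht3 ht2) (lt_irrefl 1)
      calc volume (g '' (Int.fract '' Set.Icc u v))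
          ≤ volume (g '' Set.Icc u 1) + volume (g '' Set.Icc 0 (v-1)) := by
            refine (measure_mono ?_).trans (measure_union_le _ _)
            rw [← Set.image_union]; exact Set.image_mono him
        _ ≤ (∫⁻ t in Set.Icc u 1, ENNReal.ofReal |G t|)
              + ∫⁻ t in Set.Icc 0 (v-1), ENNReal.ofReal |G t| := by
            refine add_le_add (image_Icc_bound hint hg ?_) (image_Icc_bound hint hg ?_)
            · exact Set.Icc_subset_Icc hu0 le_rfl
            · exact Set.Icc_subset_Icc le_rfl (by linarith)
        _ = (∫⁻ t in Set.Ico u 1, ENNReal.ofReal |G (Int.fract t)|)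
              + ∫⁻ t in Set.Icc 1 v, ENNReal.ofReal |G (Int.fract t)| := by
            congr 1
            · rw [← setLIntegral_congr (Ico_ae_eq_Icc (a := u) (b := (1:ℝ)))]
              refine (setLIntegral_congr_fun_ae measurableSet_Ico
                (Filter.Eventually.of_forall ?_))
              rintro t ⟨ht1, ht2⟩
              rw [Int.fract_eq_self.2 ⟨by linarith, ht2⟩]
            · refine (lint_fract_piece hGmeas (-1) measurableSet_Icc measurableSet_Icc ?_ ?_).symm
              · ext t
                simp only [Set.mem_preimage, Set.mem_Icc]
                constructor <;> (intro h; exact ⟨by linarith [h.1], by linarith [h.2]⟩)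
              · rintro t ⟨ht1, ht2⟩
                rw [fract_pos_piece ht1 (lt_of_le_of_lt ht2 hv2)]; ring
        _ = ∫⁻ t in Set.Icc u v, ENNReal.ofReal |G (Int.fract t)| := by
            rw [← lintegral_union measurableSet_Icc hdisj,
              Set.Ico_union_Icc_eq_Icc hu1 (le_of_lt hv1)]

end Aux

/-- Hardy–Littlewood-type bound: if `g : [0,1] → ℝ` is absolutely continuous
(the integral of an integrable a.e. derivative `g'`), then for every `a > 0` the Lebesgue
outer measure of `{x ∈ [0,1] : D̄[g](x) > a}` is at most `9 a⁻¹ ∫₀¹ |g'|`; equivalently, for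
`X ~ Unif[0,1]`, `P(D̄[g](X) > a) ≤ 9 a⁻¹ E|g'(X)|`. -/
theorem statement4 (g g' : ℝ → ℝ)
    (hint : IntegrableOn g' (Set.Icc 0 1))
    (hac : ∀ x ∈ Set.Icc (0:ℝ) 1, g x = g 0 + ∫ t in (0:ℝ)..x, g' t)
    (a : ℝ) (ha : 0 < a) :
    volume {x ∈ Set.Icc (0:ℝ) 1 | ENNReal.ofReal a < smoothDBar g x}
      ≤ ENNReal.ofReal (9 / a * ∫ x in Set.Icc (0:ℝ) 1, |g' x|) := by
  classical
  set G : ℝ → ℝ := (hint.1).mk g' with hGdef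
  have hGsm : StronglyMeasurable G := hint.1.stronglyMeasurable_mk
  have hGmeas : Measurable G := hGsm.measurable
  have hGae : g' =ᵐ[volume.restrict (Set.Icc 0 1)] G := hint.1.ae_eq_mk
  have hGint : IntegrableOn G (Set.Icc 0 1) := hint.congr hGae
  have hg : ∀ x ∈ Set.Icc (0:ℝ) 1, g x = g 0 + ∫ t in (0:ℝ)..x, G t := by
    intro x hx
    rw [hac x hx]
    congr 1
    apply intervalIntegral.integral_congr_ae
    have h1 : Set.uIoc 0 x ⊆ Set.Icc 0 1 := by
      rw [Set.uIoc_of_le hx.1]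
      exact Set.Ioc_subset_Icc_self.trans (Set.Icc_subset_Icc le_rfl hx.2)
    exact (ae_restrict_iff' measurableSet_uIoc).1
      (ae_restrict_of_ae_restrict_of_subset h1 hGae)
  -- the RHS
  have ha0 : ENNReal.ofReal a ≠ 0 := (ENNReal.ofReal_pos.2 ha).ne'
  have hatop : ENNReal.ofReal a ≠ ⊤ := ENNReal.ofReal_ne_top
  set L : ℝ≥0∞ := ∫⁻ t in Set.Icc (0:ℝ) 1, ENNReal.ofReal |G t| with hLdef
  have hIeq : ∫ x in Set.Icc (0:ℝ) 1, |g' x| = ∫ x in Set.Icc (0:ℝ) 1, |G x| :=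
    integral_congr_ae (hGae.mono fun x hx => by simp only [hx])
  have hLle : ENNReal.ofReal (∫ x in Set.Icc (0:ℝ) 1, |G x|) = L :=
    ofReal_integral_eq_lintegral_ofReal hGint.abs
      (Filter.Eventually.of_forall fun x => abs_nonneg _)
  have hRHS : ENNReal.ofReal (9 / a * ∫ x in Set.Icc (0:ℝ) 1, |g' x|)
      = 9 * (ENNReal.ofReal a)⁻¹ * L := by
    rw [hIeq, ENNReal.ofReal_mul (by positivity), hLle,
      ENNReal.ofReal_div_of_pos ha]
    norm_num [div_eq_mul_inv]
  -- the periodized density measure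
  set h : ℝ → ℝ≥0∞ := fun t => ENNReal.ofReal |G (Int.fract t)| with hhdef
  have hhm : Measurable h := ((hGmeas.comp measurable_fract).abs).ennreal_ofReal
  set ν : Measure ℝ := volume.withDensity h with hνdef
  have hν : ∀ s : Set ℝ, MeasurableSet s → ν s = ∫⁻ t in s, h t :=
    fun s hs => withDensity_apply h hs
  -- total mass bound
  have hν2L : ν (Set.Icc (-(1:ℝ)/2) (3/2)) ≤ 2 * L := by
    rw [hν _ measurableSet_Icc, ← setLIntegral_congr (Ico_ae_eq_Icc (a := -(1:ℝ)/2) (b := (3:ℝ)/2))]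
    have hsplit : Set.Ico (-(1:ℝ)/2) (3/2)
        = Set.Ico (-(1:ℝ)/2) 0 ∪ (Set.Ico (0:ℝ) 1 ∪ Set.Ico (1:ℝ) (3/2)) := by
      rw [Set.Ico_union_Ico_eq_Ico (by norm_num) (by norm_num),
        Set.Ico_union_Ico_eq_Ico (by norm_num) (by norm_num)]
    have hd1 : Disjoint (Set.Ico (-(1:ℝ)/2) 0) (Set.Ico (0:ℝ) 1 ∪ Set.Ico (1:ℝ) (3/2)) := by
      apply Set.disjoint_left.2
      rintro t ⟨_, ht2⟩ (⟨ht3, _⟩ | ⟨ht3, _⟩) <;> linarith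
    have hd2 : Disjoint (Set.Ico (0:ℝ) 1) (Set.Ico (1:ℝ) (3/2)) := by
      apply Set.disjoint_left.2
      rintro t ⟨_, ht2⟩ ⟨ht3, _⟩; linarith
    rw [hsplit, lintegral_union (measurableSet_Ico.union measurableSet_Ico) hd1,
      lintegral_union measurableSet_Ico hd2]
    have p1 : ∫⁻ t in Set.Ico (-(1:ℝ)/2) 0, h t
        = ∫⁻ s in Set.Ico (1/2:ℝ) 1, ENNReal.ofReal |G s| := by
      refine lint_fract_piece hGmeas 1 measurableSet_Ico measurableSet_Ico ?_ ?_
      · ext t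
        simp only [Set.mem_preimage, Set.mem_Ico]
        constructor <;> (intro h; exact ⟨by linarith [h.1], by linarith [h.2]⟩)
      · rintro t ⟨ht1, ht2⟩
        exact fract_neg_piece (by linarith) ht2
    have p2 : ∫⁻ t in Set.Ico (0:ℝ) 1, h t
        = ∫⁻ s in Set.Ico (0:ℝ) 1, ENNReal.ofReal |G s| := by
      refine setLIntegral_congr_fun_ae measurableSet_Ico (Filter.Eventually.of_forall ?_)
      rintro t ⟨ht1, ht2⟩
      simp only [hhdef]
      rw [Int.fract_eq_self.2 ⟨ht1, ht2⟩]
    have p3 : ∫⁻ t in Set.Ico (1:ℝ) (3/2), h t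
        = ∫⁻ s in Set.Ico (0:ℝ) (1/2), ENNReal.ofReal |G s| := by
      refine lint_fract_piece hGmeas (-1) measurableSet_Ico measurableSet_Ico ?_ ?_
      · ext t
        simp only [Set.mem_preimage, Set.mem_Ico]
        constructor <;> (intro h; exact ⟨by linarith [h.1], by linarith [h.2]⟩)
      · rintro t ⟨ht1, ht2⟩
        rw [fract_pos_piece ht1 (by linarith)]; ring
    rw [p1, p2, p3]
    have hdisj3 : Disjoint (Set.Ico (0:ℝ) (1/2)) (Set.Ico (1/2:ℝ) 1) := by
      apply Set.disjoint_left.2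
      rintro t ⟨_, ht2⟩ ⟨ht3, _⟩; linarith
    have e2 : (∫⁻ s in Set.Ico (0:ℝ) (1/2), ENNReal.ofReal |G s|)
          + ∫⁻ s in Set.Ico (1/2:ℝ) 1, ENNReal.ofReal |G s|
        = ∫⁻ s in Set.Ico (0:ℝ) 1, ENNReal.ofReal |G s| := by
      rw [← lintegral_union measurableSet_Ico hdisj3,
        Set.Ico_union_Ico_eq_Ico (by norm_num) (by norm_num)]
    have hq2 : ∫⁻ s in Set.Ico (0:ℝ) 1, ENNReal.ofReal |G s| ≤ L :=
      lintegral_mono_set Set.Ico_subset_Icc_self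
    have hq1 : (∫⁻ s in Set.Ico (1/2:ℝ) 1, ENNReal.ofReal |G s|)
          + ∫⁻ s in Set.Ico (0:ℝ) (1/2), ENNReal.ofReal |G s| ≤ L := by
      rw [add_comm, e2]; exact hq2
    have hre : (∫⁻ s in Set.Ico (1/2:ℝ) 1, ENNReal.ofReal |G s|)
          + ((∫⁻ s in Set.Ico (0:ℝ) 1, ENNReal.ofReal |G s|)
            + ∫⁻ s in Set.Ico (0:ℝ) (1/2), ENNReal.ofReal |G s|)
        = ((∫⁻ s in Set.Ico (1/2:ℝ) 1, ENNReal.ofReal |G s|)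
            + ∫⁻ s in Set.Ico (0:ℝ) (1/2), ENNReal.ofReal |G s|)
          + ∫⁻ s in Set.Ico (0:ℝ) 1, ENNReal.ofReal |G s| := by ring
    rw [hre]
    calc _ ≤ L + L := add_le_add hq1 hq2
      _ = 2 * L := (two_mul L).symm
  -- pointwise selection of radii
  set S : Set ℝ := {x ∈ Set.Icc (0:ℝ) 1 | ENNReal.ofReal a < smoothDBar g x} with hSdef
  have key : ∀ x : S, ∃ r : ℝ, 0 < r ∧ r ≤ 1/2 ∧
      ENNReal.ofReal a * ENNReal.ofReal (2*r) ≤ ν (Metric.closedBall (x:ℝ) r) := by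
    rintro ⟨x, hx, hlt⟩
    simp only [smoothDBar, lt_iSup_iff] at hlt
    obtain ⟨lam, hlam, hsd⟩ := hlt
    refine ⟨lam/2, by linarith [hlam.1], by linarith [hlam.2], ?_⟩
    have hnum := smoothD_num_bound hGmeas hGint hg hx hlam
    have hb : smoothD g lam x ≤ ν (Set.Icc (x - lam/2) (x + lam/2)) / ENNReal.ofReal lam := by
      rw [smoothD, hν _ measurableSet_Icc]
      exact ENNReal.div_le_div_right hnum _
    have hlt2 : ENNReal.ofReal a
        < ν (Set.Icc (x - lam/2) (x + lam/2)) / ENNReal.ofReal lam := lt_of_lt_of_le hsd hb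
    rw [ENNReal.lt_div_iff_mul_lt (Or.inl (ENNReal.ofReal_pos.2 hlam.1).ne')
      (Or.inl ENNReal.ofReal_ne_top)] at hlt2
    rw [Real.closedBall_eq_Icc, show 2 * (lam/2) = lam by ring]
    exact le_of_lt hlt2
  choose r hr0 hrR hrν using key
  -- Vitali covering
  obtain ⟨U, -, hUdisj, hUcover⟩ :=
    Vitali.exists_disjoint_subfamily_covering_enlargement
      (fun b : S => Metric.closedBall (b:ℝ) (r b)) Set.univ r 2 one_lt_two
      (fun b _ => (hr0 b).le) (1/2) (fun b _ => hrR b)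
      (fun b _ => ⟨(b:ℝ), Metric.mem_closedBall_self (hr0 b).le⟩)
  have hUcount : U.Countable := by
    refine hUdisj.countable_of_nonempty_interior fun b _ => ?_
    rw [interior_closedBall _ (hr0 b).ne']
    exact ⟨(b:ℝ), Metric.mem_ball_self (hr0 b)⟩
  have hcover : S ⊆ ⋃ b ∈ U, Metric.closedBall ((b:S):ℝ) (3 * r b) := by
    intro x hx
    obtain ⟨b, hbU, hne, hle⟩ := hUcover ⟨x, hx⟩ (Set.mem_univ _)
    refine Set.mem_biUnion hbU ?_
    obtain ⟨y, hy1, hy2⟩ := hne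
    have hd : dist x (b:ℝ) ≤ r ⟨x, hx⟩ + r b := by
      calc dist x (b:ℝ) ≤ dist x y + dist y (b:ℝ) := dist_triangle _ _ _
        _ ≤ r ⟨x, hx⟩ + r b := add_le_add (by
            rw [dist_comm]; exact Metric.mem_closedBall.1 hy1) (Metric.mem_closedBall.1 hy2)
    exact Metric.mem_closedBall.2 (by linarith [hr0 b])
  have hsum : ∀ b : U, volume (Metric.closedBall ((b:S):ℝ) (3 * r b))
      ≤ 3 * ((ENNReal.ofReal a)⁻¹ * ν (Metric.closedBall ((b:S):ℝ) (r b))) := by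
    intro b
    rw [Real.volume_closedBall]
    have h1 : ENNReal.ofReal (2 * (3 * r (b:S))) = 3 * ENNReal.ofReal (2 * r (b:S)) := by
      rw [show 2 * (3 * r (b:S)) = 3 * (2 * r (b:S)) by ring,
        ENNReal.ofReal_mul (by norm_num)]
      norm_num
    rw [h1]
    refine mul_le_mul_right ?_ 3
    have h2 := mul_le_mul_right (hrν (b:S)) (ENNReal.ofReal a)⁻¹
    rwa [← mul_assoc, ENNReal.inv_mul_cancel ha0 hatop, one_mul] at h2
  have hball_sub : ∀ b : U, Metric.closedBall ((b:S):ℝ) (r b) ⊆ Set.Icc (-(1:ℝ)/2) (3/2) := by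
    intro b
    rw [Real.closedBall_eq_Icc]
    have hb1 := ((b:S).2.1 : ((b:S):ℝ) ∈ Set.Icc (0:ℝ) 1)
    exact Set.Icc_subset_Icc (by linarith [hb1.1, hrR (b:S)]) (by linarith [hb1.2, hrR (b:S)])
  calc volume S
      ≤ volume (⋃ b ∈ U, Metric.closedBall ((b:S):ℝ) (3 * r b)) := measure_mono hcover
    _ ≤ ∑' b : U, volume (Metric.closedBall ((b:S):ℝ) (3 * r (b:S))) :=
        measure_biUnion_le volume hUcount _
    _ ≤ ∑' b : U, 3 * ((ENNReal.ofReal a)⁻¹ * ν (Metric.closedBall ((b:S):ℝ) (r (b:S)))) :=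
        ENNReal.tsum_le_tsum hsum
    _ = 3 * ((ENNReal.ofReal a)⁻¹ * ∑' b : U, ν (Metric.closedBall ((b:S):ℝ) (r (b:S)))) := by
        rw [ENNReal.tsum_mul_left, ENNReal.tsum_mul_left]
    _ = 3 * ((ENNReal.ofReal a)⁻¹ * ν (⋃ b ∈ U, Metric.closedBall ((b:S):ℝ) (r b))) := by
        rw [measure_biUnion hUcount hUdisj fun b _ => measurableSet_closedBall]
    _ ≤ 3 * ((ENNReal.ofReal a)⁻¹ * (2 * L)) := by
        refine mul_le_mul_right (mul_le_mul_right ?_ _) _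
        refine le_trans (measure_mono ?_) hν2L
        exact Set.iUnion₂_subset fun b hb => hball_sub ⟨b, hb⟩
    _ ≤ ENNReal.ofReal (9 / a * ∫ x in Set.Icc (0:ℝ) 1, |g' x|) := by
        rw [hRHS]
        calc 3 * ((ENNReal.ofReal a)⁻¹ * (2 * L)) = 6 * (ENNReal.ofReal a)⁻¹ * L := by ring
          _ ≤ 9 * (ENNReal.ofReal a)⁻¹ * L := by
              refine mul_le_mul_left (mul_le_mul_left (by norm_num) _) _
end

section
/- Let Θ and Y be real random variables on a probability space, and let κ be a regular conditional distribution of Θ given Y. Define the conditional c.d.f. F(θ|y) := κ(y)((−∞,θ]) and its generalized inverse G(v|y) := inf{θ : F(θ|y) > v}. Let V be uniformly distributed on [0,1] and independent of Y. Then the pair (G(V|Y), Y) has the same joint distribution as (Θ, Y). -/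
open MeasureTheory ProbabilityTheory Set Filter
open scoped ProbabilityTheory Topology

namespace Statement7Aux

/-- Clamp into `(0,1)`. -/
noncomputable def c (v : ℝ) : ℝ := if v ∈ Set.Ioo (0:ℝ) 1 then v else 1/2

lemma c_mem (v : ℝ) : c v ∈ Set.Ioo (0:ℝ) 1 := by
  unfold c; split
  · assumption
  · norm_num

lemma c_eq {v : ℝ} (hv : v ∈ Set.Ioo (0:ℝ) 1) : c v = v := if_pos hv

lemma measurable_c : Measurable c :=
  Measurable.ite measurableSet_Ioo measurable_id measurable_const

variable {ν : Measure ℝ} [IsProbabilityMeasure ν]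

lemma nonempty_set {v : ℝ} (hv : v < 1) : {θ : ℝ | v < cdf ν θ}.Nonempty :=
  ((tendsto_cdf_atTop ν).eventually (eventually_gt_nhds hv)).exists

lemma bddBelow_set {v : ℝ} (hv : 0 < v) : BddBelow {θ : ℝ | v < cdf ν θ} := by
  obtain ⟨b, hb⟩ := eventually_atBot.mp
    ((tendsto_cdf_atBot ν).eventually (eventually_lt_nhds hv))
  refine ⟨b, fun θ hθ => ?_⟩
  by_contra hc
  push_neg at hc
  exact absurd hθ (not_lt.mpr (hb θ hc.le).le)

lemma le_iff {v : ℝ} (hv : v ∈ Set.Ioo (0:ℝ) 1) (t : ℝ) :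
    sInf {θ : ℝ | v < cdf ν θ} ≤ t ↔ ∀ q : ℚ, t < (q:ℝ) → v < cdf ν q := by
  constructor
  · intro h q hq
    obtain ⟨θ, hθ, hθq⟩ := exists_lt_of_csInf_lt (nonempty_set hv.2) (lt_of_le_of_lt h hq)
    exact lt_of_lt_of_le hθ (monotone_cdf ν hθq.le)
  · intro h
    by_contra hc
    push_neg at hc
    obtain ⟨q, hq1, hq2⟩ := exists_rat_btwn hc
    exact absurd (csInf_le (bddBelow_set hv.1) (h q hq1)) (not_le.mpr hq2)

lemma le_cdf {v : ℝ} (hv : v ∈ Set.Ioo (0:ℝ) 1) {t : ℝ}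
    (h : sInf {θ : ℝ | v < cdf ν θ} ≤ t) : v ≤ cdf ν t := by
  have h' : ∀ x ∈ Ioi t, v ≤ cdf ν x := by
    intro x hx
    obtain ⟨q, hq1, hq2⟩ := exists_rat_btwn (show t < x from hx)
    exact ((le_iff hv t).mp h q hq1).le.trans (monotone_cdf ν hq2.le)
  have ht : Tendsto (cdf ν) (𝓝[>] t) (𝓝 (cdf ν t)) :=
    ((cdf ν).right_continuous t).tendsto.mono_left (nhdsWithin_mono t Ioi_subset_Ici_self)
  exact ge_of_tendsto ht (eventually_nhdsWithin_of_forall h')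

instance : IsProbabilityMeasure (volume.restrict (Set.Icc (0:ℝ) 1)) :=
  ⟨by simp [Real.volume_Icc]⟩

/-- Inverse transform sampling for a fixed probability measure on `ℝ`. -/
lemma map_restrict (ν : Measure ℝ) [IsProbabilityMeasure ν]
    (hm : Measurable fun v : ℝ => sInf {θ : ℝ | c v < cdf ν θ}) :
    (volume.restrict (Set.Icc (0:ℝ) 1)).map (fun v => sInf {θ : ℝ | c v < cdf ν θ}) = ν := by
  haveI : IsProbabilityMeasure
      ((volume.restrict (Set.Icc (0:ℝ) 1)).map (fun v => sInf {θ : ℝ | c v < cdf ν θ})) :=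
    Measure.isProbabilityMeasure_map hm.aemeasurable
  refine Measure.ext_of_Iic _ _ (fun t => ?_)
  rw [Measure.map_apply hm measurableSet_Iic, ← ofReal_cdf ν t]
  set a := cdf ν t with ha_def
  have ha0 : 0 ≤ a := cdf_nonneg ν t
  have ha1 : a ≤ 1 := cdf_le_one ν t
  set S := (fun v : ℝ => sInf {θ : ℝ | c v < cdf ν θ}) ⁻¹' Iic t with hS_def
  have hSm : MeasurableSet S := hm measurableSet_Iic
  have hub : volume.restrict (Set.Icc (0:ℝ) 1) S ≤ ENNReal.ofReal a := by
    rw [Measure.restrict_apply hSm]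
    calc volume (S ∩ Icc 0 1) ≤ volume (Ioc 0 a ∪ ({0, 1} : Set ℝ)) := by
          refine measure_mono (fun v hv => ?_)
          by_cases hv01 : v ∈ Set.Ioo (0:ℝ) 1
          · have hle := hv.1
            rw [hS_def, mem_preimage, mem_Iic, c_eq hv01] at hle
            exact Or.inl ⟨hv01.1, le_cdf hv01 hle⟩
          · right
            rcases eq_or_lt_of_le hv.2.1 with h0 | h0
            · exact Or.inl h0.symm
            rcases eq_or_lt_of_le hv.2.2 with h1 | h1
            · exact Or.inr h1
            exact absurd ⟨h0, h1⟩ hv01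
      _ ≤ volume (Ioc (0:ℝ) a) + volume ({0, 1} : Set ℝ) := measure_union_le _ _
      _ = ENNReal.ofReal a := by
          have h01 : volume ({0, 1} : Set ℝ) = 0 :=
            Set.Countable.measure_zero
              ((Set.countable_singleton (1:ℝ)).insert 0) volume
          rw [h01, add_zero, Real.volume_Ioc, sub_zero]
  have hlb : ENNReal.ofReal a ≤ volume.restrict (Set.Icc (0:ℝ) 1) S := by
    rw [Measure.restrict_apply hSm]
    have hvol : ENNReal.ofReal a = volume (Ioo (0:ℝ) a) := by
      rw [Real.volume_Ioo, sub_zero]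
    rw [hvol]
    refine measure_mono (fun v hv => ?_)
    have hv01 : v ∈ Set.Ioo (0:ℝ) 1 := ⟨hv.1, lt_of_lt_of_le hv.2 ha1⟩
    refine ⟨?_, hv01.1.le, hv01.2.le⟩
    show sInf {θ : ℝ | c v < cdf ν θ} ≤ t
    rw [c_eq hv01]
    exact csInf_le (bddBelow_set hv.1) hv.2
  exact le_antisymm hub hlb

end Statement7Aux

open Statement7Aux

/-- let `κ` be a regular conditional distribution of `Θ` given `Y` (i.e. a Markov
kernel disintegrating the joint law: `Law(Y,Θ) = Law(Y) ⊗ₘ κ`), let `F(θ|y) := κ(y)((-∞,θ])`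
and `G(v|y) := inf{θ : F(θ|y) > v}`. If `V ~ Unif[0,1]` is independent of `Y`, then
`(G(V|Y), Y)` has the same joint law as `(Θ, Y)`. -/
theorem statement7 {Ω : Type*} [MeasurableSpace Ω] (P : Measure Ω) [IsProbabilityMeasure P]
    (Θ Y V : Ω → ℝ) (hΘ : Measurable Θ) (hY : Measurable Y) (hV : Measurable V)
    (κ : Kernel ℝ ℝ) [IsMarkovKernel κ]
    (hκ : (P.map Y) ⊗ₘ κ = P.map (fun ω => (Y ω, Θ ω)))
    (hVunif : P.map V = volume.restrict (Set.Icc 0 1))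
    (hVY : IndepFun V Y P) :
    P.map (fun ω => (sInf {θ : ℝ | V ω < ((κ (Y ω)) (Set.Iic θ)).toReal}, Y ω))
      = P.map (fun ω => (Θ ω, Y ω)) := by
  set g : ℝ × ℝ → ℝ := fun p => sInf {θ : ℝ | c p.1 < cdf (κ p.2) θ} with hg_def
  -- joint measurability of `g`
  have hFq : ∀ q : ℚ, Measurable fun p : ℝ × ℝ => cdf (κ p.2) (q:ℝ) := by
    intro q
    have h : (fun p : ℝ × ℝ => cdf (κ p.2) (q:ℝ))
        = fun p => (κ p.2 (Set.Iic (q:ℝ))).toReal := by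
      ext p; rw [cdf_eq_real, measureReal_def]
    rw [h]
    exact ((κ.measurable_coe measurableSet_Iic).comp measurable_snd).ennreal_toReal
  have hg : Measurable g := by
    apply measurable_of_Iic
    intro t
    have hset : g ⁻¹' Iic t
        = ⋂ (q : ℚ) (_ : t < (q:ℝ)), {p : ℝ × ℝ | c p.1 < cdf (κ p.2) q} := by
      ext p
      simp only [mem_preimage, mem_Iic, mem_iInter, mem_setOf_eq]
      exact le_iff (c_mem p.1) t
    rw [hset]
    exact MeasurableSet.iInter fun q => MeasurableSet.iInter fun _ =>
      measurableSet_lt (measurable_c.comp measurable_fst) (hFq q)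
  have hgy : ∀ y : ℝ, Measurable fun v => g (v, y) := fun y =>
    hg.comp (measurable_id.prodMk measurable_const)
  -- a.e. replace the original function by `g`
  have hnull : P {ω | V ω ∉ Set.Ioo (0:ℝ) 1} = 0 := by
    have he : {ω | V ω ∉ Set.Ioo (0:ℝ) 1} = V ⁻¹' (Set.Ioo (0:ℝ) 1)ᶜ := rfl
    rw [he, ← Measure.map_apply hV measurableSet_Ioo.compl, hVunif,
      Measure.restrict_apply measurableSet_Ioo.compl]
    refine measure_mono_null (fun x hx => ?_) (Set.Countable.measure_zero
      ((Set.countable_singleton (1:ℝ)).insert 0) volume)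
    rcases eq_or_lt_of_le hx.2.1 with h0 | h0
    · exact Or.inl h0.symm
    rcases eq_or_lt_of_le hx.2.2 with h1 | h1
    · exact Or.inr h1
    exact absurd ⟨h0, h1⟩ hx.1
  have hae : (fun ω => (sInf {θ : ℝ | V ω < ((κ (Y ω)) (Set.Iic θ)).toReal}, Y ω))
      =ᵐ[P] fun ω => (g (V ω, Y ω), Y ω) := by
    rw [Filter.EventuallyEq, ae_iff]
    refine measure_mono_null (fun ω hω => ?_) hnull
    by_contra hmem
    rw [Set.mem_setOf_eq, not_not] at hmem
    apply hω
    have h2 : {θ : ℝ | V ω < ((κ (Y ω)) (Set.Iic θ)).toReal}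
        = {θ : ℝ | c (V ω) < cdf (κ (Y ω)) θ} := by
      rw [c_eq hmem]
      ext θ
      simp only [mem_setOf_eq, cdf_eq_real, measureReal_def]
    simp only [hg_def, h2]
  rw [Measure.map_congr hae]
  have hcomp : (fun ω => (g (V ω, Y ω), Y ω))
      = (fun p : ℝ × ℝ => (g p, p.2)) ∘ (fun ω => (V ω, Y ω)) := rfl
  rw [hcomp, ← Measure.map_map (hg.prodMk measurable_snd) (hV.prodMk hY),
    (indepFun_iff_map_prod_eq_prod_map_map hV.aemeasurable hY.aemeasurable).mp hVY, hVunif]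
  have hswap : P.map (fun ω => (Θ ω, Y ω)) = (P.map Y ⊗ₘ κ).map Prod.swap := by
    rw [hκ, Measure.map_map measurable_swap (hY.prodMk hΘ)]
    rfl
  rw [hswap]
  -- now compare the two measures on rectangles
  haveI : IsProbabilityMeasure (P.map Y) := Measure.isProbabilityMeasure_map hY.aemeasurable
  haveI hP1 : IsProbabilityMeasure
      (((volume.restrict (Set.Icc (0:ℝ) 1)).prod (P.map Y)).map fun p : ℝ × ℝ => (g p, p.2)) :=
    Measure.isProbabilityMeasure_map (hg.prodMk measurable_snd).aemeasurable
  haveI hP2 : IsProbabilityMeasure ((P.map Y ⊗ₘ κ).map Prod.swap) :=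
    Measure.isProbabilityMeasure_map measurable_swap.aemeasurable
  refine ext_of_generate_finite _ generateFrom_prod.symm isPiSystem_prod
    (fun s hs => ?_) (by rw [measure_univ, measure_univ])
  obtain ⟨A, hA, B, hB, rfl⟩ := hs
  rw [Set.mem_setOf_eq] at hA hB
  rw [Measure.map_apply (hg.prodMk measurable_snd) (hA.prod hB),
    Measure.prod_apply_symm ((hg.prodMk measurable_snd) (hA.prod hB)),
    Measure.map_apply measurable_swap (hA.prod hB), Set.preimage_swap_prod,
    Measure.compProd_apply_prod hB hA]
  have hint : ∀ y : ℝ, (volume.restrict (Set.Icc (0:ℝ) 1))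
      ((fun v => (v, y)) ⁻¹' ((fun p : ℝ × ℝ => (g p, p.2)) ⁻¹' A ×ˢ B))
      = B.indicator (fun y => κ y A) y := by
    intro y
    by_cases hy : y ∈ B
    · have hpre : (fun v : ℝ => (v, y)) ⁻¹' ((fun p : ℝ × ℝ => (g p, p.2)) ⁻¹' A ×ˢ B)
          = (fun v => g (v, y)) ⁻¹' A := by
        ext v
        simp [hy]
      rw [hpre, Set.indicator_of_mem hy,
        ← Measure.map_apply (hgy y) hA, map_restrict (κ y) (hgy y)]
    · have hpre : (fun v : ℝ => (v, y)) ⁻¹' ((fun p : ℝ × ℝ => (g p, p.2)) ⁻¹' A ×ˢ B)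
          = ∅ := by
        ext v
        simp [hy]
      rw [hpre, Set.indicator_of_notMem hy, measure_empty]
  rw [lintegral_congr hint, lintegral_indicator hB]
end

section
/- Let f : [0,1] → [0,∞) be measurable with ∫₀¹ f = 1 and f > 0 Lebesgue-a.e. Let F(θ) := ∫₀^θ f for θ ∈ [0,1], and let G : [0,1] → [0,1] be its inverse, G(v) := inf{θ ∈ [0,1] : F(θ) > v} for v ∈ [0,1) and G(1) := 1. Then for Lebesgue-a.e. v ∈ (0,1): G is differentiable at v with G'(v) = 1/f(G(v)), and lim_{λ→0⁺} D_λ[G](v) = 1/f(G(v)). -/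
open MeasureTheory Filter
open Set
open scoped ENNReal NNReal

variable {f F : ℝ → ℝ}

lemma s8_ii (hfi : IntegrableOn f (Set.Icc 0 1)) {a b : ℝ} (ha : 0 ≤ a) (hab : a ≤ b)
    (hb : b ≤ 1) : IntervalIntegrable f volume a b := by
  rw [intervalIntegrable_iff_integrableOn_Ioc_of_le hab]
  exact hfi.mono_set (fun x hx => ⟨le_trans ha hx.1.le, le_trans hx.2 hb⟩)

lemma s8_F_sub (hF : ∀ θ, F θ = ∫ t in (0:ℝ)..θ, f t) (hfi : IntegrableOn f (Set.Icc 0 1))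
    {a b : ℝ} (ha : 0 ≤ a) (hab : a ≤ b) (hb : b ≤ 1) :
    F b - F a = ∫ t in a..b, f t := by
  rw [hF, hF]
  exact intervalIntegral.integral_interval_sub_left
    (s8_ii hfi le_rfl (le_trans ha hab) hb)
    (s8_ii hfi le_rfl ha (le_trans hab hb))

lemma s8_F0 (hF : ∀ θ, F θ = ∫ t in (0:ℝ)..θ, f t) : F 0 = 0 := by
  rw [hF]; simp

lemma s8_F1 (hF : ∀ θ, F θ = ∫ t in (0:ℝ)..θ, f t)
    (hf1 : ∫ x in Set.Icc (0:ℝ) 1, f x = 1) : F 1 = 1 := by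
  rw [hF, intervalIntegral.integral_of_le zero_le_one, ← integral_Icc_eq_integral_Ioc, hf1]

lemma s8_F_contOn (hF : ∀ θ, F θ = ∫ t in (0:ℝ)..θ, f t)
    (hfi : IntegrableOn f (Set.Icc 0 1)) : ContinuousOn F (Set.Icc 0 1) := by
  have h01 : Set.Icc (0:ℝ) 1 = Set.uIcc 0 1 := (uIcc_of_le zero_le_one).symm
  rw [h01]
  have h := intervalIntegral.continuousOn_primitive_interval
    (μ := volume) (a := (0:ℝ)) (b := 1) (by rwa [← h01])
  exact h.congr (fun x _ => hF x)

lemma s8_F_strictMonoOn (hF : ∀ θ, F θ = ∫ t in (0:ℝ)..θ, f t) (hf0 : ∀ x, 0 ≤ f x)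
    (hfi : IntegrableOn f (Set.Icc 0 1))
    (hfpos : ∀ᵐ x ∂(volume.restrict (Set.Icc (0:ℝ) 1)), 0 < f x) :
    StrictMonoOn F (Set.Icc 0 1) := by
  intro a ha b hb hab
  have hsub : Set.Ioc a b ⊆ Set.Icc 0 1 := fun x hx => ⟨le_trans ha.1 hx.1.le, le_trans hx.2 hb.2⟩
  have key : 0 < ∫ t in a..b, f t := by
    rw [intervalIntegral.integral_of_le hab.le]
    have hia : IntegrableOn f (Set.Ioc a b) := hfi.mono_set hsub
    rw [setIntegral_pos_iff_support_of_nonneg_ae (Eventually.of_forall (fun x => hf0 x)) hia]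
    have hpos2 : ∀ᵐ x ∂(volume.restrict (Set.Ioc a b)), 0 < f x :=
      ae_restrict_of_ae_restrict_of_subset hsub hfpos
    have hzero : volume.restrict (Set.Ioc a b) {x | ¬ 0 < f x} = 0 := by
      rw [← ae_iff.symm] at hpos2; exact ae_iff.1 hpos2
    have hdiff : volume.restrict (Set.Ioc a b) (Set.Ioc a b \ Function.support f) = 0 := by
      refine measure_mono_null (fun x hx => ?_) hzero
      simp only [Set.mem_setOf_eq]
      intro hfx
      exact hx.2 (ne_of_gt hfx)
    calc (0:ℝ≥0∞) < volume (Set.Ioc a b) := by simp [hab]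
    _ = volume.restrict (Set.Ioc a b) (Set.Ioc a b) := (Measure.restrict_apply_self _ _).symm
    _ ≤ volume.restrict (Set.Ioc a b) (Set.Ioc a b ∩ Function.support f)
        + volume.restrict (Set.Ioc a b) (Set.Ioc a b \ Function.support f) :=
      measure_le_inter_add_diff _ _ _
    _ = volume.restrict (Set.Ioc a b) (Set.Ioc a b ∩ Function.support f) := by rw [hdiff, add_zero]
    _ ≤ volume (Set.Ioc a b ∩ Function.support f) := Measure.restrict_le_self _
    _ = volume (Function.support f ∩ Set.Ioc a b) := by rw [Set.inter_comm]
  linarith [s8_F_sub hF hfi ha.1 hab.le hb.2]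

lemma s8_F_monoOn (hF : ∀ θ, F θ = ∫ t in (0:ℝ)..θ, f t) (hf0 : ∀ x, 0 ≤ f x)
    (hfi : IntegrableOn f (Set.Icc 0 1)) : MonotoneOn F (Set.Icc 0 1) := by
  intro a ha b hb hab
  have := s8_F_sub hF hfi ha.1 hab hb.2
  have h2 : 0 ≤ ∫ t in a..b, f t :=
    intervalIntegral.integral_nonneg hab (fun x _ => hf0 x)
  linarith

variable {G : ℝ → ℝ}

section Ginv
variable (hF : ∀ θ, F θ = ∫ t in (0:ℝ)..θ, f t) (hf0 : ∀ x, 0 ≤ f x)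
  (hfi : IntegrableOn f (Set.Icc 0 1))
  (hf1 : ∫ x in Set.Icc (0:ℝ) 1, f x = 1)
  (hfpos : ∀ᵐ x ∂(volume.restrict (Set.Icc (0:ℝ) 1)), 0 < f x)
  (hG : ∀ v, G v = if v < 1 then sInf {θ | θ ∈ Set.Icc (0:ℝ) 1 ∧ v < F θ} else 1)

include hF hf0 hfi hf1 hfpos hG

/-- For `v ∈ [0,1)`, `G v ∈ [0,1)` and `F (G v) = v`. -/
lemma s8_FG (v : ℝ) (hv : v ∈ Set.Ico (0:ℝ) 1) : G v ∈ Set.Ico (0:ℝ) 1 ∧ F (G v) = v := by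
  have hF1 : F 1 = 1 := s8_F1 hF hf1
  have hF0 : F 0 = 0 := s8_F0 hF
  have hsm := s8_F_strictMonoOn hF hf0 hfi hfpos
  -- IVT: get θ₀ with F θ₀ = v
  obtain ⟨θ₀, hθ₀mem, hθ₀⟩ : ∃ θ₀ ∈ Set.Icc (0:ℝ) 1, F θ₀ = v := by
    have := intermediate_value_Icc (zero_le_one) (s8_F_contOn hF hfi)
    rw [hF0, hF1] at this
    exact this ⟨hv.1, hv.2.le⟩
  have hθ₀lt : θ₀ < 1 := by
    rcases lt_or_eq_of_le hθ₀mem.2 with h | h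
    · exact h
    · exfalso; rw [h, hF1] at hθ₀; exact absurd hθ₀.symm (ne_of_lt hv.2)
  set S : Set ℝ := {θ | θ ∈ Set.Icc (0:ℝ) 1 ∧ v < F θ} with hS
  have hne : S.Nonempty := ⟨1, ⟨⟨zero_le_one, le_rfl⟩, by rw [hF1]; exact hv.2⟩⟩
  have hbdd : BddBelow S := ⟨0, fun θ hθ => hθ.1.1⟩
  have hlb : θ₀ ≤ sInf S := by
    refine le_csInf hne (fun θ hθ => ?_)
    by_contra hlt
    push_neg at hlt
    have : F θ ≤ F θ₀ := (hsm.monotoneOn) hθ.1 hθ₀mem hlt.le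
    rw [hθ₀] at this
    exact absurd hθ.2 (not_lt.2 this)
  have hub : sInf S ≤ θ₀ := by
    refine le_of_forall_pos_le_add (fun ε hε => ?_)
    rcases le_or_gt (θ₀ + ε) 1 with h | h
    · refine le_trans (csInf_le hbdd ?_) le_rfl
      refine ⟨⟨le_trans hθ₀mem.1 (by linarith), h⟩, ?_⟩
      rw [← hθ₀]
      exact hsm hθ₀mem ⟨le_trans hθ₀mem.1 (by linarith), h⟩ (by linarith)
    · have : sInf S ≤ 1 := csInf_le hbdd ⟨⟨zero_le_one, le_rfl⟩, by rw [hF1]; exact hv.2⟩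
      linarith
  have hGv : G v = θ₀ := by rw [hG v, if_pos hv.2]; exact le_antisymm hub hlb
  rw [hGv, hθ₀]
  exact ⟨⟨hθ₀mem.1, hθ₀lt⟩, rfl⟩

lemma s8_G_mem_unit (v : ℝ) : G v ∈ Set.Icc (0:ℝ) 1 := by
  rcases lt_or_ge v 1 with h | h
  · rcases le_or_gt 0 v with h0 | h0
    · have := (s8_FG hF hf0 hfi hf1 hfpos hG v ⟨h0, h⟩).1
      exact ⟨this.1, this.2.le⟩
    · rw [hG v, if_pos h]
      constructor
      · exact le_csInf ⟨1, ⟨⟨zero_le_one, le_rfl⟩, by rw [s8_F1 hF hf1]; exact h⟩⟩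
          (fun θ hθ => hθ.1.1)
      · exact csInf_le ⟨0, fun θ hθ => hθ.1.1⟩
          ⟨⟨zero_le_one, le_rfl⟩, by rw [s8_F1 hF hf1]; exact h⟩
  · rw [hG v, if_neg (not_lt.2 h)]; exact ⟨zero_le_one, le_rfl⟩

lemma s8_G_mono : Monotone G := by
  intro v w hvw
  rcases lt_or_ge w 1 with hw | hw
  · have hv : v < 1 := lt_of_le_of_lt hvw hw
    rw [hG v, hG w, if_pos hv, if_pos hw]
    refine csInf_le_csInf ⟨0, fun θ hθ => hθ.1.1⟩
      ⟨1, ⟨⟨zero_le_one, le_rfl⟩, by rw [s8_F1 hF hf1]; exact hw⟩⟩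
      (fun θ hθ => ⟨hθ.1, lt_of_le_of_lt hvw hθ.2⟩)
  · rw [hG w, if_neg (not_lt.2 hw)]
    exact (s8_G_mem_unit hF hf0 hfi hf1 hfpos hG v).2

lemma s8_G_mem (v : ℝ) (hv : v ∈ Set.Ioo (0:ℝ) 1) : G v ∈ Set.Ioo (0:ℝ) 1 := by
  obtain ⟨hmem, hfg⟩ := s8_FG hF hf0 hfi hf1 hfpos hG v ⟨hv.1.le, hv.2⟩
  refine ⟨?_, hmem.2⟩
  rcases eq_or_lt_of_le hmem.1 with h | h
  · exfalso; rw [← h, s8_F0 hF] at hfg; exact absurd hfg.symm (ne_of_gt hv.1)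
  · exact h

end Ginv

section Ginv2
variable (hF : ∀ θ, F θ = ∫ t in (0:ℝ)..θ, f t) (hf0 : ∀ x, 0 ≤ f x)
  (hfi : IntegrableOn f (Set.Icc 0 1))
  (hf1 : ∫ x in Set.Icc (0:ℝ) 1, f x = 1)
  (hfpos : ∀ᵐ x ∂(volume.restrict (Set.Icc (0:ℝ) 1)), 0 < f x)
  (hG : ∀ v, G v = if v < 1 then sInf {θ | θ ∈ Set.Icc (0:ℝ) 1 ∧ v < F θ} else 1)

include hF hf0 hfi hf1 hfpos hG

/-- Galois connection: for `v ∈ (0,1)` and `θ ∈ [0,1]`, `G v ≤ θ ↔ v ≤ F θ`. -/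
lemma s8_galois (v θ : ℝ) (hv : v ∈ Set.Ioo (0:ℝ) 1) (hθ : θ ∈ Set.Icc (0:ℝ) 1) :
    G v ≤ θ ↔ v ≤ F θ := by
  have hsm := s8_F_strictMonoOn hF hf0 hfi hfpos
  obtain ⟨hGmem, hFG⟩ := s8_FG hF hf0 hfi hf1 hfpos hG v ⟨hv.1.le, hv.2⟩
  constructor
  · intro h
    rw [← hFG]
    exact hsm.monotoneOn ⟨hGmem.1, hGmem.2.le⟩ hθ h
  · intro h
    by_contra hlt
    push_neg at hlt
    have := hsm hθ ⟨hGmem.1, hGmem.2.le⟩ hlt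
    rw [hFG] at this
    linarith

lemma s8_G_cont (v : ℝ) (hv : v ∈ Set.Ioo (0:ℝ) 1) : ContinuousAt G v := by
  have hsm := s8_F_strictMonoOn hF hf0 hfi hfpos
  have hGmem := s8_G_mem hF hf0 hfi hf1 hfpos hG v hv
  refine continuousAt_of_monotoneOn_of_image_mem_nhds
    (f := G) (s := Set.Ioo (0:ℝ) 1)
    (fun a ha b hb hab => s8_G_mono hF hf0 hfi hf1 hfpos hG hab)
    (Ioo_mem_nhds hv.1 hv.2) ?_
  -- G '' Ioo 0 1 ⊇ Ioo 0 1 ∋ nbhd of G v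
  have himg : Set.Ioo (0:ℝ) 1 ⊆ G '' Set.Ioo (0:ℝ) 1 := by
    intro θ hθ
    refine ⟨F θ, ?_, ?_⟩
    · have h0 : F 0 < F θ := hsm ⟨le_rfl, zero_le_one⟩ ⟨hθ.1.le, hθ.2.le⟩ hθ.1
      have h1 : F θ < F 1 := hsm ⟨hθ.1.le, hθ.2.le⟩ ⟨zero_le_one, le_rfl⟩ hθ.2
      rw [s8_F0 hF] at h0
      rw [s8_F1 hF hf1] at h1
      exact ⟨h0, h1⟩
    · -- G (F θ) = θ
      have hvmem : F θ ∈ Set.Ioo (0:ℝ) 1 := by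
        have h0 : F 0 < F θ := hsm ⟨le_rfl, zero_le_one⟩ ⟨hθ.1.le, hθ.2.le⟩ hθ.1
        have h1 : F θ < F 1 := hsm ⟨hθ.1.le, hθ.2.le⟩ ⟨zero_le_one, le_rfl⟩ hθ.2
        rw [s8_F0 hF] at h0; rw [s8_F1 hF hf1] at h1
        exact ⟨h0, h1⟩
      obtain ⟨hGm, hFGe⟩ := s8_FG hF hf0 hfi hf1 hfpos hG (F θ) ⟨hvmem.1.le, hvmem.2⟩
      exact hsm.injOn ⟨hGm.1, hGm.2.le⟩ ⟨hθ.1.le, hθ.2.le⟩ hFGe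
  exact mem_of_superset (Ioo_mem_nhds hGmem.1 hGmem.2) himg

end Ginv2

section FTCae

/-- Almost every point is a Lebesgue point of the (0,1)-indicator of `f`. -/
lemma s8_leb (hfm : Measurable f) (hfi : IntegrableOn f (Set.Icc 0 1)) :
    ∀ᵐ x ∂(volume : Measure ℝ), Tendsto
      (fun r => ⨍ y in Metric.closedBall x r,
        ‖(Set.Icc (0:ℝ) 1).indicator f y - (Set.Icc (0:ℝ) 1).indicator f x‖)
      (nhdsWithin 0 (Set.Ioi 0)) (nhds 0) := by
  have hg : Integrable ((Set.Icc (0:ℝ) 1).indicator f) volume :=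
    (integrable_indicator_iff measurableSet_Icc).2 hfi
  filter_upwards [IsUnifLocDoublingMeasure.ae_tendsto_average_norm_sub (μ := (volume : Measure ℝ))
    hg.locallyIntegrable 1] with x hx
  refine hx (fun _ => x) (fun r => r) tendsto_id ?_
  filter_upwards [self_mem_nhdsWithin] with r hr
  exact Metric.mem_closedBall_self (by simp at hr ⊢; linarith)

lemma s8_F_hasDeriv (hF : ∀ θ, F θ = ∫ t in (0:ℝ)..θ, f t) (hfm : Measurable f)
    (hfi : IntegrableOn f (Set.Icc 0 1)) {x : ℝ} (hx : x ∈ Set.Ioo (0:ℝ) 1)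
    (hleb : Tendsto
      (fun r => ⨍ y in Metric.closedBall x r,
        ‖(Set.Icc (0:ℝ) 1).indicator f y - (Set.Icc (0:ℝ) 1).indicator f x‖)
      (nhdsWithin 0 (Set.Ioi 0)) (nhds 0)) :
    HasDerivAt F (f x) x := by
  set g := (Set.Icc (0:ℝ) 1).indicator f with hgdef
  have hg : Integrable g volume := (integrable_indicator_iff measurableSet_Icc).2 hfi
  have hgx : g x = f x := Set.indicator_of_mem (Set.mem_Icc.mpr ⟨hx.1.le, hx.2.le⟩) f
  rw [hasDerivAt_iff_isLittleO, Asymptotics.isLittleO_iff]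
  intro ε hε
  -- find r₀
  have hev : ∀ᶠ r in nhdsWithin (0:ℝ) (Set.Ioi 0),
      ⨍ y in Metric.closedBall x r, ‖g y - g x‖ < ε / 2 :=
    hleb.eventually (gt_mem_nhds (by linarith))
  obtain ⟨r₀, hr₀pos, hr₀⟩ := mem_nhdsGT_iff_exists_Ioo_subset.mp hev
  set r₁ := min r₀ (min x (1 - x)) with hr₁def
  have hr₁pos : 0 < r₁ := lt_min hr₀pos (lt_min hx.1 (by linarith [hx.2]))
  filter_upwards [Metric.ball_mem_nhds x hr₁pos] with y hy
  rcases eq_or_ne y x with rfl | hyx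
  · simp
  · set r := |y - x| with hrdef
    have hrpos : 0 < r := abs_pos.2 (sub_ne_zero.2 hyx)
    have hrlt : r < r₁ := by
      rw [Metric.mem_ball, Real.dist_eq] at hy; exact hy
    have hy01 : y ∈ Set.Icc (0:ℝ) 1 := by
      have h1 : r < x := lt_of_lt_of_le hrlt (le_trans (min_le_right _ _) (min_le_left _ _))
      have h2 : r < 1 - x := lt_of_lt_of_le hrlt (le_trans (min_le_right _ _) (min_le_right _ _))
      constructor
      · nlinarith [abs_lt.1 (show |y - x| < x from h1)]
      · nlinarith [abs_lt.1 (show |y - x| < 1 - x from h2)]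
    have hx01 : x ∈ Set.Icc (0:ℝ) 1 := ⟨hx.1.le, hx.2.le⟩
    -- F y - F x = ∫ x..y f = ∫ x..y g
    have hFyx : F y - F x = ∫ t in x..y, g t := by
      have hcong : ∀ a b : ℝ, a ∈ Set.Icc (0:ℝ) 1 → b ∈ Set.Icc (0:ℝ) 1 →
          (∫ t in a..b, f t) = ∫ t in a..b, g t := by
        intro a b ha hb
        refine intervalIntegral.integral_congr (fun t ht => ?_)
        have : Set.uIcc a b ⊆ Set.Icc 0 1 := Set.uIcc_subset_Icc ha hb
        exact (Set.indicator_of_mem (this ht) f).symm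
      rcases le_total x y with h | h
      · rw [← hcong x y hx01 hy01]
        exact s8_F_sub hF hfi hx01.1 h hy01.2
      · have := s8_F_sub hF hfi hy01.1 h hx01.2
        rw [← hcong x y hx01 hy01, intervalIntegral.integral_symm]
        linarith
    have hgi : IntervalIntegrable g volume x y := hg.intervalIntegrable
    have hsub : (fun t : ℝ => g t - g x) = fun t => g t - g x := rfl
    have key : F y - F x - (y - x) • f x = ∫ t in x..y, (g t - g x) := by
      rw [intervalIntegral.integral_sub hgi intervalIntegrable_const,
        intervalIntegral.integral_const, hFyx, hgx]
    rw [key]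
    -- bound the integral
    have hiball : IntegrableOn (fun t => ‖g t - g x‖) (Metric.closedBall x r) volume := by
      have h1 : IntegrableOn g (Metric.closedBall x r) volume := hg.integrableOn
      have h2 : IntegrableOn (fun _ : ℝ => g x) (Metric.closedBall x r) volume :=
        integrableOn_const measure_closedBall_lt_top.ne
      exact (h1.sub h2).norm
    have hsubset : Set.uIoc x y ⊆ Metric.closedBall x r := by
      intro t ht
      rw [Metric.mem_closedBall, Real.dist_eq]
      rcases le_total x y with h | h
      · rw [Set.uIoc_of_le h] at ht
        rw [abs_of_pos (sub_pos.2 ht.1), hrdef, abs_of_nonneg (sub_nonneg.2 h)]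
        linarith [ht.2]
      · rw [Set.uIoc_of_ge h] at ht
        rw [abs_of_nonpos (by linarith [ht.2] : t - x ≤ 0), hrdef,
          abs_of_nonpos (sub_nonpos.2 h)]
        linarith [ht.1]
    have step1 : ‖∫ t in x..y, (g t - g x)‖ ≤ ∫ t in Set.uIoc x y, ‖g t - g x‖ :=
      intervalIntegral.norm_integral_le_integral_norm_uIoc
    have step2 : (∫ t in Set.uIoc x y, ‖g t - g x‖) ≤ ∫ t in Metric.closedBall x r, ‖g t - g x‖ :=
      setIntegral_mono_set hiball (Eventually.of_forall (fun t => norm_nonneg _))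
        (HasSubset.Subset.eventuallyLE hsubset)
    have hvol : (volume (Metric.closedBall x r)).toReal = 2 * r := by
      rw [Real.volume_closedBall, ENNReal.toReal_ofReal (by linarith)]
    have havg : (∫ t in Metric.closedBall x r, ‖g t - g x‖) =
        (2 * r) * ⨍ t in Metric.closedBall x r, ‖g t - g x‖ := by
      rw [setAverage_eq, measureReal_def, hvol, smul_eq_mul]
      field_simp
    have hlt : (⨍ t in Metric.closedBall x r, ‖g t - g x‖) < ε / 2 :=
      hr₀ ⟨hrpos, lt_of_lt_of_le hrlt (min_le_left _ _)⟩
    have havgnn : (0:ℝ) ≤ ⨍ t in Metric.closedBall x r, ‖g t - g x‖ := by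
      rw [setAverage_eq]
      exact smul_nonneg (by positivity)
        (setIntegral_nonneg measurableSet_closedBall (fun t _ => norm_nonneg _))
    calc ‖∫ t in x..y, (g t - g x)‖ ≤ ∫ t in Metric.closedBall x r, ‖g t - g x‖ :=
          le_trans step1 step2
    _ = (2 * r) * ⨍ t in Metric.closedBall x r, ‖g t - g x‖ := havg
    _ ≤ (2 * r) * (ε / 2) := by nlinarith
    _ = ε * r := by ring
    _ = ε * ‖y - x‖ := by rw [hrdef, Real.norm_eq_abs]

end FTCae

section Pushforward
variable (hF : ∀ θ, F θ = ∫ t in (0:ℝ)..θ, f t) (hfm : Measurable f) (hf0 : ∀ x, 0 ≤ f x)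
  (hfi : IntegrableOn f (Set.Icc 0 1))
  (hf1 : ∫ x in Set.Icc (0:ℝ) 1, f x = 1)
  (hfpos : ∀ᵐ x ∂(volume.restrict (Set.Icc (0:ℝ) 1)), 0 < f x)
  (hG : ∀ v, G v = if v < 1 then sInf {θ | θ ∈ Set.Icc (0:ℝ) 1 ∧ v < F θ} else 1)

include hF hf0 hfi hf1 hfpos hG

lemma s8_map_eq (hfm : Measurable f) :
    Measure.map G (volume.restrict (Set.Ioo 0 1)) =
      volume.withDensity (fun θ => ENNReal.ofReal ((Set.Ioo (0:ℝ) 1).indicator f θ)) := by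
  have hGmono := s8_G_mono hF hf0 hfi hf1 hfpos hG
  have hGm : Measurable G := hGmono.measurable
  have hsm := s8_F_strictMonoOn hF hf0 hfi hfpos
  have hFmono := hsm.monotoneOn
  have hdm : Measurable (fun θ => ENNReal.ofReal ((Set.Ioo (0:ℝ) 1).indicator f θ)) :=
    ENNReal.measurable_ofReal.comp (hfm.indicator measurableSet_Ioo)
  set μm := Measure.map G (volume.restrict (Set.Ioo 0 1)) with hμm
  set ν := volume.withDensity (fun θ => ENNReal.ofReal ((Set.Ioo (0:ℝ) 1).indicator f θ)) with hν
  -- indicator fact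
  have hind : ∀ x : ℝ, ENNReal.ofReal ((Set.Ioo (0:ℝ) 1).indicator f x)
      = (Set.Ioo (0:ℝ) 1).indicator (fun t => ENNReal.ofReal (f t)) x := by
    intro x
    by_cases hx : x ∈ Set.Ioo (0:ℝ) 1
    · rw [Set.indicator_of_mem hx, Set.indicator_of_mem hx]
    · rw [Set.indicator_of_notMem hx, Set.indicator_of_notMem hx, ENNReal.ofReal_zero]
  -- the ν of a measurable set s is the lintegral over s ∩ Ioo 0 1
  have hνapp : ∀ s : Set ℝ, MeasurableSet s →
      ν s = ∫⁻ x in s ∩ Set.Ioo 0 1, ENNReal.ofReal (f x) := by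
    intro s hs
    rw [hν, withDensity_apply _ hs]
    rw [lintegral_congr hind, lintegral_indicator measurableSet_Ioo,
      Measure.restrict_restrict measurableSet_Ioo, Set.inter_comm]
  haveI : IsFiniteMeasure μm := by
    constructor
    rw [hμm, Measure.map_apply hGm MeasurableSet.univ]
    simp
  -- equality of total masses
  have lint_fact : ∀ a b : ℝ, 0 ≤ a → a ≤ b → b ≤ 1 →
      (∫⁻ x in Set.Ioc a b, ENNReal.ofReal (f x)) = ENNReal.ofReal (F b - F a) := by
    intro a b ha hab hb
    have hint : IntegrableOn f (Set.Ioc a b) volume :=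
      hfi.mono_set (fun x hx => ⟨le_trans ha hx.1.le, le_trans hx.2 hb⟩)
    rw [← MeasureTheory.ofReal_integral_eq_lintegral_ofReal hint
      (Eventually.of_forall (fun x => hf0 x))]
    rw [s8_F_sub hF hfi ha hab hb, intervalIntegral.integral_of_le hab]
  have htot : μm Set.univ = ν Set.univ := by
    rw [hμm, Measure.map_apply hGm MeasurableSet.univ]
    rw [hνapp Set.univ MeasurableSet.univ, Set.univ_inter, Set.preimage_univ]
    have h1 : (∫⁻ x in Set.Ioo (0:ℝ) 1, ENNReal.ofReal (f x))
        = ∫⁻ x in Set.Ioc (0:ℝ) 1, ENNReal.ofReal (f x) := by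
      refine setLIntegral_congr ?_
      exact Ioo_ae_eq_Ioc
    rw [h1, lint_fact 0 1 le_rfl zero_le_one le_rfl, s8_F1 hF hf1, s8_F0 hF]
    simp
  refine MeasureTheory.Measure.ext_of_Ioc_finite μm ν htot (fun a b hab => ?_)
  -- clamped endpoints
  set a₂ := min (max a 0) 1 with ha₂def
  set b₂ := min (max b 0) 1 with hb₂def
  have ha₂mem : a₂ ∈ Set.Icc (0:ℝ) 1 := ⟨le_min (le_max_right a 0) zero_le_one, min_le_right _ _⟩
  have hb₂mem : b₂ ∈ Set.Icc (0:ℝ) 1 := ⟨le_min (le_max_right b 0) zero_le_one, min_le_right _ _⟩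
  have hab₂ : a₂ ≤ b₂ := min_le_min (max_le_max hab.le le_rfl) le_rfl
  -- membership characterization
  have hchar : (G ⁻¹' Set.Ioc a b) ∩ Set.Ioo 0 1
      = Set.Ioo 0 1 ∩ Set.Ioc (F a₂) (F b₂) := by
    ext v
    simp only [Set.mem_inter_iff, Set.mem_preimage, Set.mem_Ioc, Set.mem_Ioo]
    constructor
    · rintro ⟨⟨hav, hvb⟩, hv⟩
      have hGv := s8_G_mem hF hf0 hfi hf1 hfpos hG v ⟨hv.1, hv.2⟩
      refine ⟨hv, ?_, ?_⟩
      · -- F a₂ < v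
        have ha₂Gv : a₂ < G v := by
          rcases le_or_gt a 0 with h | h
          · have : a₂ ≤ 0 := le_trans (min_le_left _ _) (by simpa using h)
            linarith [hGv.1]
          · rcases le_or_gt a 1 with h1 | h1
            · have : a₂ = a := by rw [ha₂def, max_eq_left h.le, min_eq_left h1]
              rw [this]; exact hav
            · linarith [hGv.2, le_trans (min_le_left a₂ 1) (le_refl a₂)]
        have := (s8_galois hF hf0 hfi hf1 hfpos hG v a₂ ⟨hv.1, hv.2⟩ ha₂mem)
        by_contra hc
        push_neg at hc
        exact absurd (this.mpr hc) (not_le.2 ha₂Gv)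
      · -- v ≤ F b₂
        have hGvb₂ : G v ≤ b₂ := by
          rcases le_or_gt 1 b with h | h
          · rw [hb₂def, max_eq_left (le_trans zero_le_one h), min_eq_right h]
            linarith [hGv.2]
          · rcases le_or_gt b 0 with h0 | h0
            · linarith [hGv.1]
            · have : b₂ = b := by rw [hb₂def, max_eq_left h0.le, min_eq_left h.le]
              rw [this]; exact hvb
        exact (s8_galois hF hf0 hfi hf1 hfpos hG v b₂ ⟨hv.1, hv.2⟩ hb₂mem).mp hGvb₂
    · rintro ⟨hv, hFa, hFb⟩
      have hGv := s8_G_mem hF hf0 hfi hf1 hfpos hG v ⟨hv.1, hv.2⟩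
      have h1 : G v ≤ b₂ := (s8_galois hF hf0 hfi hf1 hfpos hG v b₂ ⟨hv.1, hv.2⟩ hb₂mem).mpr hFb
      have h2 : a₂ < G v := by
        by_contra hc
        push_neg at hc
        have := (s8_galois hF hf0 hfi hf1 hfpos hG v a₂ ⟨hv.1, hv.2⟩ ha₂mem).mp hc
        linarith
      refine ⟨⟨?_, ?_⟩, hv⟩
      · -- a < G v
        rcases le_or_gt a 0 with h | h
        · linarith [hGv.1]
        · rcases le_or_gt a 1 with hle | hgt
          · have : a₂ = a := by rw [ha₂def, max_eq_left h.le, min_eq_left hle]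
            rw [← this]; exact h2
          · exfalso
            have : a₂ = 1 := by rw [ha₂def, min_eq_right (le_max_of_le_left hgt.le)]
            rw [this] at h2
            linarith [hGv.2]
      · -- G v ≤ b
        rcases le_or_gt 1 b with h | h
        · linarith [hGv.2]
        · rcases le_or_gt b 0 with h0 | h0
          · exfalso
            have : b₂ ≤ 0 := le_trans (min_le_left _ _) (by simpa using h0)
            linarith [hGv.1]
          · have : b₂ = b := by rw [hb₂def, max_eq_left h0.le, min_eq_left h.le]
            rw [← this]; exact h1
  -- compute μm (Ioc a b)
  have hFa₂mem : F a₂ ∈ Set.Icc (0: ℝ) 1 := by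
    constructor
    · rw [← s8_F0 hF]; exact hFmono ⟨le_rfl, zero_le_one⟩ ha₂mem ha₂mem.1
    · rw [← s8_F1 hF hf1]; exact hFmono ha₂mem ⟨zero_le_one, le_rfl⟩ ha₂mem.2
  have hFb₂mem : F b₂ ∈ Set.Icc (0:ℝ) 1 := by
    constructor
    · rw [← s8_F0 hF]; exact hFmono ⟨le_rfl, zero_le_one⟩ hb₂mem hb₂mem.1
    · rw [← s8_F1 hF hf1]; exact hFmono hb₂mem ⟨zero_le_one, le_rfl⟩ hb₂mem.2
  have hFab : F a₂ ≤ F b₂ := hFmono ha₂mem hb₂mem hab₂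
  have hμmval : μm (Set.Ioc a b) = ENNReal.ofReal (F b₂ - F a₂) := by
    rw [hμm, Measure.map_apply hGm measurableSet_Ioc,
      Measure.restrict_apply (hGm measurableSet_Ioc), hchar]
    refine le_antisymm ?_ ?_
    · calc volume (Set.Ioo 0 1 ∩ Set.Ioc (F a₂) (F b₂)) ≤ volume (Set.Ioc (F a₂) (F b₂)) :=
          measure_mono Set.inter_subset_right
      _ = ENNReal.ofReal (F b₂ - F a₂) := Real.volume_Ioc
    · calc ENNReal.ofReal (F b₂ - F a₂) = volume (Set.Ioo (F a₂) (F b₂)) := Real.volume_Ioo.symm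
      _ ≤ volume (Set.Ioo 0 1 ∩ Set.Ioc (F a₂) (F b₂)) := by
          refine measure_mono (fun x hx => ⟨⟨?_, ?_⟩, hx.1, hx.2.le⟩)
          · linarith [hFa₂mem.1, hx.1]
          · linarith [hFb₂mem.2, hx.2]
  -- compute ν (Ioc a b)
  have hνval : ν (Set.Ioc a b) = ENNReal.ofReal (F b₂ - F a₂) := by
    rw [hνapp _ measurableSet_Ioc]
    have hae : (Set.Ioc a b ∩ Set.Ioo 0 1 : Set ℝ) =ᵐ[volume] (Set.Ioc a₂ b₂ : Set ℝ) := by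
      have h1 : ∀ᵐ x ∂(volume : Measure ℝ), x ≠ 1 := by
        refine (ae_iff).2 ?_
        simpa using (measure_singleton (1:ℝ) (μ := volume))
      filter_upwards [h1] with x hx1
      simp only [Set.mem_inter_iff, Set.mem_Ioc, Set.mem_Ioo, eq_iff_iff]
      constructor
      · rintro ⟨⟨hax, hxb⟩, hx0, hx1'⟩
        constructor
        · exact lt_of_le_of_lt (min_le_left _ _) (max_lt hax hx0)
        · exact le_min (le_max_of_le_left hxb) hx1'.le
      · rintro ⟨ha₂x, hxb₂⟩
        have hx1' : x < 1 := lt_of_le_of_ne (le_trans hxb₂ (min_le_right _ _)) hx1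
        have hx0 : 0 < x := lt_of_le_of_lt (le_min (le_max_right a 0) zero_le_one) ha₂x
        refine ⟨⟨?_, ?_⟩, hx0, hx1'⟩
        · rcases le_or_gt a 0 with h | h
          · linarith
          · rcases le_or_gt a 1 with h1 | h1
            · have : a₂ = a := by rw [ha₂def, max_eq_left h.le, min_eq_left h1]
              linarith [this ▸ ha₂x]
            · exfalso
              have : a₂ = 1 := by rw [ha₂def, min_eq_right (le_max_of_le_left h1.le)]
              rw [this] at ha₂x
              linarith
        · rcases le_or_gt 0 b with h | h
          · have : b₂ ≤ b := le_trans (min_le_left _ _) (by rw [max_eq_left h])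
            linarith
          · exfalso
            have : b₂ ≤ 0 := le_trans (min_le_left _ _) (by simp [h.le])
            linarith
    rw [setLIntegral_congr hae]
    exact lint_fact a₂ b₂ ha₂mem.1 hab₂ hb₂mem.2
  rw [hμmval, hνval]

end Pushforward

section NullPre
variable (hF : ∀ θ, F θ = ∫ t in (0:ℝ)..θ, f t) (hf0 : ∀ x, 0 ≤ f x)
  (hfi : IntegrableOn f (Set.Icc 0 1))
  (hf1 : ∫ x in Set.Icc (0:ℝ) 1, f x = 1)
  (hfpos : ∀ᵐ x ∂(volume.restrict (Set.Icc (0:ℝ) 1)), 0 < f x)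
  (hG : ∀ v, G v = if v < 1 then sInf {θ | θ ∈ Set.Icc (0:ℝ) 1 ∧ v < F θ} else 1)

include hF hf0 hfi hf1 hfpos hG

lemma s8_null (hfm : Measurable f) {B : Set ℝ} (hBm : MeasurableSet B) (hB0 : volume B = 0) :
    volume.restrict (Set.Ioo (0:ℝ) 1) (G ⁻¹' B) = 0 := by
  have hGm : Measurable G := (s8_G_mono hF hf0 hfi hf1 hfpos hG).measurable
  have key : Measure.map G (volume.restrict (Set.Ioo 0 1)) B = 0 := by
    rw [s8_map_eq hF hf0 hfi hf1 hfpos hG hfm, withDensity_apply _ hBm]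
    exact setLIntegral_measure_zero _ _ hB0
  rwa [Measure.map_apply hGm hBm] at key

end NullPre

/-- let `f : [0,1] → [0,∞)` be measurable with `∫₀¹ f = 1` and `f > 0` a.e.;
let `F(θ) = ∫₀^θ f`, and let `G` be its generalized inverse (`G(v) = inf{θ ∈ [0,1] : F θ > v}`
for `v < 1`, `G(1) = 1`). Then for a.e. `v ∈ (0,1)`, `G` is differentiable at `v` with
`G'(v) = 1 / f(G(v))`, and `D_λ[G](v) → 1 / f(G(v))` as `λ → 0⁺`. -/
theorem statement8 (f : ℝ → ℝ) (hfm : Measurable f) (hf0 : ∀ x, 0 ≤ f x)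
    (hfi : IntegrableOn f (Set.Icc 0 1))
    (hf1 : ∫ x in Set.Icc (0:ℝ) 1, f x = 1)
    (hfpos : ∀ᵐ x ∂(volume.restrict (Set.Icc (0:ℝ) 1)), 0 < f x)
    (F G : ℝ → ℝ)
    (hF : ∀ θ, F θ = ∫ t in (0:ℝ)..θ, f t)
    (hG : ∀ v, G v = if v < 1 then sInf {θ | θ ∈ Set.Icc (0:ℝ) 1 ∧ v < F θ} else 1) :
    ∀ᵐ v ∂(volume.restrict (Set.Ioo (0:ℝ) 1)),
      HasDerivAt G (1 / f (G v)) v ∧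
      Tendsto (fun lam => smoothD G lam v) (nhdsWithin 0 (Set.Ioi 0))
        (nhds (ENNReal.ofReal (1 / f (G v)))) := by
  have hGmono : Monotone G := s8_G_mono hF hf0 hfi hf1 hfpos hG
  -- the bad set
  have hae : ∀ᵐ θ ∂(volume : Measure ℝ),
      θ ∈ Set.Ioo (0:ℝ) 1 → (HasDerivAt F (f θ) θ ∧ 0 < f θ) := by
    have h2 : ∀ᵐ θ ∂(volume : Measure ℝ), θ ∈ Set.Icc (0:ℝ) 1 → 0 < f θ :=
      (ae_restrict_iff' measurableSet_Icc).mp hfpos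
    filter_upwards [s8_leb hfm hfi, h2] with θ hθleb hθpos hθ
    exact ⟨s8_F_hasDeriv hF hfm hfi hθ hθleb, hθpos ⟨hθ.1.le, hθ.2.le⟩⟩
  obtain ⟨B, hSB, hBm, hB0⟩ := exists_measurable_superset_of_null (ae_iff.mp hae)
  have hnull := s8_null hF hf0 hfi hf1 hfpos hG hfm hBm hB0
  have haeB : ∀ᵐ v ∂(volume.restrict (Set.Ioo (0:ℝ) 1)), G v ∉ B := by
    rw [ae_iff]
    convert hnull using 2
    ext v; simp
  filter_upwards [haeB, ae_restrict_mem measurableSet_Ioo] with v hvB hv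
  have hGv : G v ∈ Set.Ioo (0:ℝ) 1 := s8_G_mem hF hf0 hfi hf1 hfpos hG v hv
  have hgood : HasDerivAt F (f (G v)) (G v) ∧ 0 < f (G v) := by
    by_contra hc
    exact hvB (hSB (by simp only [Set.mem_setOf_eq, Classical.not_imp]; exact ⟨hGv, hc⟩))
  obtain ⟨hFd, hfGv⟩ := hgood
  have hcont : ContinuousAt G v := s8_G_cont hF hf0 hfi hf1 hfpos hG v hv
  have hfg : ∀ᶠ y in nhds v, F (G y) = y := by
    filter_upwards [Ioo_mem_nhds hv.1 hv.2] with y hy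
    exact (s8_FG hF hf0 hfi hf1 hfpos hG y ⟨hy.1.le, hy.2⟩).2
  have hGd : HasDerivAt G (f (G v))⁻¹ v :=
    HasDerivAt.of_local_left_inverse hcont hFd (ne_of_gt hfGv) hfg
  refine ⟨by rw [one_div]; exact hGd, ?_⟩
  -- real-valued difference quotient limit
  set d : ℝ := (f (G v))⁻¹ with hd
  have hslope : Tendsto (slope G v) (nhdsWithin v {v}ᶜ) (nhds d) :=
    hasDerivAt_iff_tendsto_slope.mp hGd
  have t1 : Tendsto (fun lam : ℝ => v + lam / 2) (nhdsWithin 0 (Set.Ioi 0))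
      (nhdsWithin v {v}ᶜ) := by
    rw [tendsto_nhdsWithin_iff]
    constructor
    · have : Tendsto (fun lam : ℝ => v + lam / 2) (nhds 0) (nhds (v + 0 / 2)) := by
        exact (tendsto_id.div_const 2).const_add v
      rw [zero_div, add_zero] at this
      exact this.mono_left nhdsWithin_le_nhds
    · filter_upwards [self_mem_nhdsWithin] with lam hlam
      simp only [Set.mem_compl_iff, Set.mem_singleton_iff]
      have : (0:ℝ) < lam := hlam
      intro hcon
      nlinarith [hcon]
  have t2 : Tendsto (fun lam : ℝ => v - lam / 2) (nhdsWithin 0 (Set.Ioi 0))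
      (nhdsWithin v {v}ᶜ) := by
    rw [tendsto_nhdsWithin_iff]
    constructor
    · have : Tendsto (fun lam : ℝ => v - lam / 2) (nhds 0) (nhds (v - 0 / 2)) := by
        exact (tendsto_id.div_const 2).const_sub v
      rw [zero_div, sub_zero] at this
      exact this.mono_left nhdsWithin_le_nhds
    · filter_upwards [self_mem_nhdsWithin] with lam hlam
      simp only [Set.mem_compl_iff, Set.mem_singleton_iff]
      have : (0:ℝ) < lam := hlam
      intro hcon
      nlinarith [hcon]
  have hA := hslope.comp t1
  have hB2 := hslope.comp t2
  have hsum := ((hA.add hB2).div_const 2)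
  have hdd : (d + d) / 2 = d := by ring
  rw [hdd] at hsum
  have hreal : Tendsto (fun lam => (G (v + lam / 2) - G (v - lam / 2)) / lam)
      (nhdsWithin 0 (Set.Ioi 0)) (nhds d) := by
    refine hsum.congr' ?_
    filter_upwards [self_mem_nhdsWithin] with lam hlam
    have hlam' : (0:ℝ) < lam := hlam
    have hne : lam ≠ 0 := ne_of_gt hlam'
    simp only [Function.comp_apply, slope_def_field]
    rw [show v + lam / 2 - v = lam / 2 by ring, show v - lam / 2 - v = -(lam / 2) by ring]
    rw [div_neg, ← sub_eq_add_neg, div_sub_div_same, sub_sub_sub_cancel_right, div_div]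
    congr 1
    ring
  -- eventual identification of smoothD
  have hev : ∀ᶠ lam in nhdsWithin (0:ℝ) (Set.Ioi 0),
      smoothD G lam v = ENNReal.ofReal ((G (v + lam / 2) - G (v - lam / 2)) / lam) := by
    have hδ : (0:ℝ) < min v (1 - v) := lt_min hv.1 (by linarith [hv.2])
    filter_upwards [Ioo_mem_nhdsGT_of_mem ⟨le_rfl, hδ⟩] with lam hlam
    set a := v - lam / 2 with hadef
    set b := v + lam / 2 with hbdef
    have hlam0 : 0 < lam := hlam.1
    have hlamv : lam < v := lt_of_lt_of_le hlam.2 (min_le_left _ _)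
    have hlam1 : lam < 1 - v := lt_of_lt_of_le hlam.2 (min_le_right _ _)
    have hab : a ≤ b := by rw [hadef, hbdef]; linarith
    have haIcc : ∀ t ∈ Set.Icc a b, t ∈ Set.Ioo (0:ℝ) 1 := by
      intro t ht
      rw [hadef, hbdef] at ht
      constructor
      · have := ht.1; linarith
      · have := ht.2; linarith
    have hfract : Int.fract '' Set.Icc a b = Set.Icc a b := by
      have heq : Set.EqOn Int.fract id (Set.Icc a b) := by
        intro t ht
        have h01 := haIcc t ht
        simp only [id_eq]
        exact Int.fract_eq_self.2 ⟨h01.1.le, h01.2⟩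
      rw [heq.image_eq, Set.image_id]
    have hGimg : G '' Set.Icc a b = Set.Icc (G a) (G b) := by
      refine le_antisymm ?_ ?_
      · rintro y ⟨t, ht, rfl⟩
        exact ⟨hGmono ht.1, hGmono ht.2⟩
      · have hGcont : ContinuousOn G (Set.Icc a b) := fun t ht =>
          (s8_G_cont hF hf0 hfi hf1 hfpos hG t (haIcc t ht)).continuousWithinAt
        exact intermediate_value_Icc hab hGcont
    rw [smoothD, hfract, hGimg, Real.volume_Icc, ← ENNReal.ofReal_div_of_pos hlam0]
  refine Tendsto.congr' (EventuallyEq.symm hev) ?_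
  have := ENNReal.tendsto_ofReal hreal
  rw [one_div]
  exact this
end

section
/- Let Θ, X, Y be real random variables on a probability space such that X = g(Θ) for some Borel measurable g : ℝ → ℝ, and such that Θ and Y are conditionally independent given X. Then the mutual informations agree: D_KL(Law(Θ,Y) ‖ Law(Θ) ⊗ Law(Y)) = D_KL(Law(X,Y) ‖ Law(X) ⊗ Law(Y)), where both sides are elements of [0,∞]. -/
open MeasureTheory ProbabilityTheory
open scoped ENNReal

/- Kullback–Leibler divergence of probability measures, valued in `[0,∞]` (`ℝ≥0∞`):
`∫ log (dμ/dν) dμ` if `μ ≪ ν` (with value `+∞` if the log-likelihood ratio is not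
integrable), and `+∞` otherwise.  Since for `μ ≪ ν` probability measures the negative part
of `llr μ ν` always has finite `μ`-integral, this matches the usual definition. -/
open Classical in
noncomputable def klDiv {α : Type*} [MeasurableSpace α] (μ ν : Measure α) : ℝ≥0∞ :=
  if μ.AbsolutelyContinuous ν then
    (if Integrable (llr μ ν) μ then ENNReal.ofReal (∫ x, llr μ ν x ∂μ) else ∞)
  else ∞

section Aux
open Set

lemma key_withDensity {Ω : Type*} [MeasurableSpace Ω] [StandardBorelSpace Ω] [Nonempty Ω]
    (P : Measure Ω) [IsProbabilityMeasure P]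
    (Θ X Y : Ω → ℝ) (hΘ : Measurable Θ) (hX : Measurable X) (hY : Measurable Y)
    (g : ℝ → ℝ) (hg : Measurable g) (hXg : X = fun ω => g (Θ ω))
    (hci : CondIndepFun (MeasurableSpace.comap X inferInstance) hX.comap_le Θ Y P)
    (hac : P.map (fun ω => (X ω, Y ω)) ≪ (P.map X).prod (P.map Y)) :
    P.map (fun ω => (Θ ω, Y ω)) =
      ((P.map Θ).prod (P.map Y)).withDensity
        (fun p => ((P.map (fun ω => (X ω, Y ω))).rnDeriv ((P.map X).prod (P.map Y)))
          (g p.1, p.2)) := by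
  classical
  have hΘY : Measurable fun ω => (Θ ω, Y ω) := hΘ.prodMk hY
  have hXY : Measurable fun ω => (X ω, Y ω) := hX.prodMk hY
  haveI : IsProbabilityMeasure (P.map Θ) := Measure.isProbabilityMeasure_map hΘ.aemeasurable
  haveI : IsProbabilityMeasure (P.map X) := Measure.isProbabilityMeasure_map hX.aemeasurable
  haveI : IsProbabilityMeasure (P.map Y) := Measure.isProbabilityMeasure_map hY.aemeasurable
  haveI : IsProbabilityMeasure (P.map fun ω => (X ω, Y ω)) :=
    Measure.isProbabilityMeasure_map hXY.aemeasurable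
  set μX := P.map X with hμXdef
  set μY := P.map Y with hμYdef
  set μΘ := P.map Θ with hμΘdef
  set ν := P.map (fun ω => (X ω, Y ω)) with hνdef
  set f := ν.rnDeriv (μX.prod μY) with hfdef
  have hfm : Measurable f := Measure.measurable_rnDeriv _ _
  have hD : Measurable fun p : ℝ × ℝ => f (g p.1, p.2) :=
    hfm.comp ((hg.comp measurable_fst).prodMk measurable_snd)
  have hrect : ∀ A B : Set ℝ, MeasurableSet A → MeasurableSet B →
      P.map (fun ω => (Θ ω, Y ω)) (A ×ˢ B)
        = ((μΘ.prod μY).withDensity fun p => f (g p.1, p.2)) (A ×ˢ B) := by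
    intro A B hA hB
    set H : ℝ → ℝ≥0∞ := fun x => ∫⁻ y in B, f (x, y) ∂μY with hHdef
    have hHm : Measurable H :=
      Measurable.lintegral_prod_right' (ν := μY.restrict B) hfm
    -- key integral identity coming from absolute continuity
    have hC_int : ∀ C : Set ℝ, MeasurableSet C →
        ∫⁻ x in C, H x ∂μX = P (X ⁻¹' C ∩ Y ⁻¹' B) := by
      intro C hC
      have h1 : P (X ⁻¹' C ∩ Y ⁻¹' B) = ν (C ×ˢ B) := by
        rw [hνdef, Measure.map_apply hXY (hC.prod hB), Set.mk_preimage_prod]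
      have hwd : (μX.prod μY).withDensity f = ν :=
        Measure.withDensity_rnDeriv_eq ν (μX.prod μY) hac
      rw [h1, ← hwd, withDensity_apply _ (hC.prod hB), ← Measure.prod_restrict,
        MeasureTheory.lintegral_prod _ hfm.aemeasurable]
    have hHfin : ∀ᵐ x ∂μX, H x < ∞ := by
      refine ae_lt_top hHm ?_
      have h := hC_int Set.univ MeasurableSet.univ
      rw [Measure.restrict_univ] at h
      rw [h]
      exact measure_ne_top P _
    set h : ℝ → ℝ := fun x => (H x).toReal with hhdef
    have hhm : Measurable h := hHm.ennreal_toReal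
    have hHXfin : ∀ᵐ ω ∂P, H (X ω) < ∞ :=
      (MeasureTheory.ae_map_iff hX.aemeasurable
        (measurableSet_lt hHm measurable_const)).mp hHfin
    have hlint_HX : ∫⁻ ω, H (X ω) ∂P = P (Y ⁻¹' B) := by
      rw [← lintegral_map hHm hX]
      have h := hC_int Set.univ MeasurableSet.univ
      rw [Measure.restrict_univ] at h
      rw [h, Set.preimage_univ, Set.univ_inter]
    have hint_hX : Integrable (fun ω => h (X ω)) P := by
      refine integrable_toReal_of_lintegral_ne_top (hHm.comp hX).aemeasurable ?_
      rw [hlint_HX]; exact measure_ne_top P _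
    have hXmX : Measurable[MeasurableSpace.comap X inferInstance] X := fun s hs => ⟨s, hs, rfl⟩
    have hu_sm : StronglyMeasurable[MeasurableSpace.comap X inferInstance] fun ω => h (X ω) :=
      ((hhm.comp hXmX).stronglyMeasurable)
    have hcond : (fun ω => h (X ω)) =ᵐ[P]
        P[(Y ⁻¹' B).indicator (fun _ => (1:ℝ)) | MeasurableSpace.comap X inferInstance] := by
      refine ae_eq_condExp_of_forall_setIntegral_eq hX.comap_le
        ((integrable_const (1:ℝ)).indicator (hY hB)) (fun s _ _ => hint_hX.integrableOn)
        ?_ hu_sm.aestronglyMeasurable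
      rintro _ ⟨C, hC, rfl⟩ -
      rw [setIntegral_indicator (hY hB), setIntegral_const, smul_eq_mul, mul_one,
        ← setIntegral_map hC hhm.aestronglyMeasurable hX.aemeasurable,
        show (∫ x in C, h x ∂μX) = (∫⁻ x in C, H x ∂μX).toReal from
          integral_toReal hHm.aemeasurable.restrict (ae_restrict_of_ae hHfin),
        hC_int C hC, measureReal_def]
    -- conditional independence
    rw [condIndepFun_iff_condExp_inter_preimage_eq_mul hΘ hY] at hci
    have hci' := hci A B hA hB
    have hs : MeasurableSet (Θ ⁻¹' A) := hΘ hA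
    have ht : MeasurableSet (Y ⁻¹' B) := hY hB
    have hind_int : Integrable ((Θ ⁻¹' A).indicator fun _ => (1:ℝ)) P :=
      (integrable_const (1:ℝ)).indicator hs
    have hus_int : Integrable
        ((fun ω => h (X ω)) * (Θ ⁻¹' A).indicator fun _ => (1:ℝ)) P := by
      have heq : ((fun ω => h (X ω)) * (Θ ⁻¹' A).indicator fun _ => (1:ℝ))
          = fun ω => (Θ ⁻¹' A).indicator (fun _ => (1:ℝ)) ω * h (X ω) := by
        funext ω; simp [mul_comm]
      rw [heq]
      refine hint_hX.bdd_mul hind_int.aestronglyMeasurable (c := 1) (Filter.Eventually.of_forall fun x => ?_)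
      classical
      simp only [Set.indicator_apply]
      split <;> simp
    have hpull := condExp_mul_of_stronglyMeasurable_left hu_sm hus_int hind_int
    have key_real : (P (Θ ⁻¹' A ∩ Y ⁻¹' B)).toReal = ∫ ω in Θ ⁻¹' A, h (X ω) ∂P := by
      calc (P (Θ ⁻¹' A ∩ Y ⁻¹' B)).toReal
          = ∫ ω, (Θ ⁻¹' A ∩ Y ⁻¹' B).indicator (fun _ => (1:ℝ)) ω ∂P :=
            (integral_indicator_one (hs.inter ht)).symm
        _ = ∫ ω, (P⟦Θ ⁻¹' A ∩ Y ⁻¹' B | MeasurableSpace.comap X inferInstance⟧) ω ∂P :=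
            (integral_condExp hX.comap_le).symm
        _ = ∫ ω, h (X ω) * (P⟦Θ ⁻¹' A | MeasurableSpace.comap X inferInstance⟧) ω ∂P := by
            refine integral_congr_ae ?_
            filter_upwards [hci', hcond] with ω h1 h2
            rw [h1, ← h2, mul_comm]
        _ = ∫ ω, (P[(fun ω => h (X ω)) * (Θ ⁻¹' A).indicator (fun _ => (1:ℝ)) |
              MeasurableSpace.comap X inferInstance]) ω ∂P := (integral_congr_ae hpull).symm
        _ = ∫ ω, ((fun ω => h (X ω)) * (Θ ⁻¹' A).indicator fun _ => (1:ℝ)) ω ∂P :=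
            integral_condExp hX.comap_le
        _ = ∫ ω, (Θ ⁻¹' A).indicator (fun ω => h (X ω)) ω ∂P := by
            refine integral_congr_ae (Filter.Eventually.of_forall fun ω => ?_)
            classical
            simp only [Pi.mul_apply, Set.indicator_apply]
            split <;> simp
        _ = ∫ ω in Θ ⁻¹' A, h (X ω) ∂P := integral_indicator hs
    -- assemble
    have hLHS : P.map (fun ω => (Θ ω, Y ω)) (A ×ˢ B) = P (Θ ⁻¹' A ∩ Y ⁻¹' B) := by
      rw [Measure.map_apply hΘY (hA.prod hB), Set.mk_preimage_prod]
    have hRHS : ((μΘ.prod μY).withDensity fun p => f (g p.1, p.2)) (A ×ˢ B)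
        = ∫⁻ ω in Θ ⁻¹' A, H (X ω) ∂P := by
      rw [withDensity_apply _ (hA.prod hB), ← Measure.prod_restrict,
        MeasureTheory.lintegral_prod _ hD.aemeasurable]
      rw [show (∫⁻ x, ∫⁻ y, f (g x, y) ∂μY.restrict B ∂μΘ.restrict A)
          = ∫⁻ x in A, H (g x) ∂μΘ from rfl]
      refine Eq.trans (setLIntegral_map hA (hHm.comp hg) hΘ) ?_
      refine lintegral_congr fun ω => ?_
      rw [hXg]
    have hfin2 : ∫⁻ ω in Θ ⁻¹' A, H (X ω) ∂P ≠ ∞ := by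
      refine ne_of_lt (lt_of_le_of_lt (lintegral_mono' Measure.restrict_le_self le_rfl) ?_)
      rw [hlint_HX]
      exact measure_lt_top P _
    have htoReal : (∫⁻ ω in Θ ⁻¹' A, H (X ω) ∂P).toReal = ∫ ω in Θ ⁻¹' A, h (X ω) ∂P :=
      integral_toReal (hHm.comp hX).aemeasurable.restrict
        (ae_restrict_of_ae hHXfin) |>.symm
    rw [hLHS, hRHS]
    refine (ENNReal.toReal_eq_toReal_iff' (measure_ne_top P _) hfin2).mp ?_
    rw [htoReal, key_real]
  refine ext_of_generate_finite _ generateFrom_prod.symm isPiSystem_prod ?_ ?_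
  · rintro _ ⟨A, hA, B, hB, rfl⟩
    exact hrect A B hA hB
  · rw [← Set.univ_prod_univ]
    exact hrect _ _ MeasurableSet.univ MeasurableSet.univ

end Aux

/-- mutual information is preserved: if `X = g(Θ)` for a Borel function `g`
and `Θ ⫫ Y | X` (conditional independence given the σ-algebra generated by `X`), then
`D_KL(Law(Θ,Y) ‖ Law(Θ) ⊗ Law(Y)) = D_KL(Law(X,Y) ‖ Law(X) ⊗ Law(Y))`, i.e.
`I(Θ;Y) = I(X;Y)`.  (Both sides are elements of `[0,∞]`; KL divergences of probability
measures are nonnegative, so `ℝ≥0∞` values are used.) -/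
theorem statement11 {Ω : Type*} [MeasurableSpace Ω] [StandardBorelSpace Ω] [Nonempty Ω]
    (P : Measure Ω) [IsProbabilityMeasure P]
    (Θ X Y : Ω → ℝ) (hΘ : Measurable Θ) (hX : Measurable X) (hY : Measurable Y)
    (g : ℝ → ℝ) (hg : Measurable g) (hXg : X = fun ω => g (Θ ω))
    (hci : CondIndepFun (MeasurableSpace.comap X inferInstance) hX.comap_le Θ Y P) :
    klDiv (P.map (fun ω => (Θ ω, Y ω))) ((P.map Θ).prod (P.map Y))
      = klDiv (P.map (fun ω => (X ω, Y ω))) ((P.map X).prod (P.map Y)) := by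
  classical
  have hΘY : Measurable fun ω => (Θ ω, Y ω) := hΘ.prodMk hY
  have hXY : Measurable fun ω => (X ω, Y ω) := hX.prodMk hY
  have hT : Measurable fun p : ℝ × ℝ => (g p.1, p.2) :=
    (hg.comp measurable_fst).prodMk measurable_snd
  haveI : IsProbabilityMeasure (P.map Θ) := Measure.isProbabilityMeasure_map hΘ.aemeasurable
  haveI : IsProbabilityMeasure (P.map X) := Measure.isProbabilityMeasure_map hX.aemeasurable
  haveI : IsProbabilityMeasure (P.map Y) := Measure.isProbabilityMeasure_map hY.aemeasurable
  have hmapμ : (P.map (fun ω => (Θ ω, Y ω))).map (fun p : ℝ × ℝ => (g p.1, p.2))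
      = P.map (fun ω => (X ω, Y ω)) := by
    rw [Measure.map_map hT hΘY]
    congr 1
    funext ω
    simp [Function.comp, hXg]
  have hmapπ : (((P.map Θ).prod (P.map Y)).map (fun p : ℝ × ℝ => (g p.1, p.2)))
      = (P.map X).prod (P.map Y) := by
    have h2 := Measure.map_prod_map (f := g) (g := id) (P.map Θ) (P.map Y) hg measurable_id
    rw [Measure.map_id] at h2
    have h3 : (Prod.map g id) = fun p : ℝ × ℝ => (g p.1, p.2) := rfl
    rw [h3] at h2
    have hXmap : P.map X = (P.map Θ).map g := by
      rw [Measure.map_map hg hΘ, hXg]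
      rfl
    rw [hXmap, h2]
  by_cases hac : P.map (fun ω => (X ω, Y ω)) ≪ (P.map X).prod (P.map Y)
  · have hkey := key_withDensity P Θ X Y hΘ hX hY g hg hXg hci hac
    have hfm : Measurable ((P.map (fun ω => (X ω, Y ω))).rnDeriv ((P.map X).prod (P.map Y))) :=
      Measure.measurable_rnDeriv _ _
    have hD : Measurable fun p : ℝ × ℝ =>
        ((P.map (fun ω => (X ω, Y ω))).rnDeriv ((P.map X).prod (P.map Y))) (g p.1, p.2) :=
      hfm.comp hT
    have hμπ : P.map (fun ω => (Θ ω, Y ω)) ≪ (P.map Θ).prod (P.map Y) := by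
      rw [hkey]
      exact withDensity_absolutelyContinuous _ _
    have hrn : (P.map (fun ω => (Θ ω, Y ω))).rnDeriv ((P.map Θ).prod (P.map Y))
        =ᵐ[(P.map Θ).prod (P.map Y)] fun p =>
          ((P.map (fun ω => (X ω, Y ω))).rnDeriv ((P.map X).prod (P.map Y))) (g p.1, p.2) := by
      rw [hkey]
      exact Measure.rnDeriv_withDensity _ hD
    have hrnμ := hμπ.ae_eq hrn
    have hllr : llr (P.map (fun ω => (Θ ω, Y ω))) ((P.map Θ).prod (P.map Y))
        =ᵐ[P.map (fun ω => (Θ ω, Y ω))] fun p =>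
          llr (P.map (fun ω => (X ω, Y ω))) ((P.map X).prod (P.map Y)) (g p.1, p.2) := by
      filter_upwards [hrnμ] with p hp
      rw [llr, llr, hp]
    have hφsm : AEStronglyMeasurable
        (llr (P.map (fun ω => (X ω, Y ω))) ((P.map X).prod (P.map Y)))
        ((P.map (fun ω => (Θ ω, Y ω))).map (fun p : ℝ × ℝ => (g p.1, p.2))) :=
      (measurable_llr _ _).aestronglyMeasurable
    have hint_iff : Integrable (llr (P.map (fun ω => (Θ ω, Y ω))) ((P.map Θ).prod (P.map Y)))
          (P.map (fun ω => (Θ ω, Y ω)))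
        ↔ Integrable (llr (P.map (fun ω => (X ω, Y ω))) ((P.map X).prod (P.map Y)))
          (P.map (fun ω => (X ω, Y ω))) := by
      have h4 := integrable_map_measure hφsm hT.aemeasurable
      rw [hmapμ] at h4
      exact (integrable_congr hllr).trans h4.symm
    have hval : ∫ p, llr (P.map (fun ω => (Θ ω, Y ω))) ((P.map Θ).prod (P.map Y)) p
          ∂(P.map (fun ω => (Θ ω, Y ω)))
        = ∫ q, llr (P.map (fun ω => (X ω, Y ω))) ((P.map X).prod (P.map Y)) q
          ∂(P.map (fun ω => (X ω, Y ω))) := by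
      have h5 := integral_map hT.aemeasurable hφsm
      rw [hmapμ] at h5
      exact (integral_congr_ae hllr).trans h5.symm
    unfold klDiv
    rw [if_pos hμπ, if_pos hac]
    by_cases hint : Integrable (llr (P.map (fun ω => (Θ ω, Y ω))) ((P.map Θ).prod (P.map Y)))
        (P.map (fun ω => (Θ ω, Y ω)))
    · rw [if_pos hint, if_pos (hint_iff.mp hint), hval]
    · rw [if_neg hint, if_neg fun h => hint (hint_iff.mpr h)]
  · have hnac : ¬ (P.map (fun ω => (Θ ω, Y ω)) ≪ (P.map Θ).prod (P.map Y)) := by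
      intro h
      have h2 := h.map hT
      rw [hmapμ, hmapπ] at h2
      exact hac h2
    unfold klDiv
    rw [if_neg hnac, if_neg hac]
end

section
/- Let (Ω, 𝓕, P) be a probability space with a filtration (𝓕_n)_{n≥0}, and let (S_n)_{n≥0} be an adapted real-valued process with S_n > 0 almost surely for every n. Let (a_k)_{k∈ℤ} be a strictly increasing two-sided real sequence with a_k → 0 as k → −∞ and a_k → ∞ as k → ∞, and let (δ_k)_{k∈ℤ} be numbers with δ_k > 0. Assume that for every n ≥ 0 and every k ∈ ℤ, almost surely on the event {a_k < S_n ≤ a_{k+1}} one has P(S_{n+1} > a_{k+1} | 𝓕_n) ≥ δ_k. Then for every k ∈ ℤ, P(limsup_{n→∞} S_n ∈ (a_k, a_{k+1}]) = 0; consequently P(0 < limsup_{n→∞} S_n < ∞) = 0. -/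
open MeasureTheory ProbabilityTheory Filter
open scoped ENNReal

/-- let `(S_n)` be adapted, a.s. positive, and let `(a_k)_{k∈ℤ}` be a strictly
increasing two-sided sequence with `a_k → 0` (`k → -∞`) and `a_k → ∞` (`k → ∞`).  If from any
state in the band `(a_k, a_{k+1}]` the conditional probability (given `𝓕_n`) of exceeding
`a_{k+1}` at the next step is at least `δ_k > 0`, then for every `k`,
`P(limsup_n S_n ∈ (a_k, a_{k+1}]) = 0`; consequently `P(0 < limsup_n S_n < ∞) = 0`
(the limsup being taken in the extended reals). -/
theorem statement12 {Ω : Type*} {m0 : MeasurableSpace Ω} (P : Measure Ω)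
    [IsProbabilityMeasure P]
    (𝓕 : Filtration ℕ m0) (S : ℕ → Ω → ℝ) (hadapt : Adapted 𝓕 S)
    (hpos : ∀ n, ∀ᵐ ω ∂P, 0 < S n ω)
    (a : ℤ → ℝ) (hamono : StrictMono a)
    (ha0 : Tendsto a atBot (nhds 0)) (hatop : Tendsto a atTop atTop)
    (δ : ℤ → ℝ) (hδ : ∀ k, 0 < δ k)
    (hstep : ∀ n k, ∀ᵐ ω ∂P, a k < S n ω → S n ω ≤ a (k + 1) →
      δ k ≤ (P[Set.indicator {ω' | a (k + 1) < S (n + 1) ω'} (fun _ => (1:ℝ)) | 𝓕 n]) ω) :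
    (∀ k : ℤ, P {ω | Filter.limsup (fun n => ((S n ω : ℝ) : EReal)) atTop
        ∈ Set.Ioc ((a k : ℝ) : EReal) ((a (k + 1) : ℝ) : EReal)} = 0) ∧
    P {ω | 0 < Filter.limsup (fun n => ((S n ω : ℝ) : EReal)) atTop ∧
        Filter.limsup (fun n => ((S n ω : ℝ) : EReal)) atTop < ⊤} = 0 := by
  classical
  -- Key step: via Lévy's conditional Borel–Cantelli, a.s. if `S n` visits the band
  -- `(a k, a (k+1)]` infinitely often then `S n > a (k+1)` infinitely often.
  have key : ∀ k : ℤ, ∀ᵐ ω ∂P,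
      (∃ᶠ n in atTop, a k < S n ω ∧ S n ω ≤ a (k + 1)) →
      ∃ᶠ n in atTop, a (k + 1) < S n ω := by
    intro k
    set s : ℕ → Set Ω := fun n => {ω | a (k + 1) < S n ω} with hs_def
    have hs : ∀ n, MeasurableSet[𝓕 n] (s n) := fun n =>
      measurableSet_lt measurable_const (hadapt n)
    have hBC := MeasureTheory.ae_mem_limsup_atTop_iff (ℱ := 𝓕) P hs
    have hnn : ∀ᵐ ω ∂P, ∀ n : ℕ,
        0 ≤ (P[(s (n + 1)).indicator (1 : Ω → ℝ) | 𝓕 n]) ω := by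
      rw [ae_all_iff]
      intro n
      exact condExp_nonneg (Eventually.of_forall fun ω =>
        Set.indicator_nonneg (fun _ _ => zero_le_one) ω)
    have hstep' : ∀ᵐ ω ∂P, ∀ n : ℕ, a k < S n ω → S n ω ≤ a (k + 1) →
        δ k ≤ (P[(s (n + 1)).indicator (1 : Ω → ℝ) | 𝓕 n]) ω := by
      rw [ae_all_iff]
      intro n
      exact hstep n k
    filter_upwards [hBC, hnn, hstep'] with ω hω hωnn hωstep hfreq
    have hgoal : ω ∈ limsup s atTop := by
      rw [hω]
      set g : ℕ → ℝ := fun n => (P[(s (n + 1)).indicator (1 : Ω → ℝ) | 𝓕 n]) ω with hg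
      set F : ℕ → ℝ := fun N => ∑ j ∈ Finset.range N, g j with hF
      have hmono : Monotone F := by
        apply monotone_nat_of_le_succ
        intro n
        have : F (n + 1) = F n + g n := Finset.sum_range_succ g n
        rw [this]
        exact le_add_of_nonneg_right (hωnn n)
      have hclaim : ∀ m : ℕ, ∃ N, (m : ℝ) * δ k ≤ F N := by
        intro m
        induction m with
        | zero => exact ⟨0, by simp [hF]⟩
        | succ m ih =>
          obtain ⟨N, hN⟩ := ih
          obtain ⟨n, hnN, hband⟩ := (frequently_atTop.mp hfreq) N
          refine ⟨n + 1, ?_⟩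
          have h1 : F N ≤ F n := hmono hnN
          have h2 : F (n + 1) = F n + g n := Finset.sum_range_succ g n
          have h3 : δ k ≤ g n := hωstep n hband.1 hband.2
          push_cast
          rw [h2]
          nlinarith [hδ k]
      refine tendsto_atTop_atTop_of_monotone' hmono ?_
      rintro ⟨B, hB⟩
      obtain ⟨m, hm⟩ := exists_nat_gt (B / δ k)
      obtain ⟨N, hN⟩ := hclaim m
      have hFB : F N ≤ B := hB ⟨N, rfl⟩
      have : B < (m : ℝ) * δ k := by
        rw [div_lt_iff₀ (hδ k)] at hm
        linarith
      linarith
    rw [Filter.mem_limsup_iff_frequently_mem] at hgoal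
    exact hgoal
  -- First conclusion.
  have main : ∀ k : ℤ, P {ω | Filter.limsup (fun n => ((S n ω : ℝ) : EReal)) atTop
      ∈ Set.Ioc ((a k : ℝ) : EReal) ((a (k + 1) : ℝ) : EReal)} = 0 := by
    intro k
    rw [measure_eq_zero_iff_ae_notMem]
    filter_upwards [key k, key (k + 1)] with ω h1 h2 hmem
    simp only [Set.mem_setOf_eq, Set.mem_Ioc] at hmem
    obtain ⟨hgt, hle⟩ := hmem
    have hfreq : ∃ᶠ n in atTop, ((a k : ℝ) : EReal) < ((S n ω : ℝ) : EReal) :=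
      frequently_lt_of_lt_limsup (by isBoundedDefault) hgt
    have hlt2 : Filter.limsup (fun n => ((S n ω : ℝ) : EReal)) atTop
        < ((a (k + 1 + 1) : ℝ) : EReal) :=
      lt_of_le_of_lt hle (by exact_mod_cast hamono (lt_add_one (k + 1)))
    have hev : ∀ᶠ n in atTop, ((S n ω : ℝ) : EReal) < ((a (k + 1 + 1) : ℝ) : EReal) :=
      eventually_lt_of_limsup_lt hlt2
    have hev' : ∀ᶠ n in atTop, S n ω < a (k + 1 + 1) := by
      filter_upwards [hev] with n hn using by exact_mod_cast hn
    -- frequently `S n` lies in `(a k, a (k+2))`, hence in one of the two bands.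
    have hfreq2 : ∃ᶠ n in atTop, (a k < S n ω ∧ S n ω ≤ a (k + 1)) ∨
        (a (k + 1) < S n ω ∧ S n ω ≤ a (k + 1 + 1)) := by
      refine ((hfreq.and_eventually hev').mono ?_)
      rintro n ⟨hn1, hn2⟩
      have hn1' : a k < S n ω := by exact_mod_cast hn1
      rcases le_or_gt (S n ω) (a (k + 1)) with h | h
      · exact Or.inl ⟨hn1', h⟩
      · exact Or.inr ⟨h, hn2.le⟩
    have hband2 : ∃ᶠ n in atTop, a (k + 1) < S n ω ∧ S n ω ≤ a (k + 1 + 1) := by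
      rcases frequently_or_distrib.mp hfreq2 with h | h
      · have := h1 h
        refine (this.and_eventually hev').mono ?_
        rintro n ⟨hn1, hn2⟩
        exact ⟨hn1, hn2.le⟩
      · exact h
    have := h2 hband2
    obtain ⟨n, hn1, hn2⟩ := (this.and_eventually hev').exists
    exact absurd hn2 (not_lt.mpr hn1.le)
  refine ⟨main, ?_⟩
  -- Second conclusion: the set is contained in the countable union of the bands.
  have hsub : {ω | 0 < Filter.limsup (fun n => ((S n ω : ℝ) : EReal)) atTop ∧
      Filter.limsup (fun n => ((S n ω : ℝ) : EReal)) atTop < ⊤} ⊆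
      ⋃ k : ℤ, {ω | Filter.limsup (fun n => ((S n ω : ℝ) : EReal)) atTop
        ∈ Set.Ioc ((a k : ℝ) : EReal) ((a (k + 1) : ℝ) : EReal)} := by
    rintro ω ⟨hpos', hlt⟩
    set L := Filter.limsup (fun n => ((S n ω : ℝ) : EReal)) atTop with hL
    -- `L` is a finite positive extended real, hence a positive real.
    have hbot : L ≠ ⊥ := ne_of_gt (lt_of_lt_of_le (by simp) hpos'.le)
    have htop : L ≠ ⊤ := ne_of_lt hlt
    set x : ℝ := L.toReal with hx
    have hLx : L = (x : EReal) := (EReal.coe_toReal htop hbot).symm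
    have hxpos : (0 : ℝ) < x := by
      have : ((0 : ℝ) : EReal) < (x : EReal) := by
        rw [← hLx]; exact_mod_cast hpos'
      exact_mod_cast this
    -- there is some `k` with `a k < x`
    have hlow : ∃ k : ℤ, a k < x := by
      have := (ha0.eventually (eventually_lt_nhds hxpos)).exists
      exact this
    -- the set of such `k` is bounded above
    obtain ⟨k₁, hk₁⟩ := (hatop.eventually (eventually_ge_atTop x)).exists
    have hbdd : ∀ k : ℤ, a k < x → k < k₁ := by
      intro k hk
      by_contra hcon
      push_neg at hcon
      have : a k₁ ≤ a k := hamono.monotone hcon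
      linarith
    -- take the greatest such `k`
    obtain ⟨k, hk, hkmax⟩ := Int.exists_greatest_of_bdd
      (P := fun k => a k < x) ⟨k₁, fun j hj => (hbdd j hj).le⟩ hlow
    refine Set.mem_iUnion.mpr ⟨k, ?_⟩
    have hk1 : x ≤ a (k + 1) := by
      by_contra hcon
      push_neg at hcon
      exact absurd (hkmax (k + 1) hcon) (by omega)
    simp only [Set.mem_setOf_eq, Set.mem_Ioc, ← hL, hLx]
    exact ⟨by exact_mod_cast hk, by exact_mod_cast hk1⟩
  refine measure_mono_null hsub ?_
  exact measure_iUnion_null fun k => main k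
end

section
/- Let (Ω, 𝓕, P) be a probability space with a filtration (𝓕_n)_{n≥0}, and let (T_n)_{n≥0} be an adapted process with 0 ≤ T_n ≤ 1 almost surely. Suppose there exists t₀ ∈ (0,1) such that for every n, almost surely on the event {T_n ≥ t₀} one has E[T_{n+1} | 𝓕_n] ≥ T_n. Suppose moreover that limsup_{n→∞} T_n = 1 almost surely. Then T_n → 1 almost surely. -/
open MeasureTheory ProbabilityTheory Filter
open scoped NNReal ENNReal

/-- Lamperti-type criterion: let `(T_n)` be adapted with `0 ≤ T_n ≤ 1` a.s.
If there is `t₀ ∈ (0,1)` such that for every `n`, a.s. on `{T_n ≥ t₀}` one has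
`E[T_{n+1} | 𝓕_n] ≥ T_n`, and if `limsup_n T_n = 1` a.s., then `T_n → 1` a.s. -/
theorem statement13 {Ω : Type*} {m0 : MeasurableSpace Ω} (P : Measure Ω)
    [IsProbabilityMeasure P]
    (𝓕 : Filtration ℕ m0) (T : ℕ → Ω → ℝ) (hadapt : Adapted 𝓕 T)
    (hbdd : ∀ n, ∀ᵐ ω ∂P, T n ω ∈ Set.Icc (0:ℝ) 1)
    (t₀ : ℝ) (ht₀ : t₀ ∈ Set.Ioo (0:ℝ) 1)
    (hsub : ∀ n, ∀ᵐ ω ∂P, t₀ ≤ T n ω → T n ω ≤ (P[T (n + 1) | 𝓕 n]) ω)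
    (hlimsup : ∀ᵐ ω ∂P, Filter.limsup (fun n => T n ω) atTop = 1) :
    ∀ᵐ ω ∂P, Tendsto (fun n => T n ω) atTop (nhds 1) := by
  obtain ⟨ht₀0, ht₀1⟩ := ht₀
  set T' : ℕ → Ω → ℝ := fun n ω => max (T n ω) t₀ with hT'def
  have hadapt' : Adapted 𝓕 T' := by
    intro n
    exact (@MeasureTheory.StronglyMeasurable.sup Ω ℝ _ _ (𝓕 n) _ _ _ (hadapt n).stronglyMeasurable stronglyMeasurable_const).measurable
  have hmeasT : ∀ n, AEStronglyMeasurable (T n) P := fun n =>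
    ((hadapt n).stronglyMeasurable.mono (𝓕.le n)).aestronglyMeasurable
  have hmeas : ∀ n, AEStronglyMeasurable (T' n) P := fun n =>
    ((hadapt' n).stronglyMeasurable.mono (𝓕.le n)).aestronglyMeasurable
  have hbdT : ∀ n, ∀ᵐ ω ∂P, ‖T n ω‖ ≤ 1 := by
    intro n
    filter_upwards [hbdd n] with ω hω
    rw [Real.norm_eq_abs, abs_le]
    exact ⟨by linarith [hω.1], hω.2⟩
  have hbd' : ∀ n, ∀ᵐ ω ∂P, ‖T' n ω‖ ≤ 1 := by
    intro n
    filter_upwards [hbdd n] with ω hω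
    rw [Real.norm_eq_abs, abs_le]
    refine ⟨?_, max_le hω.2 ht₀1.le⟩
    have := le_max_left (T n ω) t₀
    linarith [hω.1]
  have hintT : ∀ n, Integrable (T n) P := fun n =>
    (integrable_const (1:ℝ)).mono' (hmeasT n) (hbdT n)
  have hint : ∀ n, Integrable (T' n) P := fun n =>
    (integrable_const (1:ℝ)).mono' (hmeas n) (hbd' n)
  -- T' is a submartingale
  have hsubmart : Submartingale T' 𝓕 P := by
    refine submartingale_nat hadapt'.stronglyAdapted hint fun n => ?_
    have hle : T (n+1) ≤ᵐ[P] T' (n+1) :=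
      Filter.Eventually.of_forall fun ω => le_max_left _ _
    have hconstle : (fun _ : Ω => t₀) ≤ᵐ[P] T' (n+1) :=
      Filter.Eventually.of_forall fun ω => le_max_right _ _
    have h1 : P[T (n+1) | 𝓕 n] ≤ᵐ[P] P[T' (n+1) | 𝓕 n] :=
      condExp_mono (hintT (n+1)) (hint (n+1)) hle
    have h2 : (fun _ : Ω => t₀) ≤ᵐ[P] P[T' (n+1) | 𝓕 n] := by
      have := condExp_mono (integrable_const t₀) (hint (n+1)) hconstle (m := 𝓕 n) (μ := P)
      rwa [condExp_const (𝓕.le n)] at this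
    filter_upwards [hsub n, h1, h2] with ω hs hω1 hω2
    rcases le_total t₀ (T n ω) with h | h
    · exact max_le ((hs h).trans hω1) hω2
    · exact max_le (h.trans hω2) hω2
  -- L¹ boundedness
  have hL1 : ∀ n, eLpNorm (T' n) 1 P ≤ ((1 : ℝ≥0) : ℝ≥0∞) := by
    intro n
    have := eLpNorm_le_of_ae_bound (p := 1) (μ := P) (hbd' n)
    simpa using this
  have hconv := hsubmart.exists_ae_tendsto_of_bdd hL1
  rw [← ae_all_iff] at hbdd
  filter_upwards [hbdd, hlimsup, hconv] with ω hω hls ⟨c, hc⟩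
  -- c ≤ 1
  have hcle : c ≤ 1 :=
    le_of_tendsto hc (Filter.Eventually.of_forall fun n => max_le (hω n).2 ht₀1.le)
  -- 1 ≤ c
  have hcob : IsCoboundedUnder (· ≤ ·) atTop (fun n => T n ω) :=
    isCoboundedUnder_le_of_eventually_le atTop
      (Filter.Eventually.of_forall fun n => (hω n).1)
  have hcge : 1 ≤ c := by
    refine le_of_forall_pos_le_add fun ε hε => ?_
    have hev : ∀ᶠ n in atTop, T' n ω < c + ε :=
      hc.eventually_lt_const (lt_add_of_pos_right c hε)
    have : limsup (fun n => T n ω) atTop ≤ c + ε := by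
      refine limsup_le_of_le hcob ?_
      filter_upwards [hev] with n hn
      exact le_trans (le_max_left _ _) hn.le
    rw [hls] at this
    exact this
  have hc1 : c = 1 := le_antisymm hcle hcge
  rw [hc1] at hc
  -- eventually T' = T
  have hev : ∀ᶠ n in atTop, T n ω = T' n ω := by
    have : ∀ᶠ n in atTop, t₀ < T' n ω := hc.eventually_const_lt ht₀1
    filter_upwards [this] with n hn
    have : t₀ < T n ω := by
      by_contra h
      push_neg at h
      rw [hT'def] at hn
      simp only [max_eq_right h] at hn
      exact lt_irrefl _ hn
    exact (max_eq_left this.le).symm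
  exact hc.congr' (hev.mono fun n hn => hn.symm)
end

section
/- Let (U_k)_{k≥1} be an i.i.d. sequence of integrable real random variables with mean μ := E U₁, let (W_k)_{k≥1} be an i.i.d. sequence of real random variables with E|W₁| < ∞, and let (N_n)_{n≥1} be integer-valued random variables with 0 ≤ N_n ≤ n. Assume the sequence (U_k), the sequence (W_k), and the process (N_n) are mutually independent, and that there is a function δ : ℕ → [0,1] with δ(m) → 0 as m → ∞ such that P(N_n > m) ≤ δ(m) for all n and m. Define S'_n := Σ_{k=1}^{n−N_n} U_k + Σ_{k=1}^{N_n} W_k. Then for every ε > 0, lim_{n→∞} P(S'_n < n(μ − ε)) = 0. -/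
open MeasureTheory ProbabilityTheory Filter

/-- Auxiliary: the "bad" event ignoring `N`, for a cap `m` on `N`. -/
lemma statement15_aux {Ω : Type*} [MeasurableSpace Ω] (P : Measure Ω) [IsProbabilityMeasure P]
    (U W : ℕ → Ω → ℝ)
    (hUm : ∀ k, Measurable (U k)) (hWm : ∀ k, Measurable (W k))
    (hUiid : iIndepFun U P)
    (hUdist : ∀ k, P.map (U k) = P.map (U 0))
    (hUint : Integrable (U 0) P)
    (ε : ℝ) (hε : 0 < ε) (m : ℕ) :
    Tendsto (fun n : ℕ => (P {ω | ∃ j ∈ Finset.range (m + 1),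
        (∑ k ∈ Finset.range (n - j), U k ω) - (∑ k ∈ Finset.range m, |W k ω|)
          < (n : ℝ) * ((∫ x, U 0 x ∂P) - ε)}).toReal) atTop (nhds 0) := by
  set μ := ∫ x, U 0 x ∂P with hμ
  set C : ℕ → Set Ω := fun n => {ω | ∃ j ∈ Finset.range (m + 1),
      (∑ k ∈ Finset.range (n - j), U k ω) - (∑ k ∈ Finset.range m, |W k ω|)
        < (n : ℝ) * (μ - ε)} with hC
  have hCm : ∀ n, MeasurableSet (C n) := by
    intro n
    have : C n = ⋃ j ∈ Finset.range (m + 1), {ω |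
        (∑ k ∈ Finset.range (n - j), U k ω) - (∑ k ∈ Finset.range m, |W k ω|)
          < (n : ℝ) * (μ - ε)} := by
      ext ω; simp [hC]
    rw [this]
    refine MeasurableSet.biUnion (Finset.range (m + 1)).countable_toSet fun j _ => ?_
    have h1 : Measurable fun ω => (∑ k ∈ Finset.range (n - j), U k ω)
        - (∑ k ∈ Finset.range m, |W k ω|) := by
      apply Measurable.sub
      · exact Finset.measurable_sum _ fun k _ => hUm k
      · exact Finset.measurable_sum _ fun k _ => (hWm k).abs
    exact measurableSet_lt h1 measurable_const
  -- strong law of large numbers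
  have hslln : ∀ᵐ ω ∂P, Tendsto (fun n : ℕ => (∑ i ∈ Finset.range n, U i ω) / n)
      atTop (nhds μ) := by
    refine strong_law_ae_real U hUint (fun i j hij => hUiid.indepFun hij) fun i =>
      ⟨(hUm i).aemeasurable, (hUm 0).aemeasurable, hUdist i⟩
  -- a.e. eventually not in C n
  have hae : ∀ᵐ ω ∂P, ∀ᶠ n in atTop, ω ∉ C n := by
    filter_upwards [hslln] with ω hω
    set c : ℝ := ∑ k ∈ Finset.range m, |W k ω| with hc
    have hc0 : 0 ≤ c := Finset.sum_nonneg fun k _ => abs_nonneg _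
    have h1 : ∀ᶠ n : ℕ in atTop, μ - ε / 2 < (∑ i ∈ Finset.range n, U i ω) / n :=
      hω.eventually (eventually_gt_nhds (by linarith))
    obtain ⟨n₀, hn₀⟩ := eventually_atTop.1 h1
    set K : ℝ := (m : ℝ) * (|μ| + ε / 2) + c with hK
    obtain ⟨N1, hN1⟩ := eventually_atTop.1
      ((tendsto_natCast_atTop_atTop (R := ℝ)).eventually_ge_atTop (K / (ε / 2)))
    rw [eventually_atTop]
    refine ⟨max N1 (max n₀ 1 + m), fun n hn => ?_⟩
    have hnN1 : N1 ≤ n := le_trans (le_max_left _ _) hn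
    have hnm : max n₀ 1 + m ≤ n := le_trans (le_max_right _ _) hn
    intro hmem
    obtain ⟨j, hj, hlt⟩ := hmem
    rw [Finset.mem_range] at hj
    have hjm : j ≤ m := Nat.lt_succ_iff.1 hj
    have hjn : j ≤ n := le_trans hjm (le_trans (Nat.le_add_left _ _) hnm)
    have hnj : max n₀ 1 ≤ n - j := by omega
    have hnj0 : n₀ ≤ n - j := le_trans (le_max_left _ _) hnj
    have hnj1 : 1 ≤ n - j := le_trans (le_max_right _ _) hnj
    have hnjR : ((n - j : ℕ) : ℝ) = (n : ℝ) - (j : ℝ) := by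
      rw [Nat.cast_sub hjn]
    have hnjpos : (0 : ℝ) < ((n - j : ℕ) : ℝ) := by exact_mod_cast hnj1
    have h2 : μ - ε / 2 < (∑ i ∈ Finset.range (n - j), U i ω) / ((n - j : ℕ) : ℝ) :=
      hn₀ _ hnj0
    have h3 : ((n - j : ℕ) : ℝ) * (μ - ε / 2) < ∑ i ∈ Finset.range (n - j), U i ω := by
      rw [lt_div_iff₀ hnjpos] at h2
      linarith [h2]
    -- bound j * (μ - ε/2)
    have hjR : (j : ℝ) ≤ (m : ℝ) := by exact_mod_cast hjm
    have hj0 : (0 : ℝ) ≤ (j : ℝ) := Nat.cast_nonneg _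
    have habs : μ - ε / 2 ≤ |μ| + ε / 2 := by
      have := le_abs_self μ; linarith
    have habs0 : (0 : ℝ) ≤ |μ| + ε / 2 := by positivity
    have h4 : (j : ℝ) * (μ - ε / 2) ≤ (m : ℝ) * (|μ| + ε / 2) := by
      calc (j : ℝ) * (μ - ε / 2) ≤ (j : ℝ) * (|μ| + ε / 2) :=
            mul_le_mul_of_nonneg_left habs hj0
        _ ≤ (m : ℝ) * (|μ| + ε / 2) := mul_le_mul_of_nonneg_right hjR habs0
    -- n * ε/2 ≥ K
    have h5 : K ≤ (n : ℝ) * (ε / 2) := by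
      have : K / (ε / 2) ≤ (n : ℝ) := hN1 _ hnN1
      have hε2 : (0 : ℝ) < ε / 2 := by linarith
      calc K = K / (ε / 2) * (ε / 2) := by field_simp
        _ ≤ (n : ℝ) * (ε / 2) := mul_le_mul_of_nonneg_right this hε2.le
    have h6 : (n : ℝ) * (μ - ε) ≤ (∑ i ∈ Finset.range (n - j), U i ω) - c := by
      have := h3
      rw [hnjR] at this
      nlinarith [this, h4, h5]
    exact absurd hlt (not_lt.2 h6)
  -- dominated convergence on indicators
  have hInd : Tendsto (fun n => ∫ ω, (C n).indicator (fun _ => (1 : ℝ)) ω ∂P)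
      atTop (nhds (∫ _ω, (0 : ℝ) ∂P)) := by
    refine tendsto_integral_of_dominated_convergence (fun _ => (1 : ℝ))
      (fun n => (measurable_const.indicator (hCm n)).aestronglyMeasurable)
      (integrable_const 1) (fun n => ae_of_all _ fun ω => ?_) ?_
    · by_cases h : ω ∈ C n <;>
        simp [Set.indicator_of_mem, Set.indicator_of_notMem, h]
    · filter_upwards [hae] with ω hω
      refine Tendsto.congr' ?_ tendsto_const_nhds
      filter_upwards [hω] with n hn
      simp [Set.indicator_of_notMem hn]
  have hzero : (∫ _ω, (0 : ℝ) ∂P) = 0 := integral_zero _ _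
  rw [hzero] at hInd
  refine hInd.congr fun n => ?_
  rw [show (fun _ : Ω => (1 : ℝ)) = (1 : Ω → ℝ) from rfl, integral_indicator_one (hCm n)]; rfl

/-- let `(U_k)` be i.i.d. integrable with mean `μ = E U₀`, `(W_k)` i.i.d. with
`E|W₀| < ∞`, `(N_n)` integer-valued with `0 ≤ N_n ≤ n`, the three families being mutually
independent, and `P(N_n > m) ≤ δ(m)` with `δ(m) → 0`.  Then for
`S'_n = Σ_{k=1}^{n-N_n} U_k + Σ_{k=1}^{N_n} W_k` (here indexed `k = 0, …`) and any `ε > 0`,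
`P(S'_n < n(μ - ε)) → 0` as `n → ∞`. -/
theorem statement15 {Ω : Type*} [MeasurableSpace Ω] (P : Measure Ω) [IsProbabilityMeasure P]
    (U W : ℕ → Ω → ℝ) (N : ℕ → Ω → ℕ)
    (hUm : ∀ k, Measurable (U k)) (hWm : ∀ k, Measurable (W k)) (hNm : ∀ n, Measurable (N n))
    (hUiid : iIndepFun U P)
    (hUdist : ∀ k, P.map (U k) = P.map (U 0))
    (hUint : Integrable (U 0) P)
    (hWiid : iIndepFun W P)
    (hWdist : ∀ k, P.map (W k) = P.map (W 0))
    (hWint : Integrable (W 0) P)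
    (hNle : ∀ n ω, N n ω ≤ n)
    (hgroups : iIndep
      (fun i : Fin 3 =>
        ![⨆ k, MeasurableSpace.comap (U k) inferInstance,
          ⨆ k, MeasurableSpace.comap (W k) inferInstance,
          ⨆ n, MeasurableSpace.comap (N n) inferInstance] i) P)
    (δ : ℕ → ℝ) (hδmem : ∀ m, δ m ∈ Set.Icc (0:ℝ) 1)
    (hδlim : Tendsto δ atTop (nhds 0))
    (hN : ∀ n m : ℕ, (P {ω | m < N n ω}).toReal ≤ δ m) :
    ∀ ε : ℝ, 0 < ε →
      Tendsto (fun n : ℕ =>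
          (P {ω | (∑ k ∈ Finset.range (n - N n ω), U k ω)
              + (∑ k ∈ Finset.range (N n ω), W k ω)
            < (n : ℝ) * ((∫ x, U 0 x ∂P) - ε)}).toReal)
        atTop (nhds 0) := by
  intro ε hε
  set μ := ∫ x, U 0 x ∂P with hμ
  set T : ℕ → Set Ω := fun n => {ω | (∑ k ∈ Finset.range (n - N n ω), U k ω)
      + (∑ k ∈ Finset.range (N n ω), W k ω) < (n : ℝ) * (μ - ε)} with hT
  set C : ℕ → ℕ → Set Ω := fun m n => {ω | ∃ j ∈ Finset.range (m + 1),
      (∑ k ∈ Finset.range (n - j), U k ω) - (∑ k ∈ Finset.range m, |W k ω|)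
        < (n : ℝ) * (μ - ε)} with hC
  -- key inclusion
  have hincl : ∀ m n, T n ⊆ {ω | m < N n ω} ∪ C m n := by
    intro m n ω hω
    by_cases hcase : m < N n ω
    · exact Or.inl hcase
    · push_neg at hcase
      refine Or.inr ⟨N n ω, Finset.mem_range.2 (Nat.lt_succ_of_le hcase), ?_⟩
      have hW : -(∑ k ∈ Finset.range m, |W k ω|) ≤ ∑ k ∈ Finset.range (N n ω), W k ω := by
        have h1 : ∑ k ∈ Finset.range (N n ω), |W k ω| ≤ ∑ k ∈ Finset.range m, |W k ω| :=
          Finset.sum_le_sum_of_subset_of_nonneg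
            (Finset.range_subset_range.2 hcase) (fun k _ _ => abs_nonneg _)
        have h2 : -(∑ k ∈ Finset.range (N n ω), |W k ω|)
            ≤ ∑ k ∈ Finset.range (N n ω), W k ω := by
          rw [← Finset.sum_neg_distrib]
          exact Finset.sum_le_sum fun k _ => neg_abs_le _
        linarith
      have := hω
      simp only [hT, Set.mem_setOf_eq] at this ⊢
      linarith
  -- bound on measures
  have hbound : ∀ m n, (P (T n)).toReal ≤ δ m + (P (C m n)).toReal := by
    intro m n
    have h1 : P (T n) ≤ P {ω | m < N n ω} + P (C m n) :=
      le_trans (measure_mono (hincl m n)) (measure_union_le _ _)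
    have h2 : (P (T n)).toReal ≤ (P {ω | m < N n ω} + P (C m n)).toReal :=
      ENNReal.toReal_mono (by finiteness) h1
    rw [ENNReal.toReal_add (measure_ne_top _ _) (measure_ne_top _ _)] at h2
    exact le_trans h2 (add_le_add_left (hN n m) _)
  -- conclude
  rw [NormedAddCommGroup.tendsto_nhds_zero]
  intro η hη
  obtain ⟨m, hm⟩ := (hδlim.eventually (eventually_lt_nhds (show (0:ℝ) < η/2 by linarith))).exists
  have hCm := statement15_aux P U W hUm hWm hUiid hUdist hUint ε hε m
  rw [← hμ] at hCm
  have hCev : ∀ᶠ n in atTop, (P (C m n)).toReal < η / 2 := by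
    have := hCm.eventually (eventually_lt_nhds (show (0:ℝ) < η/2 by linarith))
    exact this
  filter_upwards [hCev] with n hn
  have h0 : (0 : ℝ) ≤ (P (T n)).toReal := ENNReal.toReal_nonneg
  have := hbound m n
  rw [Real.norm_eq_abs, abs_of_nonneg h0]
  calc (P (T n)).toReal ≤ δ m + (P (C m n)).toReal := this
    _ < η / 2 + η / 2 := add_lt_add hm hn
    _ = η := by ring
end
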